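/- arXiv:2312.09975 — 11 statements merged into one kernel-verified Lean document; each statement's English description precedes it below -/
import Mathlib

section
/- (Welch bound, inequality part) Let d and n be positive integers with n > d, and let F ∈ ℂ^{d×n} be a matrix whose columns f_1,…,f_n are unit vectors. Then the coherence max_{i≠j} |f_i* f_j| is at least μ := √((n−d)/(d(n−1))). -/
open Matrix

/-- The Welch bound parameter `μ = √((n−d)/(d(n−1)))`. -/
noncomputable def etfMu (d n : ℕ) : ℝ :=
  Real.sqrt (((n : ℝ) - d) / (d * ((n : ℝ) - 1)))

/-- `F` is an equiangular tight frame: unit-norm columns, pairwise inner products of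
modulus equal to the Welch bound, and `F Fᴴ = (n/d) I`. -/
def IsETF {ι κ : Type} [Fintype ι] [Fintype κ] [DecidableEq ι] [DecidableEq κ]
    (F : Matrix ι κ ℂ) : Prop :=
  (∀ j, (Fᴴ * F) j j = 1) ∧
  (∀ j k : κ, j ≠ k →
    ‖(Fᴴ * F) j k‖ = etfMu (Fintype.card ι) (Fintype.card κ)) ∧
  F * Fᴴ = ((Fintype.card κ : ℂ) / (Fintype.card ι : ℂ)) • 1

/-- `S` is the signature matrix of the ETF `F`, i.e. `S = (1/μ)(Fᴴ F − I)`. -/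
def IsSignatureOf {ι κ : Type} [Fintype ι] [Fintype κ] [DecidableEq ι] [DecidableEq κ]
    (S : Matrix κ κ ℂ) (F : Matrix ι κ ℂ) : Prop :=
  IsETF F ∧ S = ((etfMu (Fintype.card ι) (Fintype.card κ) : ℝ) : ℂ)⁻¹ • (Fᴴ * F - 1)

/-- A Hadamard matrix: `±1` entries and `Hᵀ H = m I`. -/
def IsHadamard {ι : Type} [Fintype ι] [DecidableEq ι] (H : Matrix ι ι ℝ) : Prop :=
  (∀ i j, H i j = 1 ∨ H i j = -1) ∧ Hᵀ * H = (Fintype.card ι : ℝ) • 1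

/-- A skew Hadamard matrix: `H = C + I` with `Cᵀ = −C`. -/
def IsSkewHadamard {ι : Type} [Fintype ι] [DecidableEq ι] (H : Matrix ι ι ℝ) : Prop :=
  _root_.IsHadamard H ∧ (H - 1)ᵀ = -(H - 1)

/-- **Welch bound (inequality part).** For `n > d ≥ 1` and a matrix `F ∈ ℂ^{d×n}` with
unit-norm columns, the coherence `max_{i≠j} |fᵢ* fⱼ|` is at least
`μ = √((n−d)/(d(n−1)))`; i.e. some pair of distinct columns has inner product of modulus
at least `μ`. -/
theorem welch_bound_inequality (d n : ℕ) (hd : 0 < d) (hdn : d < n)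
    (F : Matrix (Fin d) (Fin n) ℂ)
    (hunit : ∀ j, (Fᴴ * F) j j = 1) :
    ∃ i j : Fin n, i ≠ j ∧
      Real.sqrt (((n : ℝ) - d) / (d * ((n : ℝ) - 1))) ≤ ‖(Fᴴ * F) i j‖ := by
  classical
  set G := Fᴴ * F with hGdef
  set A := F * Fᴴ with hAdef
  have hn2 : 2 ≤ n := Nat.lt_of_le_of_lt hd hdn
  have hd' : (0:ℝ) < d := by exact_mod_cast hd
  have hdn' : (d:ℝ) < n := by exact_mod_cast hdn
  have hn0 : (0:ℝ) < n := lt_trans hd' hdn'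
  have hn1 : (1:ℝ) ≤ (n:ℝ) - 1 := by
    have : (2:ℝ) ≤ n := by exact_mod_cast hn2
    linarith
  -- choose the maximizing pair
  haveI : Nontrivial (Fin n) := Fin.nontrivial_iff_two_le.mpr hn2
  obtain ⟨a, b, hab⟩ := exists_pair_ne (Fin n)
  have hne : ((Finset.univ : Finset (Fin n × Fin n)).filter (fun p => p.1 ≠ p.2)).Nonempty :=
    ⟨(a, b), by simpa using hab⟩
  obtain ⟨p, hp, hmax⟩ := Finset.exists_max_image _
    (fun p : Fin n × Fin n => ‖G p.1 p.2‖) hne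
  simp only [Finset.mem_filter, Finset.mem_univ, true_and] at hp
  set M : ℝ := ‖G p.1 p.2‖ with hMdef
  have hM0 : 0 ≤ M := norm_nonneg _
  refine ⟨p.1, p.2, hp, ?_⟩
  -- it suffices to bound M^2
  have key : ((n:ℝ) - d) / (d * ((n:ℝ) - 1)) ≤ M ^ 2 → _ := id
  suffices hsq : ((n:ℝ) - d) / (d * ((n:ℝ) - 1)) ≤ M ^ 2 by
    calc Real.sqrt (((n:ℝ) - d) / (d * ((n:ℝ) - 1))) ≤ Real.sqrt (M ^ 2) :=
          Real.sqrt_le_sqrt hsq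
      _ = M := Real.sqrt_sq hM0
  -- Hermitian property of G and A
  have hGH : Gᴴ = G := by rw [hGdef, conjTranspose_mul, conjTranspose_conjTranspose]
  have hAH : Aᴴ = A := by rw [hAdef, conjTranspose_mul, conjTranspose_conjTranspose]
  -- trace identities
  have htr : trace (G * G) = trace (A * A) := by
    rw [hGdef, hAdef, Matrix.mul_assoc, Matrix.trace_mul_comm]
    simp only [Matrix.mul_assoc]
  -- sums of normSq
  set S : ℝ := ∑ j, ∑ k, Complex.normSq (G j k) with hSdef
  set SA : ℝ := ∑ i, ∑ j, Complex.normSq (A i j) with hSAdef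
  have htrG : trace (G * G) = (S : ℂ) := by
    rw [hSdef]
    push_cast
    rw [Matrix.trace]
    refine Finset.sum_congr rfl fun j _ => ?_
    rw [Matrix.diag_apply, Matrix.mul_apply]
    refine Finset.sum_congr rfl fun k _ => ?_
    have : G k j = starRingEnd ℂ (G j k) := by
      conv_lhs => rw [← hGH]
      simp [conjTranspose_apply]
    rw [this, Complex.mul_conj]
  have htrA : trace (A * A) = (SA : ℂ) := by
    rw [hSAdef]
    push_cast
    rw [Matrix.trace]
    refine Finset.sum_congr rfl fun i _ => ?_
    rw [Matrix.diag_apply, Matrix.mul_apply]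
    refine Finset.sum_congr rfl fun j _ => ?_
    have : A j i = starRingEnd ℂ (A i j) := by
      conv_lhs => rw [← hAH]
      simp [conjTranspose_apply]
    rw [this, Complex.mul_conj]
  have hSSA : S = SA := by
    have := htr
    rw [htrG, htrA] at this
    exact_mod_cast this
  -- trace of A equals n
  have htrAn : ∑ i, A i i = (n : ℂ) := by
    have h1 : trace A = trace G := by rw [hAdef, hGdef]; exact Matrix.trace_mul_comm F Fᴴ
    have h2 : trace G = (n : ℂ) := by
      rw [Matrix.trace]
      simp only [Matrix.diag_apply]
      rw [Finset.sum_congr rfl (fun j _ => hunit j)]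
      simp
    rw [Matrix.trace] at h1
    simpa [Matrix.diag_apply] using h1.trans h2
  have hre : ∑ i, (A i i).re = (n : ℝ) := by
    have := congrArg Complex.re htrAn
    simpa [Complex.re_sum] using this
  -- Cauchy-Schwarz: n^2/d ≤ SA
  have hCS : (n:ℝ) ^ 2 ≤ d * SA := by
    have h1 : (∑ i, (A i i).re) ^ 2 ≤ (Fintype.card (Fin d)) * ∑ i, (A i i).re ^ 2 :=
      sq_sum_le_card_mul_sum_sq
    have h2 : ∑ i, (A i i).re ^ 2 ≤ SA := by
      rw [hSAdef]
      refine Finset.sum_le_sum fun i _ => ?_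
      have h3 : (A i i).re ^ 2 ≤ Complex.normSq (A i i) := by
        rw [Complex.normSq_apply]; nlinarith [sq_nonneg (A i i).im]
      calc (A i i).re ^ 2 ≤ Complex.normSq (A i i) := h3
        _ ≤ ∑ j, Complex.normSq (A i j) :=
            Finset.single_le_sum (fun j _ => Complex.normSq_nonneg _) (Finset.mem_univ i)
    have hcard : (Fintype.card (Fin d) : ℝ) = d := by simp
    calc (n:ℝ)^2 = (∑ i, (A i i).re) ^ 2 := by rw [hre]
      _ ≤ (Fintype.card (Fin d)) * ∑ i, (A i i).re ^ 2 := by exact_mod_cast h1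
      _ ≤ d * SA := by
          rw [hcard]
          exact mul_le_mul_of_nonneg_left h2 (le_of_lt hd')
  -- upper bound: S ≤ n + (n^2 - n) M^2
  have hup : S ≤ (n:ℝ) + ((n:ℝ)^2 - n) * M ^ 2 := by
    have hb : ∀ j k : Fin n, Complex.normSq (G j k) ≤ if j = k then 1 else M ^ 2 := by
      intro j k
      by_cases h : j = k
      · subst h; simp [hunit j]
      · simp only [if_neg h]
        rw [← Complex.sq_norm]
        have := hmax (j, k) (by simpa using h)
        exact pow_le_pow_left₀ (norm_nonneg _) this 2
    calc S ≤ ∑ j : Fin n, ∑ k : Fin n, (if j = k then (1:ℝ) else M ^ 2) :=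
          Finset.sum_le_sum fun j _ => Finset.sum_le_sum fun k _ => hb j k
      _ = (n:ℝ) + ((n:ℝ)^2 - n) * M ^ 2 := by
          have : ∀ j : Fin n, ∑ k : Fin n, (if j = k then (1:ℝ) else M ^ 2)
              = 1 + ((n:ℝ) - 1) * M ^ 2 := by
            intro j
            have : ∀ k : Fin n, (if j = k then (1:ℝ) else M ^ 2)
                = M ^ 2 + (if j = k then (1:ℝ) - M ^ 2 else 0) := by
              intro k; by_cases h : j = k <;> simp [h]
            rw [Finset.sum_congr rfl fun k _ => this k, Finset.sum_add_distrib,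
              Finset.sum_ite_eq Finset.univ j (fun _ => (1:ℝ) - M ^ 2)]
            simp
            ring
          rw [Finset.sum_congr rfl fun j _ => this j]
          simp [Finset.sum_const]
          ring
  -- combine
  have hmain : (n:ℝ)^2 ≤ d * ((n:ℝ) + ((n:ℝ)^2 - n) * M ^ 2) := by
    calc (n:ℝ)^2 ≤ d * SA := hCS
      _ = d * S := by rw [hSSA]
      _ ≤ d * ((n:ℝ) + ((n:ℝ)^2 - n) * M ^ 2) :=
          mul_le_mul_of_nonneg_left hup (le_of_lt hd')
  rw [div_le_iff₀ (by positivity)]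
  have h2 : (n:ℝ) * ((n:ℝ) - d) ≤ (n:ℝ) * (M ^ 2 * (d * ((n:ℝ) - 1))) := by nlinarith
  exact le_of_mul_le_mul_left h2 hn0
end

section
/- (Welch bound, equality characterization) Let d and n be positive integers with n > d, let F ∈ ℂ^{d×n} have unit-norm columns f_1,…,f_n, and set μ := √((n−d)/(d(n−1))). Then max_{i≠j} |f_i* f_j| = μ if and only if both: (i) |f_i* f_j| = μ for all 1 ≤ i ≠ j ≤ n, and (ii) F F* = (n/d)·I. -/
open Matrix
section WelchAux
open Finset
lemma trace_sq_herm {ι : Type} [Fintype ι] (M : Matrix ι ι ℂ) (h : Mᴴ = M) :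
    (M*M).trace = ((∑ i, ∑ j, Complex.normSq (M i j) : ℝ) : ℂ) := by
  have key : ∀ i j, M j i = starRingEnd ℂ (M i j) := by
    intro i j
    conv_lhs => rw [← h]
    rw [conjTranspose_apply]
    rfl
  have h1 : (M*M).trace = ∑ i, ∑ j, M i j * M j i := by
    simp [Matrix.trace, Matrix.mul_apply, Matrix.diag]
  rw [h1]
  push_cast
  refine Finset.sum_congr rfl fun i _ => Finset.sum_congr rfl fun j _ => ?_
  rw [key i j, Complex.mul_conj]

lemma sum_eq_of_le {α : Type} (s : Finset α) (f : α → ℝ) (c : ℝ)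
    (hle : ∀ x ∈ s, f x ≤ c) (hsum : ∑ x ∈ s, f x = s.card * c) :
    ∀ x ∈ s, f x = c := by
  intro x hx
  by_contra hne
  have hlt : ∑ y ∈ s, f y < ∑ _y ∈ s, c :=
    Finset.sum_lt_sum hle ⟨x, hx, lt_of_le_of_ne (hle x hx) hne⟩
  rw [Finset.sum_const, nsmul_eq_mul, hsum] at hlt
  exact lt_irrefl _ hlt

lemma welch_core (d n : ℕ) (hd : 0 < d) (hdn : d < n)
    (F : Matrix (Fin d) (Fin n) ℂ)
    (hunit : ∀ j, (Fᴴ * F) j j = 1)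
    (hub : ∀ i j : Fin n, i ≠ j →
      ‖(Fᴴ * F) i j‖ ≤ Real.sqrt (((n : ℝ) - d) / (d * ((n : ℝ) - 1)))) :
    (∀ i j : Fin n, i ≠ j →
        ‖(Fᴴ * F) i j‖ = Real.sqrt (((n : ℝ) - d) / (d * ((n : ℝ) - 1)))) ∧
      F * Fᴴ = ((n : ℂ) / (d : ℂ)) • 1 := by
  -- numeric preliminaries
  have hd0 : (d : ℝ) ≠ 0 := Nat.cast_ne_zero.mpr hd.ne'
  have hn2 : 2 ≤ n := lt_of_le_of_lt hd hdn
  have hn1 : (0 : ℝ) < (n : ℝ) - 1 := by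
    have : (1 : ℝ) < n := by exact_mod_cast lt_of_lt_of_le one_lt_two (by exact_mod_cast hn2)
    linarith
  have hnd : (0 : ℝ) ≤ (n : ℝ) - d := by
    have : (d : ℝ) < n := by exact_mod_cast hdn
    linarith
  set q : ℝ := ((n : ℝ) - d) / (d * ((n : ℝ) - 1)) with hq
  have hq0 : 0 ≤ q := div_nonneg hnd (by positivity)
  have hμsq : Real.sqrt q ^ 2 = q := Real.sq_sqrt hq0
  -- matrices
  set G := Fᴴ * F with hGdef
  set A := F * Fᴴ with hAdef
  have hGherm : Gᴴ = G := by rw [hGdef, conjTranspose_mul, conjTranspose_conjTranspose]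
  have hAherm : Aᴴ = A := by rw [hAdef, conjTranspose_mul, conjTranspose_conjTranspose]
  set c : ℂ := (n : ℂ) / (d : ℂ) with hc
  have hcstar : star c = c := by
    rw [hc]
    simp [star_div₀, Complex.star_def, Complex.conj_natCast]
  set B := A - c • (1 : Matrix (Fin d) (Fin d) ℂ) with hBdef
  have hBherm : Bᴴ = B := by
    rw [hBdef, conjTranspose_sub, hAherm, conjTranspose_smul, conjTranspose_one, hcstar]
  -- traces
  have htrG : G.trace = (n : ℂ) := by
    simp [Matrix.trace, Matrix.diag, hunit]
  have htrA : A.trace = (n : ℂ) := by rw [hAdef, Matrix.trace_mul_comm]; exact htrG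
  have htrAA : (A*A).trace = (G*G).trace := by
    rw [hAdef, hGdef]
    calc (F*Fᴴ*(F*Fᴴ)).trace = (F*(Fᴴ*(F*Fᴴ))).trace := by rw [Matrix.mul_assoc]
    _ = ((Fᴴ*(F*Fᴴ))*F).trace := Matrix.trace_mul_comm _ _
    _ = (Fᴴ*F*(Fᴴ*F)).trace := by
        congr 1
        rw [Matrix.mul_assoc, Matrix.mul_assoc, Matrix.mul_assoc]
  set T : ℝ := ∑ i, ∑ j, Complex.normSq (G i j) with hTdef
  set U : ℝ := ∑ i, ∑ j, Complex.normSq (B i j) with hUdef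
  have hT : ((T : ℝ) : ℂ) = (G*G).trace := (trace_sq_herm G hGherm).symm
  have hU : ((U : ℝ) : ℂ) = (B*B).trace := (trace_sq_herm B hBherm).symm
  -- expansion
  have hexp : B * B = A*A - c•A - c•A + (c*c) • (1 : Matrix (Fin d) (Fin d) ℂ) := by
    rw [hBdef]
    simp only [Matrix.sub_mul, Matrix.mul_sub, Matrix.smul_mul, Matrix.mul_smul,
      Matrix.one_mul, Matrix.mul_one, smul_sub, smul_smul]
    abel
  have htrBB : (B*B).trace = (T : ℂ) - 2*c*(n : ℂ) + c*c*(d : ℂ) := by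
    rw [hexp]
    simp only [Matrix.trace_add, Matrix.trace_sub, Matrix.trace_smul, Matrix.trace_one,
      htrA, htrAA, ← hT, smul_eq_mul, Fintype.card_fin]
    ring
  have hd0c : (d : ℂ) ≠ 0 := Nat.cast_ne_zero.mpr hd.ne'
  have hUT : U = T - (n : ℝ)^2 / d := by
    have : ((U : ℝ) : ℂ) = (((T - (n : ℝ)^2 / d : ℝ)) : ℂ) := by
      rw [hU, htrBB, hc]
      push_cast
      field_simp
      ring
    exact_mod_cast this
  -- off-diagonal sum
  set S : ℝ := ∑ p ∈ (univ : Finset (Fin n)).offDiag, Complex.normSq (G p.1 p.2) with hSdef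
  have hTS : T = S + n := by
    have h1 : T = ∑ p ∈ (univ : Finset (Fin n)) ×ˢ univ, Complex.normSq (G p.1 p.2) := by
      rw [hTdef, Finset.sum_product]
    have h2 : ((univ : Finset (Fin n)).diag ∪ (univ : Finset (Fin n)).offDiag)
        = (univ : Finset (Fin n)) ×ˢ univ := Finset.diag_union_offDiag univ
    rw [h1, ← h2, Finset.sum_union (Finset.disjoint_diag_offDiag univ), Finset.sum_diag]
    have h3 : ∑ i : Fin n, Complex.normSq (G i i) = n := by
      simp [hunit]
    rw [h3]
    ring
  have hUnn : 0 ≤ U := by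
    rw [hUdef]
    exact Finset.sum_nonneg fun i _ => Finset.sum_nonneg fun j _ => Complex.normSq_nonneg _
  have hcard : ((univ : Finset (Fin n)).offDiag.card : ℝ) = (n : ℝ) * ((n : ℝ) - 1) := by
    rw [Finset.offDiag_card, Finset.card_univ, Fintype.card_fin]
    have hle' : n ≤ n * n := Nat.le_mul_of_pos_left n (hd.trans hdn)
    push_cast [Nat.cast_sub hle']
    ring
  have hle : ∀ p ∈ (univ : Finset (Fin n)).offDiag, Complex.normSq (G p.1 p.2) ≤ q := by
    intro p hp
    obtain ⟨-, -, hne⟩ := Finset.mem_offDiag.mp hp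
    have := hub p.1 p.2 hne
    calc Complex.normSq (G p.1 p.2) = ‖G p.1 p.2‖ ^ 2 := (Complex.sq_norm _).symm
    _ ≤ Real.sqrt q ^ 2 := by
        apply pow_le_pow_left₀ (norm_nonneg _) this _
    _ = q := hμsq
  have hcq : ((univ : Finset (Fin n)).offDiag.card : ℝ) * q = (n : ℝ)^2 / d - n := by
    rw [hcard, hq]
    field_simp
  have hSle : S ≤ ((univ : Finset (Fin n)).offDiag.card : ℝ) * q := by
    rw [hSdef]
    calc ∑ p ∈ (univ : Finset (Fin n)).offDiag, Complex.normSq (G p.1 p.2)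
        ≤ ∑ _p ∈ (univ : Finset (Fin n)).offDiag, q := Finset.sum_le_sum hle
    _ = _ := by rw [Finset.sum_const, nsmul_eq_mul]
  have hU0 : U = 0 := le_antisymm (by rw [hUT, hTS]; linarith [hSle, hcq]) hUnn
  have hSeq : S = ((univ : Finset (Fin n)).offDiag.card : ℝ) * q := by
    have : T = (n : ℝ)^2 / d := by linarith [hUT, hU0]
    rw [hcq]
    linarith [hTS, this]
  constructor
  · intro i j hij
    have hmem : (i, j) ∈ (univ : Finset (Fin n)).offDiag :=
      Finset.mem_offDiag.mpr ⟨Finset.mem_univ _, Finset.mem_univ _, hij⟩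
    have := sum_eq_of_le _ _ q hle (by rw [← hSdef, hSeq]) (i, j) hmem
    have habs : ‖G i j‖ ^ 2 = Real.sqrt q ^ 2 := by
      rw [Complex.sq_norm, hμsq]; exact this
    rw [← Real.sqrt_sq (norm_nonneg (G i j)), habs,
      Real.sqrt_sq (Real.sqrt_nonneg _)]
  · -- B = 0
    have hB0 : B = 0 := by
      ext i j
      have h1 : ∀ i ∈ (univ : Finset (Fin d)), (0:ℝ) ≤ ∑ j, Complex.normSq (B i j) :=
        fun i _ => Finset.sum_nonneg fun j _ => Complex.normSq_nonneg _
      have h2 : ∑ j, Complex.normSq (B i j) = 0 :=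
        (Finset.sum_eq_zero_iff_of_nonneg h1).mp hU0 i (Finset.mem_univ i)
      have h3 : Complex.normSq (B i j) = 0 :=
        (Finset.sum_eq_zero_iff_of_nonneg (fun j _ => Complex.normSq_nonneg _)).mp h2 j
          (Finset.mem_univ j)
      simpa using Complex.normSq_eq_zero.mp h3
    have h4 : A - c • 1 = 0 := by rw [← hBdef]; exact hB0
    exact sub_eq_zero.mp h4
end WelchAux


/-- **Welch bound (equality characterization).** For `n > d ≥ 1` and `F ∈ ℂ^{d×n}` with
unit-norm columns, the coherence `max_{i≠j} |fᵢ* fⱼ|` equals `μ = √((n−d)/(d(n−1)))`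
(i.e. `μ` is the greatest value among `|fᵢ* fⱼ|`, `i ≠ j`) if and only if
(i) `|fᵢ* fⱼ| = μ` for all `i ≠ j`, and (ii) `F Fᴴ = (n/d) I`. -/
theorem welch_bound_equality (d n : ℕ) (hd : 0 < d) (hdn : d < n)
    (F : Matrix (Fin d) (Fin n) ℂ)
    (hunit : ∀ j, (Fᴴ * F) j j = 1) :
    IsGreatest {x : ℝ | ∃ i j : Fin n, i ≠ j ∧ x = ‖(Fᴴ * F) i j‖}
      (Real.sqrt (((n : ℝ) - d) / (d * ((n : ℝ) - 1)))) ↔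
    ((∀ i j : Fin n, i ≠ j →
        ‖(Fᴴ * F) i j‖ = Real.sqrt (((n : ℝ) - d) / (d * ((n : ℝ) - 1)))) ∧
      F * Fᴴ = ((n : ℂ) / (d : ℂ)) • 1) := by
  constructor
  · intro h
    exact welch_core d n hd hdn F hunit fun i j hij => h.2 ⟨i, j, hij, rfl⟩
  · intro h
    have hn2 : 2 ≤ n := lt_of_le_of_lt hd hdn
    have hne : (⟨0, by omega⟩ : Fin n) ≠ ⟨1, by omega⟩ := by simp [Fin.ext_iff]
    exact ⟨⟨⟨0, by omega⟩, ⟨1, by omega⟩, hne, (h.1 _ _ hne).symm⟩,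
      fun x hx => by obtain ⟨i, j, hij, rfl⟩ := hx; exact le_of_eq (h.1 i j hij)⟩
end

section
/- (Main result) Let d be a positive integer. If there exists a skew Hadamard matrix of order d+1, then there exists a complex equiangular tight frame of size d × 2d. -/
open Matrix

private lemma skewHadamard_core (d : ℕ) (H : Matrix (Fin (d+1)) (Fin (d+1)) ℝ)
    (hH : IsSkewHadamard H) :
    ∃ B : Fin d → Fin d → ℝ,
      (∀ i, B i i = 0) ∧ (∀ i j, B j i = -B i j) ∧
      (∀ i j, i ≠ j → B i j * B i j = 1) ∧
      (∀ i, ∑ k, B i k = 0) ∧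
      (∀ i j, ∑ k, B i k * B k j = 1 - d * (if i = j then 1 else 0)) := by
  obtain ⟨⟨hpm, horthM⟩, hskewM⟩ := hH
  have hsq : ∀ i j, H i j * H i j = 1 := fun i j => by
    rcases hpm i j with h | h <;> rw [h] <;> norm_num
  have hskew : ∀ i j : Fin (d+1), H j i = (if i = j then 2 else 0) - H i j := by
    intro i j
    have h2 := congrFun (congrFun hskewM j) i
    simp only [Matrix.transpose_apply, Matrix.sub_apply, Matrix.neg_apply,
      Matrix.one_apply] at h2
    by_cases hij : i = j
    · subst hij; simp at h2 ⊢; linarith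
    · simp [hij, Ne.symm hij] at h2 ⊢; linarith
  have horth : ∀ i j : Fin (d+1), ∑ k, H k i * H k j
      = (d+1 : ℝ) * (if i = j then 1 else 0) := by
    intro i j
    have h2 := congrFun (congrFun horthM i) j
    simp only [Matrix.mul_apply, Matrix.transpose_apply, Matrix.smul_apply,
      Matrix.one_apply, Fintype.card_fin, smul_eq_mul] at h2
    rw [h2]; push_cast; ring_nf
  -- normalized matrix
  set g : Fin (d+1) → Fin (d+1) → ℝ := fun i j => H i 0 * H i j * H j 0 with hg
  have hgii : ∀ i, g i i = 1 := by
    intro i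
    have hd : H i i = 1 := by have := hskew i i; simp at this; linarith
    simp [hg, hd, hsq]
    try norm_num
  have hgi0 : ∀ i, g i 0 = 1 := by
    intro i
    have hd : H 0 0 = 1 := by have := hskew 0 0; simp at this; linarith
    simp [hg, hd]; exact hsq i 0
  have hg0j : ∀ j : Fin (d+1), j ≠ 0 → g 0 j = -1 := by
    intro j hj
    have hd : H 0 0 = 1 := by have := hskew 0 0; simp at this; linarith
    have h1 : H 0 j = - H j 0 := by
      have := hskew j 0; simp [hj] at this; linarith
    simp [hg, hd, h1]
    exact hsq j 0
  have hgskew : ∀ i j, g j i = (if i = j then 2 else 0) - g i j := by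
    intro i j
    by_cases hij : i = j
    · subst hij; simp [hgii]; norm_num
    · simp only [hg, hij, if_neg]
      rw [hskew i j]
      simp [hij]; ring
  have hgsq : ∀ i j, g i j * g i j = 1 := by
    intro i j
    simp only [hg]
    have h1 := hsq i 0; have h2 := hsq i j; have h3 := hsq j 0
    linear_combination (H i j * H i j * H j 0 * H j 0) * h1 + (H j 0 * H j 0) * h2 + h3
  have hgorth : ∀ i j, ∑ k, g k i * g k j = (d+1 : ℝ) * (if i = j then 1 else 0) := by
    intro i j
    by_cases hij : i = j
    · subst hij; simp [hgsq, horth]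
    · have : ∀ k, g k i * g k j = (H i 0 * H j 0) * (H k i * H k j) := by
        intro k; simp only [hg]
        linear_combination (H k i * H i 0 * H k j * H j 0) * (hsq k 0)
      rw [Finset.sum_congr rfl fun k _ => this k, ← Finset.mul_sum, horth i j]
      simp [hij]
  have hgrow : ∀ i j, ∑ k, g i k * g k j = 2 * g i j - (d+1 : ℝ) * (if i = j then 1 else 0) := by
    intro i j
    have key : ∀ k, g i k * g k j = ((if k = i then 2 else 0) - g k i) * g k j := by
      intro k; rw [← hgskew k i]
    rw [Finset.sum_congr rfl fun k _ => key k]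
    simp only [sub_mul, Finset.sum_sub_distrib, ite_mul, zero_mul]
    rw [Finset.sum_ite_eq', hgorth i j]
    simp
  have hgrowsum : ∀ i, ∑ k, g i k = 2 * g i 0 - (d+1 : ℝ) * (if i = 0 then 1 else 0) := by
    intro i
    have := hgrow i 0
    simpa [hgi0] using this
  refine ⟨fun i j => g i.succ j.succ - (if i = j then 1 else 0), ?_, ?_, ?_, ?_, ?_⟩
  · intro i; simp [hgii]
  · intro i j
    by_cases hij : i = j
    · subst hij; simp [hgii]
    · have h1 := hgskew i.succ j.succ
      have h2 : ¬ (i.succ = j.succ) := fun hc => hij (Fin.succ_injective _ hc)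
      rw [if_neg h2] at h1
      simp [hij, Ne.symm hij, h1]
  · intro i j hij
    have h2 : ¬ (i = j) := hij
    simp [h2]; exact hgsq i.succ j.succ
  · intro i
    have h1 : ∑ k : Fin d, g i.succ k.succ
        = (∑ k : Fin (d+1), g i.succ k) - g i.succ 0 := by
      rw [Fin.sum_univ_succ]; ring
    have h2 : (i.succ : Fin (d+1)) ≠ 0 := Fin.succ_ne_zero i
    simp only [Finset.sum_sub_distrib, h1, hgrowsum, hgi0, h2, if_neg]
    simp [h2]
    norm_num
  · intro i j
    have key : ∀ k : Fin d,
        (g i.succ k.succ - (if i = k then 1 else 0)) * (g k.succ j.succ - (if k = j then 1 else 0))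
        = g i.succ k.succ * g k.succ j.succ
          - (if i = k then 1 else 0) * g k.succ j.succ
          - g i.succ k.succ * (if k = j then 1 else 0)
          + (if i = k then 1 else 0) * (if k = j then 1 else 0) := by
      intro k; ring
    have e1 : ∑ k : Fin d, g i.succ k.succ * g k.succ j.succ
        = (∑ k : Fin (d+1), g i.succ k * g k j.succ) - g i.succ 0 * g 0 j.succ := by
      rw [Fin.sum_univ_succ]; ring
    have e2 : ∑ k : Fin d, (if i = k then (1:ℝ) else 0) * g k.succ j.succ = g i.succ j.succ := by
      simp
    have e3 : ∑ k : Fin d, g i.succ k.succ * (if k = j then (1:ℝ) else 0) = g i.succ j.succ := by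
      simp
    have e4 : ∑ k : Fin d, (if i = k then (1:ℝ) else 0) * (if k = j then (1:ℝ) else 0)
        = (if i = j then (1:ℝ) else 0) := by
      simp
    rw [Finset.sum_congr rfl fun k _ => key k]
    simp only [Finset.sum_add_distrib, Finset.sum_sub_distrib, e1, e2, e3, e4]
    rw [hgrow]
    have h0j : g 0 j.succ = -1 := hg0j _ (Fin.succ_ne_zero j)
    have hiteq : (if i.succ = j.succ then (1:ℝ) else 0) = (if i = j then 1 else 0) := by
      simp [Fin.succ_inj]
    rw [hgi0, h0j, hiteq]
    push_cast
    ring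


noncomputable def linM {d : ℕ} (B : Fin d → Fin d → ℝ) (a b c : ℂ) : Fin d → Fin d → ℂ :=
  fun i j => a * (if i = j then 1 else 0) + b * (B i j : ℂ) + c

lemma sumBB {d : ℕ} (B : Fin d → Fin d → ℝ)
    (hrow : ∀ i, ∑ k, B i k = 0) (hcol : ∀ j, ∑ k, B k j = 0)
    (hmul : ∀ i j, ∑ k, B i k * B k j = 1 - d * (if i = j then 1 else 0))
    (a b c a' b' c' : ℂ) (i j : Fin d) :
    ∑ k, linM B a b c i k * linM B a' b' c' k j
      = (a*a' - d*b*b') * (if i = j then 1 else 0) + (a*b' + a'*b) * (B i j : ℂ)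
        + (a*c' + a'*c + d*c*c' + b*b') := by
  have key : ∀ k, linM B a b c i k * linM B a' b' c' k j
      = a*a' * ((if i = k then 1 else 0) * (if k = j then 1 else 0))
        + a*b' * ((if i = k then (1:ℂ) else 0) * (B k j : ℂ))
        + a*c' * (if i = k then 1 else 0)
        + a'*b * ((B i k : ℂ) * (if k = j then 1 else 0))
        + b*b' * ((B i k : ℂ) * (B k j : ℂ))
        + b*c' * (B i k : ℂ)
        + a'*c * (if k = j then 1 else 0)
        + b'*c * (B k j : ℂ)
        + c*c' := by
    intro k; simp only [linM]; ring
  rw [Finset.sum_congr rfl fun k _ => key k]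
  simp only [Finset.sum_add_distrib, ← Finset.mul_sum]
  have s1 : ∑ k : Fin d, (if i = k then (1:ℂ) else 0) * (if k = j then 1 else 0)
      = (if i = j then 1 else 0) := by simp
  have s2 : ∑ k : Fin d, (if i = k then (1:ℂ) else 0) * (B k j : ℂ) = (B i j : ℂ) := by simp
  have s3 : ∑ k : Fin d, (if i = k then (1:ℂ) else 0) = 1 := by simp
  have s4 : ∑ k : Fin d, (B i k : ℂ) * (if k = j then (1:ℂ) else 0) = (B i j : ℂ) := by simp
  have s5 : ∑ k : Fin d, (B i k : ℂ) * (B k j : ℂ)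
      = 1 - d * (if i = j then 1 else 0) := by
    have h := hmul i j
    simp only [← Complex.ofReal_mul, ← Complex.ofReal_sum, h]
    push_cast [apply_ite Complex.ofReal]
    norm_num
  have s6 : ∑ k : Fin d, (B i k : ℂ) = 0 := by
    have := hrow i
    rw [← Complex.ofReal_sum, this, Complex.ofReal_zero]
  have s7 : ∑ k : Fin d, (if k = j then (1:ℂ) else 0) = 1 := by simp
  have s8 : ∑ k : Fin d, (B k j : ℂ) = 0 := by
    have := hcol j
    rw [← Complex.ofReal_sum, this, Complex.ofReal_zero]
  rw [s1, s2, s3, s4, s5, s6, s7, s8]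
  simp only [Finset.sum_const, Finset.card_univ, Fintype.card_fin, nsmul_eq_mul]
  ring

section ident
variable (D x y ν μ s t u v w : ℝ)
variable (h1 : 2*x^2 = 1+ν) (h2 : 2*D*y^2 = 1-ν)
variable (h3 : ν^2*(2*D-1) = D-1) (h4 : μ^2*(2*D-1) = 1)
variable (h5 : s^2 = D+1) (h6 : t^2 = 2) (h7 : 2*x*y = μ)
variable (hu : s*u = 1) (hv : D*v = 1) (hw : (2*D-1)*w = 1)

-- complex casts
noncomputable def zC : ℂ := (1 - (x:ℂ)) * (v:ℂ)
noncomputable def x1 : ℂ := ((x:ℂ) + Complex.I*(D:ℂ)*(y:ℂ))*(u:ℂ)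
noncomputable def y1 : ℂ := ((x:ℂ) - Complex.I*(y:ℂ))*(u:ℂ)
noncomputable def x1b : ℂ := ((x:ℂ) - Complex.I*(D:ℂ)*(y:ℂ))*(u:ℂ)
noncomputable def y1b : ℂ := ((x:ℂ) + Complex.I*(y:ℂ))*(u:ℂ)
noncomputable def z1 : ℂ := (((ν:ℂ) + Complex.I*(t:ℂ)*(D:ℂ)*(μ:ℂ))*(u:ℂ) - x1 D x y u) * (v:ℂ)
noncomputable def z1b : ℂ := (((ν:ℂ) - Complex.I*(t:ℂ)*(D:ℂ)*(μ:ℂ))*(u:ℂ) - x1b D x y u) * (v:ℂ)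

set_option maxHeartbeats 1000000

include h1 h2 in
lemma idA1 : (x:ℂ)*(x:ℂ) - (D:ℂ)*(Complex.I*(y:ℂ))*(Complex.I*(y:ℂ)) = 1 := by
  have h1C : 2*(x:ℂ)^2 = 1+(ν:ℂ) := by exact_mod_cast h1
  have h2C : 2*(D:ℂ)*(y:ℂ)^2 = 1-(ν:ℂ) := by exact_mod_cast h2
  have hI : Complex.I^2 = -1 := Complex.I_sq
  linear_combination h1C/2 + h2C/2 - (D:ℂ)*(y:ℂ)^2*hI

include h7 in
lemma idA2 : (x:ℂ)*(Complex.I*(y:ℂ)) + (x:ℂ)*(Complex.I*(y:ℂ)) = Complex.I*(μ:ℂ) := by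
  have h7C : 2*(x:ℂ)*(y:ℂ) = (μ:ℂ) := by exact_mod_cast h7
  linear_combination Complex.I * h7C

include h1 h2 hv in
lemma idA3 : (x:ℂ)*(zC x v) + (x:ℂ)*(zC x v) + (D:ℂ)*(zC x v)*(zC x v)
    + (Complex.I*(y:ℂ))*(Complex.I*(y:ℂ)) = 0 := by
  have h1C : 2*(x:ℂ)^2 = 1+(ν:ℂ) := by exact_mod_cast h1
  have h2C : 2*(D:ℂ)*(y:ℂ)^2 = 1-(ν:ℂ) := by exact_mod_cast h2
  have hvC : (D:ℂ)*(v:ℂ) = 1 := by exact_mod_cast hv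
  have hI : Complex.I^2 = -1 := Complex.I_sq
  simp only [zC]
  linear_combination (-(v:ℂ)/2)*h1C - ((v:ℂ)/2)*h2C
    + ((y:ℂ)^2 + (1-(x:ℂ))^2*(v:ℂ))*hvC + (y:ℂ)^2*hI

include h1 h2 h5 hu in
lemma idB1 : (x1b D x y u)*(x1 D x y u) - (D:ℂ)*(-(y1b x y u))*(y1 x y u) = 1 := by
  have h1C : 2*(x:ℂ)^2 = 1+(ν:ℂ) := by exact_mod_cast h1
  have h2C : 2*(D:ℂ)*(y:ℂ)^2 = 1-(ν:ℂ) := by exact_mod_cast h2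
  have h5C : (s:ℂ)^2 = (D:ℂ)+1 := by exact_mod_cast h5
  have huC : (s:ℂ)*(u:ℂ) = 1 := by exact_mod_cast hu
  have hI : Complex.I^2 = -1 := Complex.I_sq
  simp only [x1, x1b, y1, y1b]
  linear_combination ((s:ℂ)*(u:ℂ)+1)*huC + ((s:ℂ)^2*(u:ℂ)^2/2)*h1C + ((s:ℂ)^2*(u:ℂ)^2/2)*h2C
    - (s:ℂ)^2*(u:ℂ)^2*(D:ℂ)*(y:ℂ)^2*hI
    - (u:ℂ)^2*((x:ℂ)^2 - Complex.I^2*(D:ℂ)*(y:ℂ)^2)*h5C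

include h5 h7 hu in
lemma idB2 : (x1b D x y u)*(y1 x y u) + (x1 D x y u)*(-(y1b x y u)) = -Complex.I*(μ:ℂ) := by
  have h5C : (s:ℂ)^2 = (D:ℂ)+1 := by exact_mod_cast h5
  have h7C : 2*(x:ℂ)*(y:ℂ) = (μ:ℂ) := by exact_mod_cast h7
  have huC : (s:ℂ)*(u:ℂ) = 1 := by exact_mod_cast hu
  simp only [x1, x1b, y1, y1b]
  linear_combination (-Complex.I*(μ:ℂ)*((s:ℂ)*(u:ℂ)+1))*huC + Complex.I*(μ:ℂ)*(u:ℂ)^2*h5C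
    - Complex.I*(1+(D:ℂ))*(u:ℂ)^2*h7C

include h1 h2 h3 h4 h6 hv hw in
lemma idB3 : (x1b D x y u)*(z1 D x y ν μ t u v) + (x1 D x y u)*(z1b D x y ν μ t u v)
    + (D:ℂ)*(z1b D x y ν μ t u v)*(z1 D x y ν μ t u v) + (-(y1b x y u))*(y1 x y u) = 0 := by
  have h1C : 2*(x:ℂ)^2 = 1+(ν:ℂ) := by exact_mod_cast h1
  have h2C : 2*(D:ℂ)*(y:ℂ)^2 = 1-(ν:ℂ) := by exact_mod_cast h2
  have h3C : (ν:ℂ)^2*(2*(D:ℂ)-1) = (D:ℂ)-1 := by exact_mod_cast h3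
  have h4C : (μ:ℂ)^2*(2*(D:ℂ)-1) = 1 := by exact_mod_cast h4
  have h6C : (t:ℂ)^2 = 2 := by exact_mod_cast h6
  have hvC : (D:ℂ)*(v:ℂ) = 1 := by exact_mod_cast hv
  have hwC : (2*(D:ℂ)-1)*(w:ℂ) = 1 := by exact_mod_cast hw
  have hI : Complex.I^2 = -1 := Complex.I_sq
  simp only [x1, x1b, y1, y1b, z1, z1b]
  linear_combination (norm := ring_nf)
    (-(u:ℂ)^2*(v:ℂ)*((D:ℂ)+1)/2)*h1C + (-(u:ℂ)^2*(v:ℂ)*((D:ℂ)+1)/2)*h2C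
    + ((u:ℂ)^2*(v:ℂ)*(w:ℂ))*h3C + (2*(u:ℂ)^2*(v:ℂ)*(D:ℂ)^2*(w:ℂ))*h4C
    + ((u:ℂ)^2*(v:ℂ)*((D:ℂ)+1-(ν:ℂ)^2-2*(D:ℂ)^2*(μ:ℂ)^2))*hwC
    + ((u:ℂ)^2*(v:ℂ)*(D:ℂ)^2*(μ:ℂ)^2)*h6C
    + ((u:ℂ)^2*((x:ℂ)^2+(y:ℂ)^2 + (v:ℂ)*(((ν:ℂ)-(x:ℂ))^2+((D:ℂ)*((t:ℂ)*(μ:ℂ)-(y:ℂ)))^2)))*hvC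
    + ((u:ℂ)^2*((y:ℂ)^2 - 2*(v:ℂ)*(D:ℂ)*(y:ℂ)*((D:ℂ)*((t:ℂ)*(μ:ℂ)-(y:ℂ)))
        - (D:ℂ)*(v:ℂ)^2*((D:ℂ)*((t:ℂ)*(μ:ℂ)-(y:ℂ)))^2))*hI

include h1 h2 in
lemma idC1 : (x:ℂ)*(x1 D x y u) - (D:ℂ)*(Complex.I*(y:ℂ))*(y1 x y u) = (ν:ℂ)*(u:ℂ) := by
  have h1C : 2*(x:ℂ)^2 = 1+(ν:ℂ) := by exact_mod_cast h1
  have h2C : 2*(D:ℂ)*(y:ℂ)^2 = 1-(ν:ℂ) := by exact_mod_cast h2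
  have hI : Complex.I^2 = -1 := Complex.I_sq
  simp only [x1, y1]
  linear_combination ((u:ℂ)/2)*h1C - ((u:ℂ)/2)*h2C + (u:ℂ)*(D:ℂ)*(y:ℂ)^2*hI

include h1 h2 in
lemma idC2 : (x:ℂ)*(y1 x y u) + (x1 D x y u)*(Complex.I*(y:ℂ)) = (ν:ℂ)*(u:ℂ) := by
  have h1C : 2*(x:ℂ)^2 = 1+(ν:ℂ) := by exact_mod_cast h1
  have h2C : 2*(D:ℂ)*(y:ℂ)^2 = 1-(ν:ℂ) := by exact_mod_cast h2
  have hI : Complex.I^2 = -1 := Complex.I_sq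
  simp only [x1, y1]
  linear_combination ((u:ℂ)/2)*h1C - ((u:ℂ)/2)*h2C + (u:ℂ)*(D:ℂ)*(y:ℂ)^2*hI

include h1 h2 h7 hv in
lemma idC3 : (x:ℂ)*(z1 D x y ν μ t u v) + (x1 D x y u)*(zC x v)
    + (D:ℂ)*(zC x v)*(z1 D x y ν μ t u v) + (Complex.I*(y:ℂ))*(y1 x y u)
    = Complex.I*((t:ℂ)*(μ:ℂ)*(u:ℂ)) := by
  have h1C : 2*(x:ℂ)^2 = 1+(ν:ℂ) := by exact_mod_cast h1
  have h2C : 2*(D:ℂ)*(y:ℂ)^2 = 1-(ν:ℂ) := by exact_mod_cast h2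
  have h7C : 2*(x:ℂ)*(y:ℂ) = (μ:ℂ) := by exact_mod_cast h7
  have hvC : (D:ℂ)*(v:ℂ) = 1 := by exact_mod_cast hv
  have hI : Complex.I^2 = -1 := Complex.I_sq
  simp only [x1, y1, z1, zC]
  linear_combination (norm := ring_nf) (-(u:ℂ)*(v:ℂ)/2)*h1C + ((u:ℂ)*(v:ℂ)/2)*h2C
    + ((u:ℂ)*(Complex.I*((t:ℂ)*(μ:ℂ)-(x:ℂ)*(y:ℂ)) + (v:ℂ)*(1-(x:ℂ))*(((ν:ℂ)-(x:ℂ))+Complex.I*((D:ℂ)*((t:ℂ)*(μ:ℂ)-(y:ℂ)))) - (y:ℂ)^2))*hvC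
    + (-(u:ℂ)*(y:ℂ)^2)*hI

end ident


set_option maxHeartbeats 2000000 in
private theorem etf_main (d : ℕ) (hd : 0 < d)
    (B : Fin d → Fin d → ℝ)
    (hBdiag : ∀ i, B i i = 0) (hBskew : ∀ i j, B j i = -B i j)
    (hBsq : ∀ i j, i ≠ j → B i j * B i j = 1)
    (hBrow : ∀ i, ∑ k, B i k = 0)
    (hBmul : ∀ i j, ∑ k, B i k * B k j = 1 - d * (if i = j then 1 else 0)) :
    ∃ F : Matrix (Fin d) (Fin (2 * d)) ℂ, IsETF F := by
  have hBcol : ∀ j, ∑ k, B k j = 0 := by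
    intro j
    rw [Finset.sum_congr rfl fun k _ => hBskew j k]
    simp [hBrow j]
  have hD1 : (1:ℝ) ≤ (d:ℝ) := by exact_mod_cast hd
  have h2D : (0:ℝ) < 2*(d:ℝ)-1 := by linarith
  set ν : ℝ := Real.sqrt (((d:ℝ)-1)/(2*(d:ℝ)-1)) with hνdef
  have hν2 : ν^2 = ((d:ℝ)-1)/(2*(d:ℝ)-1) :=
    Real.sq_sqrt (div_nonneg (by linarith) h2D.le)
  have hν0 : (0:ℝ) ≤ ν := Real.sqrt_nonneg _
  have hν1 : ν ≤ 1 := by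
    have harg : ((d:ℝ)-1)/(2*(d:ℝ)-1) ≤ 1 := by rw [div_le_one h2D]; linarith
    calc ν ≤ Real.sqrt 1 := Real.sqrt_le_sqrt harg
    _ = 1 := Real.sqrt_one
  have h3 : ν^2*(2*(d:ℝ)-1) = (d:ℝ)-1 := by rw [hν2, div_mul_cancel₀ _ h2D.ne']
  set μ : ℝ := etfMu d (2*d) with hμdef
  have hμ0 : (0:ℝ) ≤ μ := Real.sqrt_nonneg _
  have hμval : μ = Real.sqrt (1/(2*(d:ℝ)-1)) := by
    rw [hμdef, etfMu]
    congr 1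
    push_cast
    rw [show (2*(d:ℝ) - d) = (d:ℝ) by ring, div_eq_div_iff (by positivity) h2D.ne']
    ring
  have hμ2 : μ^2 = 1/(2*(d:ℝ)-1) := by
    rw [hμval]; exact Real.sq_sqrt (by positivity)
  have h4 : μ^2*(2*(d:ℝ)-1) = 1 := by rw [hμ2]; field_simp
  set x : ℝ := Real.sqrt ((1+ν)/2) with hxdef
  have hx2 : x^2 = (1+ν)/2 := Real.sq_sqrt (by linarith)
  have hx0 : (0:ℝ) ≤ x := Real.sqrt_nonneg _
  have h1 : 2*x^2 = 1+ν := by rw [hx2]; ring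
  set y : ℝ := Real.sqrt ((1-ν)/(2*(d:ℝ))) with hydef
  have hy2 : y^2 = (1-ν)/(2*(d:ℝ)) := Real.sq_sqrt (div_nonneg (by linarith) (by linarith))
  have hy0 : (0:ℝ) ≤ y := Real.sqrt_nonneg _
  have h2 : 2*(d:ℝ)*y^2 = 1-ν := by
    rw [hy2]; field_simp
  set s : ℝ := Real.sqrt ((d:ℝ)+1) with hsdef
  have h5 : s^2 = (d:ℝ)+1 := Real.sq_sqrt (by linarith)
  have hs0 : (0:ℝ) < s := Real.sqrt_pos.2 (by linarith)
  set t : ℝ := Real.sqrt 2 with htdef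
  have h6 : t^2 = 2 := Real.sq_sqrt (by norm_num)
  set u : ℝ := s⁻¹ with hudef
  have hu : s*u = 1 := mul_inv_cancel₀ hs0.ne'
  have hu0 : (0:ℝ) < u := by rw [hudef]; positivity
  set v : ℝ := ((d:ℝ))⁻¹ with hvdef
  have hv : (d:ℝ)*v = 1 := mul_inv_cancel₀ (by positivity)
  set w : ℝ := (2*(d:ℝ)-1)⁻¹ with hwdef
  have hw : (2*(d:ℝ)-1)*w = 1 := mul_inv_cancel₀ h2D.ne'
  have h7 : 2*x*y = μ := by
    have e : (2*x*y)^2 = μ^2 := by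
      have : (2*x*y)^2 = 4*x^2*y^2 := by ring
      rw [this, hx2, hy2, hμ2]
      field_simp
      linear_combination (-4:ℝ)*h3
    calc 2*x*y = Real.sqrt ((2*x*y)^2) := (Real.sqrt_sq (by positivity)).symm
    _ = Real.sqrt (μ^2) := by rw [e]
    _ = μ := Real.sqrt_sq hμ0

  -- complex constants
  have hdc : ((d:ℕ):ℂ) = (((d:ℝ)):ℂ) := by push_cast; ring
  have hBskewC : ∀ i k : Fin d, ((B k i : ℝ):ℂ) = -((B i k : ℝ):ℂ) := by
    intro i k; rw [hBskew i k]; push_cast; ring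
  have hite : ∀ i k : Fin d, (if i = k then (1:ℂ) else 0) = (if k = i then 1 else 0) := by
    intro i k
    by_cases h : i = k
    · simp [h]
    · rw [if_neg h, if_neg (fun hh : k = i => h hh.symm)]
  set aC : ℂ := (x:ℂ) with haC
  set bC : ℂ := Complex.I*(y:ℂ) with hbC
  set cC : ℂ := zC x v with hcC
  set a2 : ℂ := x1 (d:ℝ) x y u with ha2
  set b2 : ℂ := y1 x y u with hb2
  set c2 : ℂ := z1 (d:ℝ) x y ν μ t u v with hc2
  set a2b : ℂ := x1b (d:ℝ) x y u with ha2b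
  set b2b : ℂ := y1b x y u with hb2b
  set c2b : ℂ := z1b (d:ℝ) x y ν μ t u v with hc2b
  have hscast : ∀ r : ℝ, star ((r:ℝ):ℂ) = ((r:ℝ):ℂ) := fun r => by
    rw [Complex.star_def, Complex.conj_ofReal]
  have hsite : ∀ (c : Prop) [Decidable c], star (if c then (1:ℂ) else 0) = (if c then 1 else 0) := by
    intro c _; by_cases h : c <;> simp [h]
  have hsI : star Complex.I = -Complex.I := by rw [Complex.star_def, Complex.conj_I]
  have hsa : star aC = aC := by rw [haC]; exact hscast x
  have hsb : star bC = -bC := by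
    rw [hbC]; simp only [star_mul', hscast, hsI]; ring
  have hsc : star cC = cC := by
    rw [hcC, zC]; simp only [star_mul', star_sub, star_one, hscast]
  have hsa2 : star a2 = a2b := by
    rw [ha2, ha2b, x1, x1b]
    simp only [star_mul', star_add, star_sub, star_one, hscast, hsI]
    ring
  have hsb2 : star b2 = b2b := by
    rw [hb2, hb2b, y1, y1b]
    simp only [star_mul', star_add, star_sub, star_one, hscast, hsI]
    ring
  have hsc2 : star c2 = c2b := by
    rw [hc2, hc2b, z1, z1b, x1, x1b]
    simp only [star_mul', star_add, star_sub, star_one, hscast, hsI]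
    ring
  set f1 : Fin d → Fin d → ℂ := linM B aC bC cC with hf1
  set f2 : Fin d → Fin d → ℂ := linM B a2 b2 c2 with hf2
  have hstar1 : ∀ i k, star (f1 i k) = linM B aC bC cC k i := by
    intro i k
    simp only [hf1, linM, star_add, star_mul', hsa, hsb, hsc, hsite, hscast,
      hite i k, hBskewC i k]
    ring
  have hstar2 : ∀ i k, star (f2 i k) = linM B a2b (-b2b) c2b k i := by
    intro i k
    simp only [hf2, linM, star_add, star_mul', hsa2, hsb2, hsc2, hsite, hscast,
      hite i k, hBskewC i k]
    ring
  -- Gram identities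
  have gram11 : ∀ p q : Fin d, ∑ k, linM B aC bC cC p k * linM B aC bC cC k q
      = (if p = q then 1 else 0) + Complex.I*(μ:ℂ)*((B p q:ℝ):ℂ) := by
    intro p q
    rw [sumBB B hBrow hBcol hBmul aC bC cC aC bC cC p q, hdc, haC, hbC, hcC]
    linear_combination (if p = q then (1:ℂ) else 0) * idA1 (d:ℝ) x y ν h1 h2
      + ((B p q:ℝ):ℂ) * idA2 x y μ h7
      + idA3 (d:ℝ) x y ν v h1 h2 hv
  have gram22 : ∀ p q : Fin d, ∑ k, linM B a2b (-b2b) c2b p k * linM B a2 b2 c2 k q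
      = (if p = q then 1 else 0) - Complex.I*(μ:ℂ)*((B p q:ℝ):ℂ) := by
    intro p q
    rw [sumBB B hBrow hBcol hBmul a2b (-b2b) c2b a2 b2 c2 p q, hdc, ha2, hb2, hc2, ha2b, hb2b, hc2b]
    linear_combination (if p = q then (1:ℂ) else 0) * idB1 (d:ℝ) x y ν s u h1 h2 h5 hu
      + ((B p q:ℝ):ℂ) * idB2 (d:ℝ) x y μ s u h5 h7 hu
      + idB3 (d:ℝ) x y ν μ t u v w h1 h2 h3 h4 h6 hv hw
  have gram22r : ∀ p q : Fin d, ∑ k, linM B a2 b2 c2 p k * linM B a2b (-b2b) c2b k q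
      = (if p = q then 1 else 0) - Complex.I*(μ:ℂ)*((B p q:ℝ):ℂ) := by
    intro p q
    rw [sumBB B hBrow hBcol hBmul a2 b2 c2 a2b (-b2b) c2b p q, hdc, ha2, hb2, hc2, ha2b, hb2b, hc2b]
    linear_combination (if p = q then (1:ℂ) else 0) * idB1 (d:ℝ) x y ν s u h1 h2 h5 hu
      + ((B p q:ℝ):ℂ) * idB2 (d:ℝ) x y μ s u h5 h7 hu
      + idB3 (d:ℝ) x y ν μ t u v w h1 h2 h3 h4 h6 hv hw
  have gram12 : ∀ p q : Fin d, ∑ k, linM B aC bC cC p k * linM B a2 b2 c2 k q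
      = ((ν:ℂ)*(u:ℂ)) * ((if p = q then 1 else 0) + ((B p q:ℝ):ℂ))
        + Complex.I*((t:ℂ)*(μ:ℂ)*(u:ℂ)) := by
    intro p q
    rw [sumBB B hBrow hBcol hBmul aC bC cC a2 b2 c2 p q, hdc, haC, hbC, hcC, ha2, hb2, hc2]
    linear_combination (if p = q then (1:ℂ) else 0) * idC1 (d:ℝ) x y ν u h1 h2
      + ((B p q:ℝ):ℂ) * idC2 (d:ℝ) x y ν u h1 h2
      + idC3 (d:ℝ) x y ν μ t u v h1 h2 h7 hv
  -- abs facts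
  have hdC0 : ((d:ℕ):ℂ) ≠ 0 := by
    simp only [Ne, Nat.cast_eq_zero]; omega
  have hBabs : ∀ p q : Fin d, p ≠ q → |B p q| = 1 := by
    intro p q hpq
    rcases mul_self_eq_one_iff.mp (hBsq p q hpq) with h | h <;> rw [h] <;> norm_num
  have hkey : ν^2 + 2*μ^2 = μ^2*s^2 := by
    rw [hν2, hμ2, h5]; field_simp; ring
  have hoff : ∀ (r : ℝ), r^2 = 1 →
      ‖((ν:ℂ)*(u:ℂ))*((r:ℝ):ℂ) + Complex.I*((t:ℂ)*(μ:ℂ)*(u:ℂ))‖ = μ := by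
    intro r hr
    have e1 : ((ν:ℂ)*(u:ℂ))*((r:ℝ):ℂ) + Complex.I*((t:ℂ)*(μ:ℂ)*(u:ℂ))
        = ((ν*u*r:ℝ):ℂ) + ((t*μ*u:ℝ):ℂ)*Complex.I := by push_cast; ring
    have e2 : (ν*u*r)^2 + (t*μ*u)^2 = μ^2 := by
      linear_combination (ν^2*u^2)*hr + (μ^2*u^2)*h6 + u^2*hkey + μ^2*(s*u+1)*hu
    rw [e1, Complex.norm_add_mul_I, e2, Real.sqrt_sq hμ0]
  have hμcard : etfMu (Fintype.card (Fin d)) (Fintype.card (Fin (2*d))) = μ := by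
    rw [hμdef]; simp [Fintype.card_fin]
  -- the frame
  set e : Fin (2*d) ≃ Fin d ⊕ Fin d := (finCongr (two_mul d)).trans finSumFinEquiv.symm with he
  refine ⟨Matrix.of fun i j => Sum.elim (f1 i) (f2 i) (e j), ?_, ?_, ?_⟩
  · -- unit diagonal
    intro j
    rw [Matrix.mul_apply]
    simp only [Matrix.conjTranspose_apply, Matrix.of_apply]
    rcases hej : e j with p | p
    · simp only [Sum.elim_inl]
      rw [Finset.sum_congr rfl fun i _ => by rw [hstar1 i p], gram11 p p]
      simp [hBdiag p]
    · simp only [Sum.elim_inr]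
      rw [Finset.sum_congr rfl fun i _ => by rw [hstar2 i p], gram22 p p]
      simp [hBdiag p]
  · -- off-diagonal modulus
    intro j k hjk
    have hne : e j ≠ e k := fun hc => hjk (e.injective hc)
    rw [Matrix.mul_apply, hμcard]
    simp only [Matrix.conjTranspose_apply, Matrix.of_apply]
    rcases hej : e j with p | p <;> rcases hek : e k with q | q
    · -- inl inl
      have hpq : p ≠ q := by rw [hej, hek] at hne; simpa using hne
      simp only [Sum.elim_inl]
      rw [Finset.sum_congr rfl fun i _ => by rw [hstar1 i p], gram11 p q]
      rw [if_neg hpq]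
      rw [zero_add]
      simp only [norm_mul, Complex.norm_I, Complex.norm_real, Real.norm_eq_abs]
      rw [abs_of_nonneg hμ0, hBabs p q hpq]
      ring
    · -- inl inr
      simp only [Sum.elim_inl, Sum.elim_inr]
      rw [Finset.sum_congr rfl fun i _ => by rw [hstar1 i p], gram12 p q]
      by_cases hpq : p = q
      · subst hpq
        rw [if_pos rfl, hBdiag p]
        have : ((1:ℂ) + ((0:ℝ):ℂ)) = ((1:ℝ):ℂ) := by norm_num
        rw [this]
        exact hoff 1 (by norm_num)
      · rw [if_neg hpq, zero_add]
        exact hoff (B p q) (by rw [sq]; exact hBsq p q hpq)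
    · -- inr inl
      simp only [Sum.elim_inl, Sum.elim_inr]
      have hflip : ∀ i, star (f2 i p) * f1 i q = star (star (f1 i q) * f2 i p) := by
        intro i; rw [star_mul', star_star]; ring
      rw [Finset.sum_congr rfl fun i _ => hflip i, ← star_sum]
      rw [Finset.sum_congr rfl fun i _ => by rw [hstar1 i q], gram12 q p]
      rw [Complex.star_def, Complex.norm_conj]
      by_cases hpq : q = p
      · subst hpq
        rw [if_pos rfl, hBdiag q]
        have : ((1:ℂ) + ((0:ℝ):ℂ)) = ((1:ℝ):ℂ) := by norm_num
        rw [this]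
        exact hoff 1 (by norm_num)
      · rw [if_neg hpq, zero_add]
        exact hoff (B q p) (by rw [sq]; exact hBsq q p hpq)
    · -- inr inr
      have hpq : p ≠ q := by rw [hej, hek] at hne; simpa using hne
      simp only [Sum.elim_inr]
      rw [Finset.sum_congr rfl fun i _ => by rw [hstar2 i p], gram22 p q]
      rw [if_neg hpq]
      rw [zero_sub, norm_neg]
      simp only [norm_mul, Complex.norm_I, Complex.norm_real, Real.norm_eq_abs]
      rw [abs_of_nonneg hμ0, hBabs p q hpq]
      ring
  · -- tightness
    ext i i'
    rw [Matrix.mul_apply]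
    simp only [Matrix.conjTranspose_apply, Matrix.of_apply]
    have hreindex := Fintype.sum_equiv e
      (fun j => Sum.elim (f1 i) (f2 i) (e j) * star (Sum.elim (f1 i') (f2 i') (e j)))
      (fun kk => Sum.elim (f1 i) (f2 i) kk * star (Sum.elim (f1 i') (f2 i') kk))
      (fun j => rfl)
    rw [hreindex, Fintype.sum_sum_type]
    simp only [Sum.elim_inl, Sum.elim_inr]
    have hrow1 : ∑ a, f1 i a * star (f1 i' a) = (if i = i' then 1 else 0)
        + Complex.I*(μ:ℂ)*((B i i':ℝ):ℂ) := by
      rw [Finset.sum_congr rfl fun a _ => by rw [hstar1 i' a], gram11 i i']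
    have hrow2 : ∑ a, f2 i a * star (f2 i' a) = (if i = i' then 1 else 0)
        - Complex.I*(μ:ℂ)*((B i i':ℝ):ℂ) := by
      rw [Finset.sum_congr rfl fun a _ => by rw [hstar2 i' a], gram22r i i']
    rw [hrow1, hrow2]
    simp only [Matrix.smul_apply, Matrix.one_apply, Fintype.card_fin, smul_eq_mul]
    have : ((2*d:ℕ):ℂ)/((d:ℕ):ℂ) = 2 := by
      push_cast
      field_simp
    rw [this]
    by_cases hii : i = i' <;> simp [hii] <;> ring



/-- **Main result.** If there exists a skew Hadamard matrix of order `d + 1`, then there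
exists a complex equiangular tight frame of size `d × 2d`. -/
theorem etf_of_skewHadamard_succ (d : ℕ) (hd : 0 < d)
    (h : ∃ H : Matrix (Fin (d + 1)) (Fin (d + 1)) ℝ, IsSkewHadamard H) :
    ∃ F : Matrix (Fin d) (Fin (2 * d)) ℂ, IsETF F := by
  obtain ⟨H, hH⟩ := h
  obtain ⟨B, hB1, hB2, hB3, hB4, hB5⟩ := skewHadamard_core d H hH
  exact etf_main d hd B hB1 hB2 hB3 hB4 hB5
end

section
/- Let d be a positive integer. If there exists a skew Hadamard matrix of order 2d, then there exists a complex equiangular tight frame of size d × 2d. -/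
open Matrix

private lemma exists_factor_aux {n d : ℕ} (G : Matrix (Fin n) (Fin n) ℂ) (hG : G.IsHermitian)
    (h2 : G * G = (2:ℂ) • G) (htr : G.trace = ((2 * d : ℕ) : ℂ)) :
    ∃ F : Matrix (Fin d) (Fin n) ℂ, Fᴴ * F = G ∧ F * Fᴴ = (2:ℂ) • 1 := by
  classical
  set U : Matrix (Fin n) (Fin n) ℂ := (hG.eigenvectorUnitary : Matrix (Fin n) (Fin n) ℂ) with hU
  have hU1 : U * Uᴴ = 1 := by
    have := (Matrix.mem_unitaryGroup_iff).mp hG.eigenvectorUnitary.2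
    simpa [Matrix.star_eq_conjTranspose] using this
  have hU2 : Uᴴ * U = 1 := by
    have := (Matrix.mem_unitaryGroup_iff').mp hG.eigenvectorUnitary.2
    simpa [Matrix.star_eq_conjTranspose] using this
  set lam : Fin n → ℝ := hG.eigenvalues with hlam
  have hspec : G = U * diagonal (RCLike.ofReal ∘ lam) * Uᴴ := by
    simpa [Matrix.star_eq_conjTranspose] using hG.spectral_theorem
  set D : Matrix (Fin n) (Fin n) ℂ := diagonal (RCLike.ofReal ∘ lam) with hD
  -- D * D = 2 • D
  have hDD : D * D = (2:ℂ) • D := by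
    have key : Uᴴ * G * U = D := by
      rw [hspec, show Uᴴ * (U * D * Uᴴ) * U = (Uᴴ * U) * D * (Uᴴ * U) by simp only [Matrix.mul_assoc],
        hU2, Matrix.one_mul, Matrix.mul_one]
    calc D * D = (Uᴴ * G * U) * (Uᴴ * G * U) := by rw [key]
    _ = Uᴴ * (G * (U * Uᴴ) * G) * U := by simp only [Matrix.mul_assoc]
    _ = Uᴴ * (G * G) * U := by rw [hU1, mul_one]
    _ = (2:ℂ) • (Uᴴ * G * U) := by rw [h2]; simp [Matrix.mul_smul, Matrix.smul_mul, mul_assoc]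
    _ = (2:ℂ) • D := by rw [key]
  have heig : ∀ i, lam i = 0 ∨ lam i = 2 := by
    intro i
    have := congrFun (congrFun hDD i) i
    simp [hD, Matrix.mul_apply, Matrix.diagonal_apply, Matrix.smul_apply] at this
    have h' : (lam i : ℂ) * lam i = 2 * lam i := by simpa [Finset.sum_ite_eq] using this
    have hr : lam i * lam i = 2 * lam i := by exact_mod_cast h'
    have h0 : lam i * (lam i - 2) = 0 := by nlinarith [hr]
    rcases mul_eq_zero.mp h0 with h | h
    · exact Or.inl h
    · exact Or.inr (by linarith)
  -- sum of eigenvalues is the trace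
  have htrD : ∑ i, lam i = 2 * d := by
    have h1 : G.trace = D.trace := by
      rw [hspec, Matrix.trace_mul_cycle, hU2, Matrix.one_mul]
    have h2 : D.trace = ((∑ i, lam i : ℝ) : ℂ) := by
      simp [hD, Matrix.trace_diagonal]
    rw [h1, h2] at htr
    exact_mod_cast htr
  set T : Finset (Fin n) := Finset.univ.filter (fun i => lam i = 2) with hT
  have hTcard : T.card = d := by
    have : ∑ i, lam i = 2 * T.card := by
      rw [hT]
      rw [show ∑ i, lam i = ∑ i, (if lam i = 2 then (2:ℝ) else 0) by
        refine Finset.sum_congr rfl fun i _ => ?_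
        rcases heig i with h | h <;> simp [h]]
      rw [← Finset.sum_filter, Finset.sum_const, nsmul_eq_mul, mul_comm]
    rw [htrD] at this
    have : (T.card : ℝ) = d := by linarith
    exact_mod_cast this
  have hcard : Fintype.card {i // lam i = 2} = d := by
    rw [Fintype.card_subtype]
    exact hTcard
  let e : Fin d ≃ {i // lam i = 2} := (Fintype.equivFinOfCardEq hcard).symm
  set F : Matrix (Fin d) (Fin n) ℂ :=
    Matrix.of (fun k j => ((Real.sqrt 2 : ℝ) : ℂ) * star (U j (e k).1)) with hF
  have hcoe : ∀ r : ℝ, (RCLike.ofReal r : ℂ) = (r : ℂ) := fun r => rfl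
  have hstar2 : star ((Real.sqrt 2 : ℝ) : ℂ) = ((Real.sqrt 2 : ℝ) : ℂ) := by
    rw [Complex.star_def, Complex.conj_ofReal]
  have hs2 : ((Real.sqrt 2 : ℝ) : ℂ) * ((Real.sqrt 2 : ℝ) : ℂ) = 2 := by
    rw [← Complex.ofReal_mul, Real.mul_self_sqrt (by norm_num)]
    norm_num
  refine ⟨F, ?_, ?_⟩
  · -- Fᴴ * F = G
    ext j l
    have hrhs : G j l = ∑ i, (lam i : ℂ) * (U j i * star (U l i)) := by
      rw [hspec]
      simp only [Matrix.mul_apply, Matrix.conjTranspose_apply, Matrix.diagonal_apply, hD,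
        Function.comp_apply]
      refine Finset.sum_congr rfl fun i _ => ?_
      simp only [mul_ite, mul_zero, Finset.sum_ite_eq, Finset.sum_ite_eq', Finset.mem_univ,
        if_true, hcoe]
      ring
    have hlhs : (Fᴴ * F) j l = ∑ k : Fin d, 2 * (U j (e k).1 * star (U l (e k).1)) := by
      simp only [Matrix.mul_apply, Matrix.conjTranspose_apply, hF, Matrix.of_apply,
        star_mul', star_star, hstar2]
      refine Finset.sum_congr rfl fun k _ => ?_
      rw [← hs2]
      ring
    rw [hlhs, hrhs]
    symm
    calc (∑ i, (lam i : ℂ) * (U j i * star (U l i)))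
        = ∑ i, (if lam i = 2 then 2 * (U j i * star (U l i)) else 0) := by
          refine Finset.sum_congr rfl fun i _ => ?_
          rcases heig i with h | h <;> simp [h]
      _ = ∑ i ∈ T, 2 * (U j i * star (U l i)) := (Finset.sum_filter _ _).symm
      _ = ∑ t : {i // lam i = 2}, 2 * (U j t.1 * star (U l t.1)) :=
          Finset.sum_subtype T (fun x => by simp [hT]) (fun i => 2 * (U j i * star (U l i)))
      _ = ∑ k : Fin d, 2 * (U j (e k).1 * star (U l (e k).1)) :=
          (Equiv.sum_comp e (fun t : {i // lam i = 2} => 2 * (U j t.1 * star (U l t.1)))).symm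
  · -- F * Fᴴ = 2 • 1
    ext k m
    have : (F * Fᴴ) k m = 2 * ((Uᴴ * U) (e k).1 (e m).1) := by
      simp only [Matrix.mul_apply, Matrix.conjTranspose_apply, hF, Matrix.of_apply]
      rw [Finset.mul_sum]
      refine Finset.sum_congr rfl fun j _ => ?_
      simp only [star_mul', star_star, hstar2]
      rw [← hs2]
      ring
    rw [this, hU2]
    by_cases h : k = m
    · subst h
      simp [Matrix.one_apply]
    · have : (e k).1 ≠ (e m).1 := fun hh => h (e.injective (Subtype.ext hh))
      simp [Matrix.one_apply, this, h]

/-- If there exists a skew Hadamard matrix of order `2d`, then there exists a complex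
equiangular tight frame of size `d × 2d`. -/
theorem etf_of_skewHadamard_double (d : ℕ) (hd : 0 < d)
    (h : ∃ H : Matrix (Fin (2 * d)) (Fin (2 * d)) ℝ, IsSkewHadamard H) :
    ∃ F : Matrix (Fin d) (Fin (2 * d)) ℂ, IsETF F := by
  obtain ⟨H, ⟨⟨hpm, hHH⟩, hskew⟩⟩ := h
  have hd1 : (1:ℝ) ≤ (d:ℝ) := by exact_mod_cast hd
  -- basic real facts
  have hdiag : ∀ i, H i i = 1 := by
    intro i
    have := congrFun (congrFun hskew i) i
    simp only [Matrix.transpose_apply, Matrix.neg_apply, Matrix.sub_apply,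
      Matrix.one_apply_eq] at this
    linarith
  have hCskew : ∀ i j, (H - 1) j i = -(H - 1) i j := by
    intro i j
    have := congrFun (congrFun hskew i) j
    simpa [Matrix.transpose_apply, Matrix.neg_apply] using this
  have hsum : Hᵀ + H = 1 + 1 := by
    have h' := hskew
    rw [Matrix.transpose_sub, Matrix.transpose_one, neg_sub] at h'
    exact sub_eq_sub_iff_add_eq_add.mp h'
  have hCC : (H - 1)ᵀ * (H - 1) = ((2*(d:ℝ)) - 1) • 1 := by
    have hexp : (H - 1)ᵀ * (H - 1) = Hᵀ * H - (Hᵀ + H) + 1 := by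
      rw [Matrix.transpose_sub, Matrix.transpose_one]; noncomm_ring
    rw [hexp, hsum, hHH]
    ext i j
    simp only [Matrix.add_apply, Matrix.sub_apply, Matrix.smul_apply, Matrix.one_apply,
      Fintype.card_fin, smul_eq_mul]
    split_ifs <;> push_cast <;> ring
  have hC2 : (H - 1) * (H - 1) = (-(2*(d:ℝ) - 1)) • 1 := by
    have h1 : (H - 1) = -((H - 1)ᵀ) := by rw [hskew, neg_neg]
    calc (H - 1) * (H - 1) = -((H - 1)ᵀ) * (H - 1) := by nth_rewrite 1 [h1]; rfl
      _ = -((H - 1)ᵀ * (H - 1)) := by rw [Matrix.neg_mul]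
      _ = (-(2*(d:ℝ) - 1)) • 1 := by rw [hCC, neg_smul]
  -- move to ℂ
  set Mc : Matrix (Fin (2*d)) (Fin (2*d)) ℂ := (H - 1).map Complex.ofRealHom with hMcdef
  have hMc2 : Mc * Mc = ((-(2*(d:ℝ) - 1) : ℝ) : ℂ) • 1 := by
    rw [hMcdef, ← Matrix.map_mul, hC2]
    ext i j
    by_cases hij : i = j <;>
      simp [Matrix.map_apply, Matrix.smul_apply, Matrix.one_apply, hij]
  set μ : ℝ := etfMu d (2*d) with hμdef
  have hss : 2*(d:ℝ) - 1 > 0 := by linarith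
  have hd0 : (0:ℝ) < d := by exact_mod_cast hd
  have harg : (((2*d : ℕ) : ℝ) - d) / (d * (((2*d : ℕ) : ℝ) - 1)) = 1 / (2*(d:ℝ) - 1) := by
    push_cast
    rw [show (2:ℝ)*d - d = d by ring]
    rw [div_eq_div_iff (by positivity) (by positivity)]
    ring
  have hμsq : μ^2 * (2*(d:ℝ) - 1) = 1 := by
    rw [hμdef, etfMu, harg, Real.sq_sqrt (by positivity), one_div]
    exact inv_mul_cancel₀ (ne_of_gt hss)
  have hμ0 : 0 ≤ μ := Real.sqrt_nonneg _
  set c : ℂ := (μ : ℂ) * Complex.I with hcdef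
  set G : Matrix (Fin (2*d)) (Fin (2*d)) ℂ := 1 + c • Mc with hGdef
  have hGapp : ∀ i j, G i j = (if i = j then 1 else 0) + c * ((H - 1) i j : ℝ) := by
    intro i j
    simp [hGdef, Matrix.add_apply, Matrix.smul_apply, Matrix.one_apply, hMcdef,
      Matrix.map_apply]
  have hGherm : G.IsHermitian := by
    rw [Matrix.IsHermitian]
    ext i j
    rw [Matrix.conjTranspose_apply, hGapp j i, hGapp i j, hCskew i j]
    push_cast
    simp only [star_add, star_mul', Complex.star_def, apply_ite (starRingEnd ℂ), _root_.map_one,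
      _root_.map_zero, map_neg, _root_.map_mul, Complex.conj_ofReal, Complex.conj_I, hcdef]
    by_cases hij : i = j
    · simp only [hij, if_true]; ring
    · simp only [if_neg hij, if_neg (Ne.symm hij)]; ring
  have hscalar : c * c * ((-(2*(d:ℝ) - 1) : ℝ) : ℂ) = 1 := by
    rw [hcdef]
    have h1 : ((μ:ℂ) * Complex.I) * ((μ:ℂ) * Complex.I) = -((μ:ℂ)*(μ:ℂ)) := by
      have := Complex.I_mul_I
      linear_combination (μ:ℂ)*(μ:ℂ) * this
    rw [h1]
    rw [show ((-(2*(d:ℝ) - 1) : ℝ) : ℂ) = -(((2*(d:ℝ) - 1) : ℝ) : ℂ) by push_cast; ring]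
    rw [neg_mul_neg, ← Complex.ofReal_mul, ← Complex.ofReal_mul]
    rw [show μ * μ * (2*(d:ℝ) - 1) = μ^2 * (2*(d:ℝ) - 1) by ring, hμsq]
    exact Complex.ofReal_one
  have hMM : (c • Mc) * (c • Mc) = (1 : Matrix (Fin (2*d)) (Fin (2*d)) ℂ) := by
    rw [Matrix.smul_mul, Matrix.mul_smul, smul_smul, hMc2, smul_smul, hscalar, one_smul]
  have hG2 : G * G = (2:ℂ) • G := by
    rw [hGdef, add_mul, mul_add, mul_add, hMM]
    simp only [Matrix.one_mul, Matrix.mul_one]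
    rw [smul_add, two_smul, two_smul]
    abel
  have htrace : G.trace = ((2 * d : ℕ) : ℂ) := by
    rw [Matrix.trace]
    have : ∀ i, G.diag i = 1 := by
      intro i
      rw [Matrix.diag_apply, hGapp i i]
      simp [hdiag i]
    rw [Finset.sum_congr rfl fun i _ => this i]
    simp
  obtain ⟨F, hFG, hFFT⟩ := exists_factor_aux G hGherm hG2 htrace
  have hdc : ((d:ℕ) : ℂ) ≠ 0 := Nat.cast_ne_zero.mpr hd.ne'
  refine ⟨F, ?_, ?_, ?_⟩
  · intro j
    rw [hFG, hGapp j j]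
    simp [Matrix.sub_apply, Matrix.one_apply, hdiag j]
  · intro j k hjk
    rw [hFG, hGapp j k]
    have h1 : (H - 1) j k = H j k := by
      simp [Matrix.sub_apply, Matrix.one_apply, hjk]
    rw [if_neg hjk, h1, zero_add, hcdef]
    have habs : ‖(μ:ℂ) * Complex.I * ((H j k : ℝ) : ℂ)‖ = μ := by
      rw [norm_mul, norm_mul, Complex.norm_I, Complex.norm_real,
        Complex.norm_real]
      rcases hpm j k with hh | hh <;> rw [hh] <;> simp [Real.norm_eq_abs, abs_of_nonneg hμ0]
    rw [habs]
    simp [Fintype.card_fin, hμdef]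
  · rw [hFFT]
    have h2 : ((2 * d : ℕ) : ℂ) / ((d : ℕ) : ℂ) = 2 := by
      push_cast
      field_simp
    simp only [Fintype.card_fin, h2]
end

section
/- If H = C + I is a skew Hadamard matrix of order m with m even and m > 2, and d = m/2, then S = i·C (viewed as a complex matrix) is the signature matrix of some equiangular tight frame of size (m/2) × m; equivalently, S is self-adjoint with zero diagonal and unimodular off-diagonal entries and satisfies S² = (m−1)·I. -/
open Matrix

/-- If `H = C + I` is a skew Hadamard matrix of even order `m > 2`, then `S = i·C`
(viewed as a complex matrix) is the signature matrix of some equiangular tight frame of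
size `(m/2) × m`; equivalently, `S` is self-adjoint with zero diagonal and unimodular
off-diagonal entries, and `S² = (m−1)·I`. -/
theorem signature_of_skewHadamard (m : ℕ) (hm : 2 < m) (hme : Even m)
    (C : Matrix (Fin m) (Fin m) ℝ) (hC : Cᵀ = -C)
    (hH : IsSkewHadamard (C + 1))
    (S : Matrix (Fin m) (Fin m) ℂ)
    (hS : S = Complex.I • C.map ((↑) : ℝ → ℂ)) :
    (∃ F : Matrix (Fin (m / 2)) (Fin m) ℂ, IsSignatureOf S F) ∧
      Sᴴ = S ∧ (∀ i, S i i = 0) ∧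
      (∀ i j, i ≠ j → ‖S i j‖ = 1) ∧
      S ^ 2 = ((m : ℂ) - 1) • 1 := by
  classical
  obtain ⟨⟨hent, hHH⟩, -⟩ := hH
  obtain ⟨k0, hk0⟩ := hme
  have hk0pos : 0 < k0 := by omega
  have hm2 : m / 2 = k0 := by omega
  have hmR : (0:ℝ) < (m:ℝ) - 1 := by
    have : (2:ℝ) < (m:ℝ) := by exact_mod_cast hm
    linarith
  -- C has zero diagonal and ±1 off-diagonal entries
  have hCdiag : ∀ i, C i i = 0 := by
    intro i
    have := congrFun (congrFun hC i) i
    simp only [transpose_apply, Matrix.neg_apply] at this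
    linarith
  have hCoff : ∀ i j : Fin m, i ≠ j → C i j = 1 ∨ C i j = -1 := by
    intro i j hij
    have := hent i j
    simpa [Matrix.one_apply_ne hij] using this
  -- C * C = (1 - m) • 1
  have hCC : C * C = ((1:ℝ) - (m:ℝ)) • 1 := by
    rw [transpose_add, transpose_one, hC] at hHH
    have e : C * C = 1 - (-C + 1) * (C + 1) := by noncomm_ring
    rw [e, hHH, Fintype.card_fin, sub_smul, one_smul]
  -- basic facts about S
  have hCskew : ∀ i j : Fin m, C j i = - C i j := by
    intro i j
    have := congrFun (congrFun hC i) j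
    simpa [transpose_apply, Matrix.neg_apply] using this
  have hSH : Sᴴ = S := by
    ext i j
    simp only [hS, conjTranspose_apply, Matrix.smul_apply, map_apply, smul_eq_mul, star_mul',
      Complex.star_def, Complex.conj_I, Complex.conj_ofReal, hCskew i j]
    push_cast
    ring
  have hSdiag : ∀ i, S i i = 0 := by
    intro i
    simp [hS, hCdiag i]
  have hSabs : ∀ i j : Fin m, i ≠ j → ‖S i j‖ = 1 := by
    intro i j hij
    rcases hCoff i j hij with h | h <;>
      simp [hS, h]
  -- S * S = (m - 1) • 1
  have hmap : C.map ((↑) : ℝ → ℂ) * C.map ((↑) : ℝ → ℂ)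
      = ((1:ℂ) - (m:ℂ)) • 1 := by
    rw [show (C.map ((↑) : ℝ → ℂ)) = C.map Complex.ofRealHom from rfl,
      ← Matrix.map_mul, hCC]
    ext i j
    by_cases h : i = j <;>
      simp [Matrix.map_apply, Matrix.one_apply, h]
  have hSc : S * S = ((m:ℂ) - 1) • 1 := by
    rw [hS, smul_mul_smul_comm, hmap, smul_smul, Complex.I_mul_I]
    congr 1
    ring
  have hS2 : S ^ 2 = ((m:ℂ) - 1) • 1 := by rw [sq]; exact hSc
  -- the Welch bound parameter
  set μ : ℝ := (Real.sqrt ((m:ℝ) - 1))⁻¹ with hμdef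
  have hsq : Real.sqrt ((m:ℝ) - 1) ^ 2 = (m:ℝ) - 1 := Real.sq_sqrt hmR.le
  have hsqpos : 0 < Real.sqrt ((m:ℝ) - 1) := Real.sqrt_pos.mpr hmR
  have hμpos : 0 < μ := by positivity
  have hms : Real.sqrt ((m:ℝ) - 1) * Real.sqrt ((m:ℝ) - 1) = (m:ℝ) - 1 :=
    Real.mul_self_sqrt hmR.le
  have hμsq : μ * μ * ((m:ℝ) - 1) = 1 := by
    rw [hμdef, ← mul_inv, hms, inv_mul_cancel₀ hmR.ne']
  have hμ_eq : etfMu (Fintype.card (Fin (m/2))) (Fintype.card (Fin m)) = μ := by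
    simp only [Fintype.card_fin, etfMu]
    have hmcast : (m:ℝ) = (k0:ℝ) + k0 := by push_cast [hk0]; ring
    have harg : ((m:ℝ) - ((m/2:ℕ):ℝ)) / (((m/2:ℕ):ℝ) * ((m:ℝ) - 1)) = (((m:ℝ) - 1))⁻¹ := by
      rw [hm2]
      have hk0R : (0:ℝ) < (k0:ℝ) := by exact_mod_cast hk0pos
      have hx : (k0:ℝ) + k0 - 1 ≠ 0 := by
        have : ((k0:ℝ) + k0) - 1 = (m:ℝ) - 1 := by rw [hmcast]
        rw [this]; exact hmR.ne'
      rw [hmcast, show (k0:ℝ) + k0 - k0 = k0 by ring]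
      field_simp
    rw [harg, Real.sqrt_inv, hμdef]
  -- the Gram matrix
  set G := (1 : Matrix (Fin m) (Fin m) ℂ) + ((μ:ℝ):ℂ) • S with hGdef
  have hGher : G.IsHermitian := by
    unfold Matrix.IsHermitian
    rw [hGdef, conjTranspose_add, conjTranspose_smul, hSH, conjTranspose_one]
    simp [Complex.star_def, Complex.conj_ofReal]
  have hcμ : ((μ:ℂ)) * μ * ((m:ℂ) - 1) = 1 := by
    have : ((μ * μ * ((m:ℝ) - 1) : ℝ) : ℂ) = ((1:ℝ):ℂ) := by exact_mod_cast congrArg Complex.ofReal hμsq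
    push_cast at this
    convert this using 2
  have hGG : G * G = (2:ℂ) • G := by
    rw [hGdef, mul_add, add_mul, add_mul, one_mul, mul_one, smul_mul_smul_comm, hSc,
      smul_smul, hcμ, one_smul, one_mul]
    module
  -- spectral decomposition
  set U : Matrix (Fin m) (Fin m) ℂ := (hGher.eigenvectorUnitary : Matrix (Fin m) (Fin m) ℂ)
    with hUdef
  set eig : Fin m → ℝ := hGher.eigenvalues with heigdef
  set D : Matrix (Fin m) (Fin m) ℂ := diagonal (fun i => ((eig i : ℝ) : ℂ)) with hDdef
  have hspec : G = U * D * Uᴴ := by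
    simpa [hUdef, hDdef, Matrix.star_eq_conjTranspose, Function.comp_def] using
      hGher.spectral_theorem
  have hUU : Uᴴ * U = 1 := by
    have h2 := hGher.eigenvectorUnitary.2
    rw [Matrix.mem_unitaryGroup_iff'] at h2
    rw [hUdef, ← Matrix.star_eq_conjTranspose]
    exact h2
  have hUUt : U * Uᴴ = 1 := by
    have h2 := hGher.eigenvectorUnitary.2
    rw [Matrix.mem_unitaryGroup_iff] at h2
    rw [hUdef, ← Matrix.star_eq_conjTranspose]
    exact h2
  have cancel : ∀ A B : Matrix (Fin m) (Fin m) ℂ, U * A * Uᴴ = U * B * Uᴴ → A = B := by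
    intro A B hAB
    have h1 : ∀ X : Matrix (Fin m) (Fin m) ℂ, Uᴴ * (U * X * Uᴴ) * U = X := by
      intro X
      rw [show Uᴴ * (U * X * Uᴴ) * U = (Uᴴ * U) * X * (Uᴴ * U) by noncomm_ring, hUU,
        Matrix.one_mul, Matrix.mul_one]
    calc A = Uᴴ * (U * A * Uᴴ) * U := (h1 A).symm
    _ = Uᴴ * (U * B * Uᴴ) * U := by rw [hAB]
    _ = B := h1 B
  have hDD : D * D = (2:ℂ) • D := by
    apply cancel
    have h := hGG
    rw [hspec] at h
    calc U * (D * D) * Uᴴ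
        = (U * D * Uᴴ) * (U * D * Uᴴ) := by
          rw [show (U * D * Uᴴ) * (U * D * Uᴴ) = U * (D * ((Uᴴ * U) * (D * Uᴴ))) by
            noncomm_ring, hUU, Matrix.one_mul]
          noncomm_ring
      _ = (2:ℂ) • (U * D * Uᴴ) := h
      _ = U * ((2:ℂ) • D) * Uᴴ := by
          rw [Matrix.mul_smul, Matrix.smul_mul]
  have heig : ∀ i, eig i = 0 ∨ eig i = 2 := by
    intro i
    have h := congrFun (congrFun hDD i) i
    rw [hDdef] at h
    simp only [diagonal_mul_diagonal, Matrix.smul_apply, diagonal_apply_eq,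
      smul_eq_mul] at h
    have hr : eig i * eig i = 2 * eig i := by exact_mod_cast h
    have : eig i * (eig i - 2) = 0 := by linear_combination hr
    rcases mul_eq_zero.mp this with h' | h'
    · exact Or.inl h'
    · exact Or.inr (by linarith)
  -- trace
  have htrace : ∑ i, eig i = (m:ℝ) := by
    have h1 : G.trace = (m:ℂ) := by
      have hStr : S.trace = 0 := by
        rw [Matrix.trace]
        simp [Matrix.diag, hSdiag]
      rw [hGdef, trace_add, trace_one, trace_smul, hStr]
      simp [Fintype.card_fin]
    have h2 : G.trace = ((∑ i, eig i : ℝ) : ℂ) := by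
      rw [hspec, Matrix.trace_mul_cycle, hUU, Matrix.one_mul, hDdef,
        trace_diagonal]
      push_cast
      rfl
    have := h2.symm.trans h1
    exact_mod_cast this
  -- counting the eigenvalue-2 indices
  set T : Finset (Fin m) := Finset.univ.filter (fun i => eig i = 2) with hTdef
  have heigT : ∀ i, i ∉ T → eig i = 0 := by
    intro i hi
    rcases heig i with h | h
    · exact h
    · exact absurd (by rw [hTdef]; simp [h]) hi
  have hTcard : T.card = m / 2 := by
    have hsplit : ∑ i ∈ T, eig i + ∑ i ∈ Tᶜ, eig i = ∑ i, eig i :=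
      Finset.sum_add_sum_compl T _
    have hT2 : ∑ i ∈ T, eig i = 2 * T.card := by
      rw [Finset.sum_congr rfl (fun i hi => (Finset.mem_filter.mp hi).2)]
      simp [mul_comm, hTdef]
    have hTc : ∑ i ∈ Tᶜ, eig i = 0 :=
      Finset.sum_eq_zero fun i hi => heigT i (Finset.mem_compl.mp hi)
    have h2 : 2 * (T.card : ℝ) = (m : ℝ) := by
      rw [← htrace, ← hsplit, hT2, hTc]; ring
    have hnat : 2 * T.card = m := by exact_mod_cast h2
    omega
  have hTcard' : Fintype.card {x // x ∈ T} = m / 2 := by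
    simp [Fintype.card_coe, hTcard]
  set e : Fin (m/2) ≃ {x // x ∈ T} := (Fintype.equivFinOfCardEq hTcard').symm with hedef
  set t : Fin (m/2) → Fin m := fun k => ((e k : {x // x ∈ T}) : Fin m) with htdef
  have htinj : Function.Injective t := fun a b hab => e.injective (Subtype.ext hab)
  have hteig : ∀ k, eig (t k) = 2 := fun k => (Finset.mem_filter.mp (e k).2).2
  -- the frame
  set F : Matrix (Fin (m/2)) (Fin m) ℂ :=
    Matrix.of (fun k j => ((Real.sqrt 2 : ℝ) : ℂ) * star (U j (t k))) with hFdef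
  have h2c : ((Real.sqrt 2 : ℝ) : ℂ) * ((Real.sqrt 2 : ℝ) : ℂ) = 2 := by
    rw [← Complex.ofReal_mul, Real.mul_self_sqrt (by norm_num)]
    norm_num
  have hFH : ∀ j k, Fᴴ j k = ((Real.sqrt 2 : ℝ) : ℂ) * U j (t k) := by
    intro j k
    rw [conjTranspose_apply, hFdef, Matrix.of_apply, star_mul', star_star,
      Complex.star_def, Complex.conj_ofReal, mul_comm]
  have hFF : Fᴴ * F = G := by
    ext j j'
    rw [hspec, Matrix.mul_apply]
    have hL : ∀ k, Fᴴ j k * F k j' = 2 * (U j (t k) * star (U j' (t k))) := by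
      intro k
      rw [hFH, hFdef, Matrix.of_apply]
      calc ((Real.sqrt 2:ℝ):ℂ) * U j (t k) * (((Real.sqrt 2:ℝ):ℂ) * star (U j' (t k)))
          = (((Real.sqrt 2:ℝ):ℂ) * ((Real.sqrt 2:ℝ):ℂ)) * (U j (t k) * star (U j' (t k))) := by
            ring
        _ = 2 * (U j (t k) * star (U j' (t k))) := by rw [h2c]
    rw [Finset.sum_congr rfl (fun k _ => hL k)]
    have hR : (U * D * Uᴴ) j j' = ∑ i ∈ T, 2 * (U j i * star (U j' i)) := by
      rw [Matrix.mul_apply]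
      have hterm : ∀ i, (U * D) j i * Uᴴ i j' =
          (if eig i = 2 then 2 * (U j i * star (U j' i)) else 0) := by
        intro i
        rw [hDdef, Matrix.mul_diagonal, Matrix.conjTranspose_apply]
        by_cases hi : eig i = 2
        · rw [if_pos hi, hi]
          push_cast
          ring
        · have h0 : eig i = 0 := by
            rcases heig i with h | h
            · exact h
            · exact absurd h hi
          rw [if_neg hi, h0]
          simp
      rw [Finset.sum_congr rfl (fun i _ => hterm i), ← Finset.sum_filter, hTdef]
    rw [hR, ← Finset.sum_coe_sort T (fun i => 2 * (U j i * star (U j' i)))]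
    exact Fintype.sum_equiv e
      (fun k => 2 * (U j (t k) * star (U j' (t k))))
      (fun x => 2 * (U j (x : Fin m) * star (U j' (x : Fin m))))
      (fun k => rfl)
  have hk0C : (k0 : ℂ) ≠ 0 := by exact_mod_cast hk0pos.ne'
  have hcard2 : ((Fintype.card (Fin m) : ℂ) / (Fintype.card (Fin (m/2)) : ℂ)) = 2 := by
    rw [Fintype.card_fin, Fintype.card_fin, hm2, hk0]
    push_cast
    rw [div_eq_iff hk0C]
    ring
  have hFFH : F * Fᴴ =
      ((Fintype.card (Fin m) : ℂ) / (Fintype.card (Fin (m/2)) : ℂ)) • 1 := by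
    rw [hcard2]
    ext k k'
    rw [Matrix.mul_apply]
    have hL : ∀ j, F k j * Fᴴ j k' = 2 * (Uᴴ (t k) j * U j (t k')) := by
      intro j
      rw [hFH, hFdef, Matrix.of_apply, Matrix.conjTranspose_apply]
      calc ((Real.sqrt 2:ℝ):ℂ) * star (U j (t k)) * (((Real.sqrt 2:ℝ):ℂ) * U j (t k'))
          = (((Real.sqrt 2:ℝ):ℂ) * ((Real.sqrt 2:ℝ):ℂ)) * (star (U j (t k)) * U j (t k')) := by
            ring
        _ = 2 * (star (U j (t k)) * U j (t k')) := by rw [h2c]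
    rw [Finset.sum_congr rfl (fun j _ => hL j), ← Finset.mul_sum, ← Matrix.mul_apply, hUU]
    by_cases hkk : k = k'
    · subst hkk
      simp [Matrix.one_apply, Matrix.smul_apply]
    · have : t k ≠ t k' := fun h => hkk (htinj h)
      simp [Matrix.one_apply_ne this, Matrix.one_apply_ne hkk, Matrix.smul_apply]
  -- assembling everything
  have hμC : ((μ:ℝ):ℂ) ≠ 0 := by exact_mod_cast hμpos.ne'
  have hGram : Fᴴ * F - 1 = ((μ:ℝ):ℂ) • S := by
    rw [hFF, hGdef, add_sub_cancel_left]
  refine ⟨⟨F, ⟨⟨?_, ?_, ?_⟩, ?_⟩⟩, hSH, hSdiag, hSabs, hS2⟩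
  · intro j
    rw [hFF, hGdef]
    simp [Matrix.add_apply, Matrix.one_apply, Matrix.smul_apply, hSdiag j]
  · intro j k hjk
    rw [hFF, hGdef, hμ_eq]
    simp only [Matrix.add_apply, Matrix.one_apply_ne hjk, Matrix.smul_apply, zero_add,
      smul_eq_mul]
    rw [norm_mul, Complex.norm_real, hSabs j k hjk, Real.norm_eq_abs, abs_of_pos hμpos, mul_one]
  · exact hFFH
  · rw [hμ_eq, hGram, smul_smul, inv_mul_cancel₀ hμC, one_smul]
end

section
/- (Signature matrix, necessity) Let F be an equiangular tight frame of size d × n with n > d ≥ 1, and let S = (1/μ)(F*F − I) be its signature matrix, where μ = √((n−d)/(d(n−1))). Then S = S*, every diagonal entry of S is zero, every off-diagonal entry of S has modulus 1, and S² = c·S + (n−1)·I, where c = (n−2d)·√((n−1)/(d(n−d))). -/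
open Matrix

/-- **Signature matrix, necessity.** If `F` is an ETF of size `d × n` with `n > d ≥ 1` and
`S = (1/μ)(Fᴴ F − I)` is its signature matrix, then `S = Sᴴ`, `S` has zero diagonal and
unimodular off-diagonal entries, and `S² = c·S + (n−1)·I` where
`c = (n−2d)·√((n−1)/(d(n−d)))`. -/
theorem signature_necessity (d n : ℕ) (hd : 1 ≤ d) (hdn : d < n)
    (F : Matrix (Fin d) (Fin n) ℂ) (S : Matrix (Fin n) (Fin n) ℂ)
    (hS : IsSignatureOf S F) :
    Sᴴ = S ∧ (∀ i, S i i = 0) ∧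
      (∀ i j, i ≠ j → ‖S i j‖ = 1) ∧
      S ^ 2 = ((((n : ℝ) - 2 * d) * Real.sqrt (((n : ℝ) - 1) / (d * ((n : ℝ) - d))) : ℝ) : ℂ) • S
        + ((n : ℂ) - 1) • 1 := by
  obtain ⟨⟨h1, h2, h3⟩, hSdef⟩ := hS
  simp only [etfMu, Fintype.card_fin] at h2 h3 hSdef
  set μ : ℝ := Real.sqrt (((n : ℝ) - d) / (d * ((n : ℝ) - 1))) with hμdef
  set c : ℝ := ((n : ℝ) - 2 * d) * Real.sqrt (((n : ℝ) - 1) / (d * ((n : ℝ) - d))) with hcdef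
  have hd0 : (0:ℝ) < d := by exact_mod_cast hd.trans_lt' (by norm_num)
  have hnd : (d:ℝ) < n := by exact_mod_cast hdn
  have hn1 : (1:ℝ) < n := by
    have : (1:ℝ) ≤ d := by exact_mod_cast hd
    linarith
  have hμpos : 0 < μ := by
    rw [hμdef]
    apply Real.sqrt_pos.2
    apply div_pos <;> nlinarith
  have hμμ : μ * μ = ((n : ℝ) - d) / (d * ((n : ℝ) - 1)) := by
    rw [hμdef]
    exact Real.mul_self_sqrt (div_nonneg (by linarith) (by nlinarith))
  have hcμ : c * μ = ((n:ℝ) - 2 * d) / d := by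
    have hne1 : (n:ℝ) - 1 ≠ 0 := by linarith
    have hnen : (n:ℝ) - d ≠ 0 := by linarith
    rw [hcdef, hμdef, mul_assoc, ← Real.sqrt_mul (div_nonneg (by linarith) (by nlinarith))]
    rw [show ((n : ℝ) - 1) / (d * ((n : ℝ) - d)) * (((n : ℝ) - d) / (d * ((n : ℝ) - 1))) = (1/d)^2 by
      field_simp]
    rw [Real.sqrt_sq (by positivity)]
    field_simp
  -- complex versions
  have hmne : ((μ:ℝ):ℂ) ≠ 0 := by exact_mod_cast hμpos.ne'
  have A : ((μ:ℝ):ℂ) * μ = ((n:ℂ) - d) / (d * ((n:ℂ) - 1)) := by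
    have := congrArg (Complex.ofReal) hμμ
    push_cast at this
    exact this
  have B : ((c:ℝ):ℂ) * μ = ((n:ℂ) - 2 * d) / d := by
    have := congrArg (Complex.ofReal) hcμ
    push_cast at this
    exact this
  set G : Matrix (Fin n) (Fin n) ℂ := Fᴴ * F with hGdef
  have hGh : Gᴴ = G := by
    rw [hGdef, conjTranspose_mul, conjTranspose_conjTranspose]
  have hG2 : G * G = ((n:ℂ)/(d:ℂ)) • G := by
    rw [hGdef, show Fᴴ * F * (Fᴴ * F) = Fᴴ * (F * Fᴴ) * F by
      simp only [Matrix.mul_assoc]]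
    rw [h3, Matrix.mul_smul, Matrix.smul_mul, Matrix.mul_one]
  refine ⟨?_, ?_, ?_, ?_⟩
  · rw [hSdef, conjTranspose_smul, conjTranspose_sub, hGh, conjTranspose_one]
    congr 1
    simp [Complex.conj_ofReal]
  · intro i
    rw [hSdef]
    simp [Matrix.sub_apply, h1 i]
  · intro i j hij
    rw [hSdef]
    simp only [Matrix.smul_apply, Matrix.sub_apply, Matrix.one_apply_ne hij, sub_zero,
      smul_eq_mul, norm_mul, norm_inv, Complex.norm_real, Real.norm_eq_abs, abs_of_pos hμpos, h2 i j hij]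
    field_simp
  · have key : S ^ 2 = (((μ:ℝ):ℂ)⁻¹ * ((μ:ℝ):ℂ)⁻¹) • (G * G - G - G + 1) := by
      rw [sq, hSdef, Matrix.smul_mul, Matrix.mul_smul, smul_smul]
      congr 1
      noncomm_ring
    rw [key, hG2]
    rw [show (((n : ℂ)/d) • G - G - G + 1 : Matrix (Fin n) (Fin n) ℂ)
        = ((n:ℂ)/d - 2) • G + 1 by
      rw [sub_smul]; module]
    have hdc : (d:ℂ) ≠ 0 := by exact_mod_cast hd0.ne'
    have hn1c : (n:ℂ) - 1 ≠ 0 := by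
      intro h
      have : (n:ℂ) = 1 := by linear_combination h
      have : (n:ℝ) = 1 := by exact_mod_cast this
      linarith
    rw [eq_div_iff (mul_pos hd0 (by linarith : (0:ℝ) < (n:ℝ) - 1)).ne'] at hμμ
    rw [eq_div_iff hd0.ne'] at hcμ
    have A' : ((μ:ℝ):ℂ) * μ * ((d:ℂ) * ((n:ℂ) - 1)) = (n:ℂ) - d := by
      have := congrArg Complex.ofReal hμμ
      push_cast at this
      linear_combination this
    have B' : ((c:ℝ):ℂ) * μ * d = (n:ℂ) - 2 * d := by
      have := congrArg Complex.ofReal hcμ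
      push_cast at this
      linear_combination this
    have e1 : (((μ:ℝ):ℂ)⁻¹ * ((μ:ℝ):ℂ)⁻¹) * ((n:ℂ)/d - 2) = (c:ℂ) * ((μ:ℝ):ℂ)⁻¹ := by
      field_simp
      linear_combination -B'
    have e2 : (((μ:ℝ):ℂ)⁻¹ * ((μ:ℝ):ℂ)⁻¹) = ((n:ℂ) - 1) - (c:ℂ) * ((μ:ℝ):ℂ)⁻¹ := by
      field_simp
      apply mul_left_cancel₀ hdc
      linear_combination B' - A'
    rw [hSdef]
    calc (((μ:ℝ):ℂ)⁻¹ * ((μ:ℝ):ℂ)⁻¹) • (((n:ℂ)/d - 2) • G + 1)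
        = ((((μ:ℝ):ℂ)⁻¹ * ((μ:ℝ):ℂ)⁻¹) * ((n:ℂ)/d - 2)) • G
          + (((μ:ℝ):ℂ)⁻¹ * ((μ:ℝ):ℂ)⁻¹) • 1 := by module
      _ = ((c:ℂ) * ((μ:ℝ):ℂ)⁻¹) • G + (((n:ℂ) - 1) - (c:ℂ) * ((μ:ℝ):ℂ)⁻¹) • 1 := by
          rw [e1, e2]
      _ = (c:ℂ) • ((((μ:ℝ):ℂ)⁻¹) • (G - 1)) + ((n:ℂ) - 1) • 1 := by module
end

section
/- (Signature matrix, sufficiency) Let n ≥ 2 and let S ∈ ℂ^{n×n} satisfy S = S*, have all diagonal entries zero and all off-diagonal entries of modulus 1, and suppose S² = c·S + (n−1)·I for some real number c. Then there is a unique positive integer d < n with c = (n−2d)·√((n−1)/(d(n−d))), and S is the signature matrix of some equiangular tight frame of size d × n. -/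
open Matrix

/-- **Signature matrix, sufficiency.** Let `n ≥ 2` and let `S ∈ ℂ^{n×n}` be self-adjoint
with zero diagonal and unimodular off-diagonal entries, satisfying `S² = c·S + (n−1)·I`
for some real `c`. Then there is a unique positive integer `d < n` with
`c = (n−2d)·√((n−1)/(d(n−d)))`, and `S` is the signature matrix of some ETF of size
`d × n`. -/
theorem signature_sufficiency (n : ℕ) (hn : 2 ≤ n) (c : ℝ)
    (S : Matrix (Fin n) (Fin n) ℂ)
    (hherm : Sᴴ = S) (hdiag : ∀ i, S i i = 0)
    (hoff : ∀ i j, i ≠ j → ‖S i j‖ = 1)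
    (hS2 : S ^ 2 = (c : ℂ) • S + ((n : ℂ) - 1) • 1) :
    ∃ d : ℕ, (0 < d ∧ d < n ∧
        c = ((n : ℝ) - 2 * d) * Real.sqrt (((n : ℝ) - 1) / (d * ((n : ℝ) - d)))) ∧
      (∀ d' : ℕ, 0 < d' → d' < n →
        c = ((n : ℝ) - 2 * d') * Real.sqrt (((n : ℝ) - 1) / (d' * ((n : ℝ) - d'))) →
        d' = d) ∧
      ∃ F : Matrix (Fin d) (Fin n) ℂ, IsSignatureOf S F := by
  have hn1 : (1:ℝ) ≤ (n:ℝ) - 1 := by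
    have : (2:ℝ) ≤ n := by exact_mod_cast hn
    linarith
  have hnpos : (0:ℝ) < n := by linarith
  set Δ : ℝ := Real.sqrt (c^2 + 4*((n:ℝ)-1)) with hΔdef
  have hdisc : (0:ℝ) ≤ c^2 + 4*((n:ℝ)-1) := by nlinarith [sq_nonneg c]
  have hΔsq : Δ^2 = c^2 + 4*((n:ℝ)-1) := Real.sq_sqrt hdisc
  have hΔpos : 0 < Δ := Real.sqrt_pos.mpr (by nlinarith [sq_nonneg c])
  set l : ℝ := (c - Δ)/2 with hldef
  -- key matrix identity
  have hkey : (S - (l:ℂ) • 1) * (S - (l:ℂ) • 1) = (Δ:ℂ) • (S - (l:ℂ) • 1) := by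
    have e1 : (c:ℝ) - 2*l = Δ := by rw [hldef]; ring
    have e2 : ((n:ℝ)-1) + l^2 = -l*Δ := by rw [hldef]; linear_combination (-1/4 : ℝ) * hΔsq
    have e1' : (c:ℂ) - 2*l = Δ := by exact_mod_cast congrArg Complex.ofReal e1
    have e2' : ((n:ℂ)-1) + (l:ℂ)^2 = -l*Δ := by exact_mod_cast congrArg Complex.ofReal e2
    have expand : (S - (l:ℂ) • 1) * (S - (l:ℂ) • 1)
        = S^2 - (2*l:ℂ) • S + ((l:ℂ)^2) • 1 := by
      simp only [mul_sub, sub_mul, smul_mul_assoc, mul_smul_comm, smul_smul,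
        Matrix.one_mul, Matrix.mul_one, pow_two]
      module
    rw [expand, hS2]
    match_scalars
    · linear_combination e1'
    · linear_combination e2'
  have hΔC : (Δ:ℂ) ≠ 0 := by exact_mod_cast hΔpos.ne'
  set P : Matrix (Fin n) (Fin n) ℂ := ((Δ:ℂ))⁻¹ • (S - (l:ℂ) • 1) with hPdef
  have hPP : P * P = P := by
    rw [hPdef, Matrix.smul_mul, Matrix.mul_smul, smul_smul, hkey, smul_smul]
    congr 1
    field_simp
  have hPherm : P.IsHermitian := by
    rw [Matrix.IsHermitian, hPdef, conjTranspose_smul, conjTranspose_sub,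
      conjTranspose_smul, conjTranspose_one, hherm]
    simp [Complex.star_def, Complex.conj_ofReal, ← Complex.ofReal_inv]
  set U : Matrix (Fin n) (Fin n) ℂ := (hPherm.eigenvectorUnitary : Matrix (Fin n) (Fin n) ℂ) with hUdef
  set e : Fin n → ℝ := hPherm.eigenvalues with hedef
  have hspec : P = U * diagonal (Complex.ofReal ∘ e) * star U := hPherm.spectral_theorem
  have hUU : star U * U = 1 := by
    simpa [hUdef] using (Matrix.mem_unitaryGroup_iff').mp (hPherm.eigenvectorUnitary).2
  have hUU' : U * star U = 1 := by
    simpa [hUdef] using (Matrix.mem_unitaryGroup_iff).mp (hPherm.eigenvectorUnitary).2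
  -- eigenvalues are 0 or 1
  have hDD : ∀ i, e i = 0 ∨ e i = 1 := by
    have cancel : ∀ X : Matrix (Fin n) (Fin n) ℂ, star U * (U * X * star U) * U = X := by
      intro X
      calc star U * (U * X * star U) * U = (star U * U) * X * (star U * U) := by
            noncomm_ring
        _ = X := by rw [hUU]; simp
    have h2 : diagonal (Complex.ofReal ∘ e) * diagonal (Complex.ofReal ∘ e)
        = diagonal (Complex.ofReal ∘ e) := by
      have h := hPP
      rw [hspec] at h
      have h' := congrArg (fun M => star U * M * U) h
      calc diagonal (Complex.ofReal ∘ e) * diagonal (Complex.ofReal ∘ e)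
          = star U * ((U * diagonal (Complex.ofReal ∘ e) * star U)
              * (U * diagonal (Complex.ofReal ∘ e) * star U)) * U := by
            rw [show (U * diagonal (Complex.ofReal ∘ e) * star U)
              * (U * diagonal (Complex.ofReal ∘ e) * star U)
              = U * (diagonal (Complex.ofReal ∘ e) * (star U * U) * diagonal (Complex.ofReal ∘ e)) * star U by noncomm_ring, hUU]
            rw [cancel]
            simp
        _ = star U * (U * diagonal (Complex.ofReal ∘ e) * star U) * U := by rw [h']
        _ = diagonal (Complex.ofReal ∘ e) := cancel _
    intro i
    rw [diagonal_mul_diagonal] at h2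
    have h3 := congrFun (Matrix.diagonal_injective h2) i
    have hre : (e i : ℂ) * e i = e i := h3
    have he2 : e i * e i = e i := by exact_mod_cast hre
    rcases eq_or_ne (e i) 0 with h|h
    · exact Or.inl h
    · refine Or.inr (mul_left_cancel₀ h ?_)
      rw [mul_one, he2]
  set d : ℕ := Fintype.card {i // e i ≠ 0} with hddef
  have htrP : P.trace = ∑ i, (e i : ℂ) := by
    rw [hspec, Matrix.trace_mul_cycle, hUU, Matrix.one_mul, Matrix.trace_diagonal]
    rfl
  have htrS : S.trace = 0 := by
    simp [Matrix.trace, Matrix.diag, hdiag]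
  have htrP2 : P.trace = (Δ:ℂ)⁻¹ * (0 - l * n) := by
    rw [hPdef, Matrix.trace_smul, Matrix.trace_sub, Matrix.trace_smul, htrS,
      Matrix.trace_one]
    simp [Fintype.card_fin]
  have hsum : ∑ i, e i = (d:ℝ) := by
    have : ∀ i, e i = (if e i ≠ 0 then (1:ℝ) else 0) := by
      intro i
      rcases hDD i with h|h <;> simp [h]
    calc ∑ i, e i = ∑ i, (if e i ≠ 0 then (1:ℝ) else 0) :=
          Finset.sum_congr rfl fun i _ => this i
      _ = ((Finset.univ.filter fun i => e i ≠ 0).card : ℝ) := by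
          rw [Finset.sum_boole]
      _ = (d:ℝ) := by rw [hddef, Fintype.card_subtype]
  have hdl : (n:ℝ) * l = -(d:ℝ) * Δ := by
    have h1 : ((Δ:ℝ):ℂ)⁻¹ * (0 - l * n) = ((d:ℝ):ℂ) := by
      rw [← htrP2, htrP]
      push_cast
      rw [← Complex.ofReal_sum]
      exact_mod_cast congrArg Complex.ofReal hsum
    have h2 : (Δ:ℝ)⁻¹ * (0 - l * n) = (d:ℝ) := by
      exact_mod_cast h1
    field_simp at h2
    linarith [h2]
  -- distinct indices
  have h0n : 0 < n := by omega
  have h1n : 1 < n := by omega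
  set i0 : Fin n := ⟨0, h0n⟩
  set i1 : Fin n := ⟨1, h1n⟩
  have hne01 : i0 ≠ i1 := by
    simp [i0, i1, Fin.ext_iff]
  have hS01 : ‖S i0 i1‖ = 1 := hoff _ _ hne01
  have hdpos : 0 < d := by
    rcases Nat.eq_zero_or_pos d with h0|h
    · exfalso
      have hempty : IsEmpty {i // e i ≠ 0} :=
        Fintype.card_eq_zero_iff.mp (hddef.symm.trans h0)
      have hall : ∀ i, e i = 0 := by
        intro i
        by_contra hc'
        exact hempty.elim ⟨i, hc'⟩
      have hD0 : diagonal (Complex.ofReal ∘ e) = 0 := by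
        ext i j
        rcases eq_or_ne i j with rfl|hij
        · simp [diagonal_apply_eq, hall]
        · simp [diagonal_apply_ne _ hij]
      have hP0 : P = 0 := by rw [hspec, hD0]; simp
      have hSl : S = (l:ℂ) • 1 := by
        have := hP0
        rw [hPdef, smul_eq_zero] at this
        rcases this with h|h
        · exact absurd h (inv_ne_zero hΔC)
        · rw [sub_eq_zero] at h; exact h
      have : S i0 i1 = 0 := by
        rw [hSl]
        simp [Matrix.one_apply_ne hne01]
      rw [this] at hS01
      simp at hS01
    · exact h
  have hdle : d ≤ n := by
    calc d ≤ Fintype.card (Fin n) := Fintype.card_subtype_le _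
      _ = n := Fintype.card_fin n
  have hdlt : d < n := by
    rcases lt_or_eq_of_le hdle with h|h
    · exact h
    · exfalso
      have hfil : (Finset.univ.filter fun i => e i ≠ 0) = Finset.univ := by
        apply Finset.eq_univ_of_card
        rw [← Fintype.card_subtype, ← hddef, h, Fintype.card_fin]
      have hall : ∀ i, e i = 1 := by
        intro i
        have : e i ≠ 0 := by
          have := Finset.mem_filter.mp (hfil ▸ Finset.mem_univ i)
          exact this.2
        rcases hDD i with h'|h'
        · exact absurd h' this
        · exact h'
      have hD1 : diagonal (Complex.ofReal ∘ e) = 1 := by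
        ext i j
        rcases eq_or_ne i j with rfl|hij
        · simp [hall]
        · simp [diagonal_apply_ne _ hij, Matrix.one_apply_ne hij]
      have hP1 : P = 1 := by rw [hspec, hD1, Matrix.mul_one, hUU']
      have h2 : S - (l:ℂ) • 1 = (Δ:ℂ) • 1 := by
        have h3 := congrArg (fun M => (Δ:ℂ) • M) hP1
        simpa [hPdef, smul_smul, mul_inv_cancel₀ hΔC] using h3
      have hSl : S = ((l:ℂ) + Δ) • 1 := by
        rw [sub_eq_iff_eq_add] at h2
        rw [h2, add_smul]
        abel
      have : S i0 i1 = 0 := by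
        rw [hSl]
        simp [Matrix.one_apply_ne hne01]
      rw [this] at hS01
      simp at hS01
  -- real scalar algebra
  have hdr : (0:ℝ) < (d:ℝ) := by exact_mod_cast hdpos
  have hndr : (0:ℝ) < (n:ℝ) - (d:ℝ) := by
    have : (d:ℝ) < (n:ℝ) := by exact_mod_cast hdlt
    linarith
  have hnc : (n:ℝ) * c = ((n:ℝ) - 2*d) * Δ := by
    rw [hldef] at hdl
    linear_combination 2 * hdl
  set s : ℝ := Real.sqrt (((n:ℝ)-1) / (d * ((n:ℝ)-d))) with hsdef
  have hssq : s^2 = ((n:ℝ)-1) / (d * ((n:ℝ)-d)) :=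
    Real.sq_sqrt (by positivity)
  have hspos : 0 < s := Real.sqrt_pos.mpr (by positivity)
  have hssq' : s^2 * ((d:ℝ) * ((n:ℝ)-d)) = (n:ℝ)-1 := by
    rw [hssq]; field_simp
  have h4 : 4*(d:ℝ)*((n:ℝ)-d)*Δ^2 = 4*(n:ℝ)^2*((n:ℝ)-1) := by
    linear_combination ((n:ℝ)*c + ((n:ℝ)-2*d)*Δ) * hnc + (n:ℝ)^2 * hΔsq
  have hΔ2 : Δ^2 = ((n:ℝ)*s)^2 := by
    apply mul_right_cancel₀ (show ((d:ℝ)*((n:ℝ)-d)) ≠ 0 by positivity)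
    linear_combination (1/4 : ℝ) * h4 - (n:ℝ)^2 * hssq'
  have hΔns : Δ = (n:ℝ) * s := by
    rw [← Real.sqrt_sq hΔpos.le, hΔ2, Real.sqrt_sq (by positivity)]
  have hc : c = ((n:ℝ) - 2*d) * s := by
    have h := hnc
    rw [hΔns] at h
    apply mul_left_cancel₀ (show (n:ℝ) ≠ 0 from hnpos.ne')
    linear_combination h
  -- uniqueness
  have huniq : ∀ d' : ℕ, 0 < d' → d' < n →
      c = ((n:ℝ) - 2*d') * Real.sqrt (((n:ℝ)-1) / (d' * ((n:ℝ)-d'))) → d' = d := by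
    intro d' h1 h2 h3
    have hdr' : (0:ℝ) < (d':ℝ) := by exact_mod_cast h1
    have hndr' : (0:ℝ) < (n:ℝ) - (d':ℝ) := by
      have : (d':ℝ) < (n:ℝ) := by exact_mod_cast h2
      linarith
    set s' : ℝ := Real.sqrt (((n:ℝ)-1) / (d' * ((n:ℝ)-d'))) with hs'def
    have hs'pos : 0 < s' := Real.sqrt_pos.mpr (by positivity)
    have hs'sq : s'^2 * ((d':ℝ) * ((n:ℝ)-d')) = (n:ℝ)-1 := by
      rw [Real.sq_sqrt (by positivity : (0:ℝ) ≤ ((n:ℝ)-1) / (d' * ((n:ℝ)-d')))]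
      field_simp
    have hΔ2' : Δ^2 = ((n:ℝ)*s')^2 := by
      linear_combination hΔsq + (c + ((n:ℝ)-2*d')*s') * h3 - 4 * hs'sq
    have hΔns' : Δ = (n:ℝ) * s' := by
      rw [← Real.sqrt_sq hΔpos.le, hΔ2', Real.sqrt_sq (by positivity)]
    -- l = -d' * s'
    have hl' : l = -(d':ℝ) * s' := by
      rw [hldef, h3, hΔns']
      ring
    have : (n:ℝ) * (-(d':ℝ) * s') = -(d:ℝ) * ((n:ℝ) * s') := by
      rw [← hl', ← hΔns']
      exact hdl
    have hds : (d':ℝ) = (d:ℝ) :=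
      mul_right_cancel₀ (show (n:ℝ)*s' ≠ 0 by positivity)
        (by linear_combination -this)
    exact_mod_cast hds
  -- the Welch parameter
  have hn1' : (0:ℝ) < (n:ℝ) - 1 := by linarith
  have hd0 : (d:ℝ) ≠ 0 := hdr.ne'
  have hnd0 : (n:ℝ) - (d:ℝ) ≠ 0 := hndr.ne'
  have hn10 : (n:ℝ) - 1 ≠ 0 := hn1'.ne'
  set μ : ℝ := etfMu d n with hμdef
  have hμ : μ = Real.sqrt (((n:ℝ) - d) / (d * ((n:ℝ) - 1))) := rfl
  have hμpos : 0 < μ := by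
    rw [hμ]
    exact Real.sqrt_pos.mpr (div_pos hndr (mul_pos hdr hn1'))
  have hμs : μ * s = 1 / (d:ℝ) := by
    rw [hμ, hsdef, ← Real.sqrt_mul (le_of_lt (div_pos hndr (mul_pos hdr hn1')))]
    rw [show ((n:ℝ)-d)/((d:ℝ)*((n:ℝ)-1)) * (((n:ℝ)-1)/((d:ℝ)*((n:ℝ)-(d:ℝ)))) = ((1:ℝ)/d)^2 by
      field_simp]
    exact Real.sqrt_sq (by positivity)
  have hμsd : μ * s * (d:ℝ) = 1 := by rw [hμs]; field_simp
  have rA : ((n:ℝ)/d) * Δ⁻¹ = μ := by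
    rw [hΔns]
    field_simp
    linear_combination (-1:ℝ) * hμsd
  have rB : ((n:ℝ)/d) * (Δ⁻¹ * l) = -1 := by
    field_simp
    linear_combination hdl
  -- the coefficient identity for G
  have hG' : (((n:ℝ)/d : ℝ):ℂ) • P = (μ:ℂ) • S + 1 := by
    rw [hPdef, smul_smul, smul_sub, smul_smul]
    have rA' : (((n:ℝ)/d : ℝ):ℂ) * ((Δ:ℂ))⁻¹ = (μ:ℂ) := by
      rw [show ((Δ:ℂ))⁻¹ = ((Δ⁻¹ : ℝ) : ℂ) by push_cast; ring]
      exact_mod_cast congrArg Complex.ofReal rA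
    have rB' : (((n:ℝ)/d : ℝ):ℂ) * (((Δ:ℂ))⁻¹ * (l:ℂ)) = -1 := by
      rw [show ((Δ:ℂ))⁻¹ = ((Δ⁻¹ : ℝ) : ℂ) by push_cast; ring]
      exact_mod_cast congrArg Complex.ofReal rB
    rw [show (((n:ℝ)/d : ℝ):ℂ) * ((Δ:ℂ))⁻¹ * (l:ℂ) = (((n:ℝ)/d : ℝ):ℂ) * (((Δ:ℂ))⁻¹ * (l:ℂ)) by ring,
      rA', rB']
    simp
  -- entries of P
  have hPentry : ∀ j k, P j k = ∑ i, (e i : ℂ) * (U j i * star (U k i)) := by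
    intro j k
    conv_lhs => rw [hspec]
    rw [Matrix.mul_apply]
    refine Finset.sum_congr rfl fun i _ => ?_
    rw [Matrix.mul_diagonal, Matrix.star_apply]
    simp [Function.comp]
    ring
  -- the index embedding
  set ε : {i // e i ≠ 0} ≃ Fin d :=
    Fintype.equivFinOfCardEq (hddef.symm) with hεdef
  set σ : Fin d → Fin n := fun r => ((ε.symm r : {i // e i ≠ 0}) : Fin n) with hσdef
  have hσinj : Function.Injective σ := by
    intro a b hab
    exact ε.symm.injective (Subtype.coe_injective hab)
  have hsumσ : ∀ g : Fin n → ℂ, ∑ r : Fin d, g (σ r) = ∑ i, (e i : ℂ) * g i := by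
    intro g
    have h1 : ∑ r : Fin d, g (σ r) = ∑ x : {i // e i ≠ 0}, g x :=
      Equiv.sum_comp ε.symm (fun x : {i // e i ≠ 0} => g x)
    have h2 : ∑ i ∈ Finset.univ.filter (fun i => e i ≠ 0), g i
        = ∑ x : {i // e i ≠ 0}, g x :=
      Finset.sum_subtype _ (by simp) g
    rw [h1, ← h2, Finset.sum_filter]
    refine Finset.sum_congr rfl fun i _ => ?_
    rcases hDD i with h|h <;> simp [h]
  -- the frame matrix
  set C : ℝ := Real.sqrt ((n:ℝ)/d) with hCdef
  have hC2 : (C:ℝ) * C = (n:ℝ)/d := Real.mul_self_sqrt (by positivity)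
  set F : Matrix (Fin d) (Fin n) ℂ := fun r j => (C:ℂ) * star (U j (σ r)) with hFdef
  have hstarC : star (C:ℂ) = (C:ℂ) := by
    rw [Complex.star_def, Complex.conj_ofReal]
  have hCC : ((C:ℂ))*(C:ℂ) = (((n:ℝ)/d : ℝ):ℂ) := by
    exact_mod_cast congrArg Complex.ofReal hC2
  have hFF1 : Fᴴ * F = (μ:ℂ) • S + 1 := by
    rw [← hG']
    ext j k
    rw [Matrix.mul_apply, Matrix.smul_apply, hPentry]
    calc ∑ r : Fin d, (Fᴴ) j r * F r k
        = ∑ r : Fin d, ((C:ℂ)*(C:ℂ)) * (U j (σ r) * star (U k (σ r))) :=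
          Finset.sum_congr rfl fun r _ => by
            rw [Matrix.conjTranspose_apply, hFdef]
            simp only [star_mul', hstarC, star_star]
            ring
      _ = ∑ i, (e i : ℂ) * (((C:ℂ)*(C:ℂ)) * (U j i * star (U k i))) :=
          hsumσ (fun i => ((C:ℂ)*(C:ℂ)) * (U j i * star (U k i)))
      _ = (((n:ℝ)/d : ℝ):ℂ) * ∑ i, (e i : ℂ) * (U j i * star (U k i)) := by
          rw [Finset.mul_sum]
          refine Finset.sum_congr rfl fun i _ => ?_
          rw [← hCC]
          ring
  have hFF2 : F * Fᴴ = (((n:ℕ):ℂ) / ((d:ℕ):ℂ)) • (1 : Matrix (Fin d) (Fin d) ℂ) := by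
    ext r t
    rw [Matrix.mul_apply, Matrix.smul_apply]
    have hent : ∀ j, F r j * (Fᴴ) j t = ((C:ℂ)*(C:ℂ)) * (star (U j (σ r)) * U j (σ t)) := by
      intro j
      rw [Matrix.conjTranspose_apply, hFdef]
      simp only [star_mul', hstarC, star_star]
      ring
    rw [Finset.sum_congr rfl fun j _ => hent j, ← Finset.mul_sum]
    have hUUent : ∑ j, star (U j (σ r)) * U j (σ t) = (1 : Matrix (Fin n) (Fin n) ℂ) (σ r) (σ t) := by
      rw [← hUU, Matrix.mul_apply]
      refine Finset.sum_congr rfl fun j _ => ?_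
      rw [Matrix.star_apply]
    rw [hUUent]
    rcases eq_or_ne r t with rfl|hrt
    · simp [Matrix.one_apply_eq]
      rw [show ((C:ℂ))*(C:ℂ) = (((n:ℝ)/d : ℝ):ℂ) by exact_mod_cast congrArg Complex.ofReal hC2]
      push_cast
      ring
    · have : σ r ≠ σ t := fun h => hrt (hσinj h)
      simp [Matrix.one_apply_ne this, Matrix.one_apply_ne hrt]
  -- assemble the result
  have hμC : (μ:ℂ) ≠ 0 := by exact_mod_cast hμpos.ne'
  refine ⟨d, ⟨hdpos, hdlt, hc⟩, huniq, F, ⟨⟨fun j => ?_, fun j k hjk => ?_, ?_⟩, ?_⟩⟩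
  · rw [hFF1]
    simp [Matrix.add_apply, Matrix.smul_apply, hdiag j, Matrix.one_apply_eq]
  · rw [hFF1]
    simp only [Fintype.card_fin, Matrix.add_apply, Matrix.smul_apply,
      Matrix.one_apply_ne hjk, add_zero, smul_eq_mul]
    rw [norm_mul, Complex.norm_real, Real.norm_eq_abs, hoff j k hjk, mul_one, abs_of_pos hμpos]
  · simp only [Fintype.card_fin]
    exact hFF2
  · simp only [Fintype.card_fin]
    rw [hFF1, ← hμdef, add_sub_cancel_right, inv_smul_smul₀ hμC]
end

section
/- (Naimark complement) If S is the signature matrix of an equiangular tight frame of size d × n with n > d ≥ 1, then −S is the signature matrix of some equiangular tight frame of size (n−d) × n. -/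
open Matrix

lemma fin_sum_split {M : Type*} [AddCommMonoid M] {d n : ℕ} (h : d ≤ n) (f : Fin n → M) :
    ∑ i, f i = (∑ i : Fin d, f ⟨i, lt_of_lt_of_le i.isLt h⟩)
      + ∑ i : Fin (n - d), f ⟨d + i, by omega⟩ := by
  have hnd : d + (n - d) = n := by omega
  rw [← (finCongr hnd).sum_comp f, Fin.sum_univ_add]
  congr 1


/-- **Naimark complement.** If `S` is the signature matrix of an ETF of size `d × n` with
`n > d ≥ 1`, then `−S` is the signature matrix of some ETF of size `(n−d) × n`. -/
theorem naimark_complement (d n : ℕ) (hd : 1 ≤ d) (hdn : d < n)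
    (F : Matrix (Fin d) (Fin n) ℂ) (S : Matrix (Fin n) (Fin n) ℂ)
    (hS : IsSignatureOf S F) :
    ∃ G : Matrix (Fin (n - d)) (Fin n) ℂ, IsSignatureOf (-S) G := by
  classical
  obtain ⟨⟨hdiag, hoff, hFF⟩, hSdef⟩ := hS
  simp only [Fintype.card_fin] at hdiag hoff hFF hSdef
  -- numeric facts
  have hdR : (0:ℝ) < d := by exact_mod_cast hd
  have hn0 : 0 < n := by omega
  have hnR : (0:ℝ) < n := by exact_mod_cast hn0
  have hdnR : (d:ℝ) < n := by exact_mod_cast hdn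
  have h1dR : (1:ℝ) ≤ d := by exact_mod_cast hd
  have hndR : (0:ℝ) < (n:ℝ) - d := by linarith
  have hn1R : (0:ℝ) < (n:ℝ) - 1 := by linarith
  have hdC : (d:ℂ) ≠ 0 := by exact_mod_cast hdR.ne'
  have hnC : (n:ℂ) ≠ 0 := by exact_mod_cast hnR.ne'
  have hndC : (n:ℂ) - d ≠ 0 := by
    have : ((n:ℝ) - d : ℝ) ≠ 0 := hndR.ne'
    have h2 : (((n:ℝ) - d : ℝ) : ℂ) ≠ 0 := by exact_mod_cast this
    simpa using h2
  have hcastR : ((n - d : ℕ) : ℝ) = (n:ℝ) - d := by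
    rw [Nat.cast_sub hdn.le]
  have hcastC : ((n - d : ℕ) : ℂ) = (n:ℂ) - d := by
    rw [Nat.cast_sub hdn.le]
  -- mu facts
  set μ : ℝ := etfMu d n with hμdef
  set μ' : ℝ := etfMu (n - d) n with hμ'def
  have hμpos : 0 < μ := Real.sqrt_pos.2 (div_pos hndR (by positivity))
  have hμ'val : μ' = Real.sqrt ((d:ℝ) / (((n:ℝ) - d) * ((n:ℝ) - 1))) := by
    rw [hμ'def, etfMu, hcastR]
    congr 1
    ring
  have hμ'pos : 0 < μ' := by
    rw [hμ'val]; exact Real.sqrt_pos.2 (div_pos hdR (by positivity))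
  have hμrel : μ' = ((d:ℝ)/((n:ℝ) - d)) * μ := by
    rw [hμ'val, hμdef, etfMu,
      show (d:ℝ)/(((n:ℝ) - d)*((n:ℝ) - 1))
        = ((d:ℝ)/((n:ℝ) - d))^2 * (((n:ℝ) - d)/(d*((n:ℝ) - 1))) from by
          field_simp,
      Real.sqrt_mul (sq_nonneg _), Real.sqrt_sq (by positivity)]
  -- the scaled rows of F
  set a : ℝ := Real.sqrt ((d:ℝ)/n) with ha
  have ha2 : (a:ℂ) * a = (d:ℂ)/n := by
    have h1 : a * a = (d:ℝ)/n := Real.mul_self_sqrt (by positivity)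
    calc (a:ℂ)*a = ((a*a : ℝ) : ℂ) := by push_cast; ring
      _ = (d:ℂ)/n := by rw [h1]; push_cast; ring
  set v : Fin n → EuclideanSpace ℂ (Fin n) :=
    fun i => if h : (i:ℕ) < d then
      (WithLp.equiv 2 (Fin n → ℂ)).symm (fun k => (a:ℂ) * F ⟨i,h⟩ k) else 0 with hv
  have hventry : ∀ (i : Fin d) (k : Fin n), v (Fin.castLE hdn.le i) k = (a:ℂ) * F i k := by
    intro i k
    rw [hv]
    simp only [Fin.coe_castLE, dif_pos i.isLt, WithLp.equiv_symm_apply, PiLp.toLp_apply, WithLp.ofLp_toLp, Fin.eta]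
  have hinner : ∀ (i j : Fin d),
      (inner ℂ (v (Fin.castLE hdn.le i)) (v (Fin.castLE hdn.le j)) : ℂ)
        = if i = j then 1 else 0 := by
    intro i j
    rw [PiLp.inner_apply]
    simp only [hventry, RCLike.inner_apply, _root_.map_mul, Complex.conj_ofReal]
    have hterm : ∀ k, (a:ℂ) * F j k * ((a:ℂ) * (starRingEnd ℂ) (F i k))
        = ((a:ℂ)*a) * ((starRingEnd ℂ) (F i k) * F j k) := fun k => by ring
    rw [Finset.sum_congr rfl fun k _ => hterm k, ← Finset.mul_sum]
    have h2 : ∑ k, (starRingEnd ℂ) (F i k) * F j k = (starRingEnd ℂ) ((F * Fᴴ) i j) := by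
      rw [mul_apply, map_sum]
      exact Finset.sum_congr rfl fun k _ => by
        simp [conjTranspose_apply, mul_comm]
    rw [h2, hFF]
    simp only [Matrix.smul_apply, one_apply, smul_eq_mul]
    rcases eq_or_ne i j with rfl | hij
    · simp only [if_pos rfl, ↓reduceIte, mul_one, map_div₀, Complex.conj_natCast]
      rw [ha2]
      field_simp
    · simp [hij]
  -- orthonormal on the subset
  have hon : Orthonormal ℂ (Set.restrict {i : Fin n | (i:ℕ) < d} v) := by
    rw [orthonormal_iff_ite]
    rintro ⟨i, hi⟩ ⟨j, hj⟩
    have hi' : i = Fin.castLE hdn.le ⟨(i:ℕ), hi⟩ := by ext; simp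
    have hj' : j = Fin.castLE hdn.le ⟨(j:ℕ), hj⟩ := by ext; simp
    change (inner ℂ (v i) (v j) : ℂ) = _
    rw [congrArg v hi', congrArg v hj', hinner]
    simp [Subtype.ext_iff, Fin.ext_iff]
  have hcard : Module.finrank ℂ (EuclideanSpace ℂ (Fin n)) = Fintype.card (Fin n) := by simp
  obtain ⟨b, hb⟩ := hon.exists_orthonormalBasis_extension_of_card_eq hcard
  have hbv : ∀ i : Fin d, b (Fin.castLE hdn.le i) = v (Fin.castLE hdn.le i) := by
    intro i
    exact hb _ (by simp [Fin.isLt])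
  -- orthonormality of b rows, as matrix identities
  have hbinner : ∀ i j : Fin n, ∑ k, (starRingEnd ℂ) (b i k) * b j k
      = if i = j then 1 else 0 := by
    intro i j
    have := (orthonormal_iff_ite (𝕜 := ℂ)).mp b.orthonormal i j
    rw [PiLp.inner_apply] at this
    simpa [RCLike.inner_apply, mul_comm] using this
  set U : Matrix (Fin n) (Fin n) ℂ := Matrix.of fun i j => b i j with hU
  have hU1 : U * Uᴴ = 1 := by
    ext i j
    rw [mul_apply]
    have : ∀ k, U i k * Uᴴ k j = (starRingEnd ℂ) ((starRingEnd ℂ) (U i k) * U j k) := by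
      intro k; simp [conjTranspose_apply, Complex.star_def, mul_comm]
    rw [Finset.sum_congr rfl fun k _ => this k, ← map_sum]
    rw [hU]
    simp only [Matrix.of_apply]
    rw [hbinner]
    by_cases h : i = j <;> simp [h, one_apply]
  have hU2 : Uᴴ * U = 1 := mul_eq_one_comm.mp hU1
  -- column sums split
  have hcolsum : ∀ j k : Fin n, ∑ i : Fin n, (starRingEnd ℂ) (b i j) * b i k
      = if j = k then 1 else 0 := by
    intro j k
    have := congrFun (congrFun hU2 j) k
    rw [mul_apply] at this
    simp only [conjTranspose_apply, hU, Matrix.of_apply, one_apply] at this ⊢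
    simpa using this
  have hfirst : ∀ j k : Fin n,
      ∑ i : Fin d, (starRingEnd ℂ) (b ⟨(i:ℕ), lt_of_lt_of_le i.isLt hdn.le⟩ j)
        * b ⟨(i:ℕ), lt_of_lt_of_le i.isLt hdn.le⟩ k = ((d:ℂ)/n) * (Fᴴ * F) j k := by
    intro j k
    have hcast : ∀ i : Fin d,
        (⟨(i:ℕ), lt_of_lt_of_le i.isLt hdn.le⟩ : Fin n) = Fin.castLE hdn.le i :=
      fun i => rfl
    have : ∀ i : Fin d, (starRingEnd ℂ) (b (Fin.castLE hdn.le i) j) * b (Fin.castLE hdn.le i) k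
        = ((a:ℂ)*a) * ((starRingEnd ℂ) (F i j) * F i k) := by
      intro i
      rw [hbv, hventry, hventry, _root_.map_mul, Complex.conj_ofReal]
      ring
    simp only [hcast, this]
    rw [← Finset.mul_sum, ha2, mul_apply]
    congr 1
  have hrest : ∀ j k : Fin n,
      ∑ i : Fin (n - d), (starRingEnd ℂ) (b ⟨d + (i:ℕ), by omega⟩ j) * b ⟨d + (i:ℕ), by omega⟩ k
        = (if j = k then 1 else 0) - ((d:ℂ)/n) * (Fᴴ * F) j k := by
    intro j k
    have := hcolsum j k
    rw [fin_sum_split hdn.le (fun i => (starRingEnd ℂ) (b i j) * b i k)] at this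
    rw [hfirst] at this
    linear_combination this
  -- the complement frame
  set t : ℝ := Real.sqrt ((n:ℝ)/((n:ℝ) - d)) with htdef
  have ht2 : (t:ℂ) * t = (n:ℂ)/((n:ℂ) - d) := by
    have h1 : t * t = (n:ℝ)/((n:ℝ) - d) := Real.mul_self_sqrt (by positivity)
    calc (t:ℂ)*t = ((t*t : ℝ) : ℂ) := by push_cast; ring
      _ = (n:ℂ)/((n:ℂ) - d) := by rw [h1]; push_cast; ring
  set G : Matrix (Fin (n - d)) (Fin n) ℂ :=
    Matrix.of fun i j => (t:ℂ) * b ⟨d + (i:ℕ), by omega⟩ j with hG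
  have hGG : ∀ j k : Fin n, (Gᴴ * G) j k
      = ((n:ℂ)/((n:ℂ) - d)) * ((if j = k then 1 else 0) - ((d:ℂ)/n) * (Fᴴ * F) j k) := by
    intro j k
    rw [mul_apply, ← hrest j k, ← ht2, Finset.mul_sum]
    refine Finset.sum_congr rfl fun i _ => ?_
    simp only [conjTranspose_apply, hG, Matrix.of_apply, Complex.star_def, _root_.map_mul,
      Complex.conj_ofReal]
    ring
  have hGdiag : ∀ j, (Gᴴ * G) j j = 1 := by
    intro j
    rw [hGG, if_pos rfl, hdiag]
    field_simp
  have hGoff : ∀ j k : Fin n, j ≠ k → (Gᴴ * G) j k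
      = -((((d:ℝ)/((n:ℝ) - d) : ℝ) : ℂ)) * ((Fᴴ * F) j k) := by
    intro j k hjk
    rw [hGG, if_neg hjk]
    push_cast
    field_simp
    ring
  have hG2 : G * Gᴴ = ((n:ℂ)/((n:ℂ) - d)) • 1 := by
    ext i i'
    rw [mul_apply]
    have : ∀ k, G i k * Gᴴ k i'
        = ((t:ℂ)*t) * (starRingEnd ℂ) ((starRingEnd ℂ) (b ⟨d + (i:ℕ), by omega⟩ k)
            * b ⟨d + (i':ℕ), by omega⟩ k) := by
      intro k
      simp only [conjTranspose_apply, hG, Matrix.of_apply, Complex.star_def, _root_.map_mul,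
        Complex.conj_ofReal, Complex.conj_conj]
      ring
    rw [Finset.sum_congr rfl fun k _ => this k, ← Finset.mul_sum, ← map_sum, hbinner]
    have hiff : ((⟨d + (i:ℕ), by omega⟩ : Fin n) = ⟨d + (i':ℕ), by omega⟩) ↔ i = i' := by
      simp [Fin.ext_iff]
    by_cases h : i = i'
    · simp [h, ht2, Matrix.smul_apply, one_apply]
    · rw [if_neg (fun hc => h (hiff.mp hc))]
      simp [h, Matrix.smul_apply, one_apply]
  refine ⟨G, ⟨⟨hGdiag, ?_, ?_⟩, ?_⟩⟩
  · -- off-diagonal modulus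
    intro j k hjk
    rw [hGoff j k hjk]
    rw [norm_mul, norm_neg, Complex.norm_real, Real.norm_eq_abs,
      abs_of_pos (div_pos hdR hndR), hoff j k hjk]
    simp only [Fintype.card_fin]
    rw [← hμrel]
  · -- tightness
    simp only [Fintype.card_fin, hcastC]
    exact hG2
  · -- signature
    simp only [Fintype.card_fin]
    rw [hSdef]
    ext j k
    simp only [Matrix.neg_apply, Matrix.smul_apply, Matrix.sub_apply, one_apply, smul_eq_mul]
    by_cases h : j = k
    · subst h
      rw [hdiag, hGdiag]
      simp
    · rw [hGoff j k h, if_neg h]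
      have hreal : (μ')⁻¹ * ((d:ℝ)/((n:ℝ) - d)) = μ⁻¹ := by
        rw [hμrel]
        field_simp
      have hC : ((μ':ℝ):ℂ)⁻¹ * (((d:ℝ)/((n:ℝ) - d) : ℝ) : ℂ) = ((μ:ℝ):ℂ)⁻¹ := by
        exact_mod_cast congrArg (fun x : ℝ => (x:ℂ)) hreal
      rw [sub_zero, sub_zero]
      calc -( ((μ:ℝ):ℂ)⁻¹ * (Fᴴ * F) j k)
          = -(((μ':ℝ):ℂ)⁻¹ * (((d:ℝ)/((n:ℝ) - d) : ℝ) : ℂ) * (Fᴴ * F) j k) := by rw [hC]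
        _ = ((μ':ℝ):ℂ)⁻¹ * (-((((d:ℝ)/((n:ℝ) - d) : ℝ) : ℂ)) * ((Fᴴ * F) j k)) := by ring
end

section
/- (ETF doubling, signature version) Let n > d ≥ 1, set c = (n−2d)·√((n−1)/(d(n−d))), and suppose |c| ≤ 1. Let ε = ±1 and β = −c + ε·i·√(1−c²). If S is the signature matrix of an equiangular tight frame of size d × n, then the 2n × 2n block matrix Σ = [[S, S + β·I], [S + β̄·I, −S]] is the signature matrix of a complex equiangular tight frame of size n × 2n. -/
open Matrix

/-- A hermitian idempotent complex matrix of trace `k` factors as `Vᴴ V` with `V Vᴴ = 1`. -/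
lemma exists_factor {ι : Type} [Fintype ι] [DecidableEq ι] {k : ℕ}
    (Q : Matrix ι ι ℂ) (hherm : Q.IsHermitian)
    (hidem : Q * Q = Q) (htr : Q.trace = (k : ℂ)) :
    ∃ V : Matrix (Fin k) ι ℂ, Vᴴ * V = Q ∧ V * Vᴴ = 1 := by
  set U : Matrix ι ι ℂ := (hherm.eigenvectorUnitary : Matrix ι ι ℂ) with hU
  set ev : ι → ℝ := hherm.eigenvalues with hev
  have hUU : star U * U = 1 := (Matrix.mem_unitaryGroup_iff').mp hherm.eigenvectorUnitary.2
  have hUU' : U * star U = 1 := (Matrix.mem_unitaryGroup_iff).mp hherm.eigenvectorUnitary.2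
  have hspec : Q = U * diagonal (RCLike.ofReal ∘ ev) * star U := hherm.spectral_theorem
  have hD : star U * Q * U = diagonal (RCLike.ofReal ∘ ev) := by
    rw [hspec]
    have e1 : star U * (U * diagonal (RCLike.ofReal ∘ ev) * star U) * U
        = (star U * U) * diagonal (RCLike.ofReal ∘ ev) * (star U * U) := by
      simp only [mul_assoc]
    rw [e1, hUU, one_mul, mul_one]
  have h01 : ∀ i, ev i = 0 ∨ ev i = 1 := by
    intro i
    have hDD : diagonal (RCLike.ofReal ∘ ev : ι → ℂ) * diagonal (RCLike.ofReal ∘ ev : ι → ℂ)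
        = diagonal (RCLike.ofReal ∘ ev : ι → ℂ) := by
      rw [← hD]
      have e2 : (star U * Q * U) * (star U * Q * U)
          = star U * ((Q * (U * star U)) * Q) * U := by simp only [mul_assoc]
      rw [e2, hUU', mul_one, hidem]
    have h1 := congrArg (fun M => M i i) hDD
    simp only [diagonal_mul_diagonal, diagonal_apply_eq, Function.comp_apply] at h1
    have h2 : (ev i) * (ev i) = ev i := by exact_mod_cast h1
    have h3 : ev i * (ev i - 1) = 0 := by linear_combination h2
    rcases mul_eq_zero.mp h3 with h | h
    · exact Or.inl h
    · exact Or.inr (by linarith)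
  have htr' : ∑ i, ev i = (k : ℝ) := by
    have : Q.trace = ∑ i, (ev i : ℂ) := by
      rw [hspec, Matrix.trace_mul_cycle, hUU, one_mul, Matrix.trace_diagonal]
      simp [Function.comp]
    rw [htr] at this
    exact_mod_cast this.symm
  set T : Finset ι := Finset.univ.filter (fun i => ev i = 1) with hT
  have hsum : ∑ i, ev i = (T.card : ℝ) := by
    rw [← Finset.sum_filter_add_sum_filter_not Finset.univ (fun i => ev i = 1) ev]
    have hA : ∑ i ∈ T, ev i = (T.card : ℝ) := by
      rw [Finset.sum_congr rfl (fun i hi => (Finset.mem_filter.mp hi).2)]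
      simp [hT]
    have hB : ∑ i ∈ Finset.univ.filter (fun i => ¬ ev i = 1), ev i = 0 := by
      apply Finset.sum_eq_zero
      intro i hi
      rcases h01 i with h | h
      · exact h
      · exact absurd h (Finset.mem_filter.mp hi).2
    rw [hA, hB, add_zero]
  have hcardT : T.card = k := by
    have : (T.card : ℝ) = (k : ℝ) := by rw [← hsum, htr']
    exact_mod_cast this
  have hcard : Fintype.card {i // i ∈ T} = k := by
    rw [Fintype.card_coe, hcardT]
  set e : Fin k ≃ {i // i ∈ T} := (Fintype.equivFinOfCardEq hcard).symm with he
  refine ⟨Matrix.of (fun a j => star (U j (e a : ι))), ?_, ?_⟩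
  · ext j l
    rw [Matrix.mul_apply]
    simp only [Matrix.conjTranspose_apply, Matrix.of_apply, star_star]
    have step1 : ∑ a : Fin k, U j (e a : ι) * star (U l (e a : ι))
        = ∑ x : {i // i ∈ T}, U j (x : ι) * star (U l (x : ι)) :=
      Fintype.sum_equiv e _ _ (fun a => rfl)
    have step2 : ∑ x : {i // i ∈ T}, U j (x : ι) * star (U l (x : ι))
        = ∑ i ∈ T, U j i * star (U l i) := T.sum_coe_sort (fun i => U j i * star (U l i))
    rw [step1, step2, hspec]
    rw [Matrix.mul_apply]
    have : ∀ i, (U * diagonal (RCLike.ofReal ∘ ev : ι → ℂ)) j i * (star U) i l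
        = if ev i = 1 then U j i * star (U l i) else 0 := by
      intro i
      rw [Matrix.mul_diagonal]
      rcases h01 i with h | h
      · simp [h, Matrix.star_apply]
      · simp [h, Matrix.star_apply]
    rw [Finset.sum_congr rfl (fun i _ => this i), ← Finset.sum_filter]
  · ext a b
    rw [Matrix.mul_apply]
    simp only [Matrix.conjTranspose_apply, Matrix.of_apply, star_star]
    have : ∑ j, star (U j (e a : ι)) * U j (e b : ι)
        = (star U * U) (e a : ι) (e b : ι) := by
      rw [Matrix.mul_apply]
      simp [Matrix.star_apply]
    rw [this, hUU]
    by_cases hab : a = b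
    · subst hab; simp
    · have hne : (e a : ι) ≠ (e b : ι) := by
        intro hco
        exact hab (e.injective (Subtype.ext hco))
      simp [Matrix.one_apply, hab, hne]

set_option maxHeartbeats 2000000

/-- **ETF doubling (signature version).** Let `n > d ≥ 1`, `c = (n−2d)·√((n−1)/(d(n−d)))`
with `|c| ≤ 1`, `ε = ±1`, and `β = −c + ε·i·√(1−c²)`. If `S` is the signature matrix of an
ETF of size `d × n`, then the `2n × 2n` block matrix `Σ = [[S, S+βI], [S+β̄I, −S]]` is the
signature matrix of a complex ETF of size `n × 2n`. -/
theorem etf_doubling_signature (d n : ℕ) (hd : 1 ≤ d) (hdn : d < n)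
    (c : ℝ) (hc : c = ((n : ℝ) - 2 * d) * Real.sqrt (((n : ℝ) - 1) / (d * ((n : ℝ) - d))))
    (hc1 : |c| ≤ 1)
    (ε : ℝ) (hε : ε = 1 ∨ ε = -1)
    (β : ℂ) (hβ : β = -(c : ℂ) + (ε : ℂ) * Complex.I * ((Real.sqrt (1 - c ^ 2) : ℝ) : ℂ))
    (F : Matrix (Fin d) (Fin n) ℂ) (S : Matrix (Fin n) (Fin n) ℂ)
    (hS : IsSignatureOf S F) :
    ∃ Φ : Matrix (Fin n) (Fin n ⊕ Fin n) ℂ,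
      IsSignatureOf
        (Matrix.fromBlocks S (S + β • 1) (S + (starRingEnd ℂ β) • 1) (-S)) Φ := by
  classical
  obtain ⟨⟨hdiagF, hoffF, htight⟩, hSdef⟩ := hS
  simp only [Fintype.card_fin] at hdiagF hoffF htight hSdef
  -- basic numerics
  have hd1 : (1:ℝ) ≤ d := by exact_mod_cast hd
  have hnd : (d:ℝ) < n := by exact_mod_cast hdn
  have hn1 : (1:ℝ) < n := lt_of_le_of_lt hd1 hnd
  have hdR0 : (0:ℝ) < d := by linarith
  have hdC0 : (d:ℂ) ≠ 0 := by exact_mod_cast hdR0.ne'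
  have hnC0 : (n:ℂ) ≠ 0 := by
    have : (0:ℝ) < n := by linarith
    exact_mod_cast this.ne'
  set μ : ℝ := etfMu d n with hμdef
  have harg_pos : 0 < ((n:ℝ) - d) / (↑d * ((n:ℝ) - 1)) := by
    apply div_pos <;> nlinarith
  have hμpos : 0 < μ := Real.sqrt_pos.mpr harg_pos
  have hμsq : μ^2 = ((n:ℝ) - d) / (↑d * ((n:ℝ) - 1)) := Real.sq_sqrt harg_pos.le
  have hμC : (μ:ℂ) ≠ 0 := by exact_mod_cast hμpos.ne'
  -- c * μ = (n - 2d)/d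
  have hne1 : (d:ℝ) ≠ 0 := hdR0.ne'
  have hne2 : (n:ℝ) - 1 ≠ 0 := by linarith
  have hne3 : (n:ℝ) - d ≠ 0 := by linarith
  have hcμ : c * μ = ((n:ℝ) - 2*d)/d := by
    rw [hc, hμdef]
    show ((n : ℝ) - 2 * d) * Real.sqrt (((n : ℝ) - 1) / (d * ((n : ℝ) - d))) *
      Real.sqrt (((n : ℝ) - d) / (d * ((n : ℝ) - 1))) = ((n:ℝ) - 2*d)/d
    rw [mul_assoc, ← Real.sqrt_mul (by
      apply div_nonneg (by linarith)
      nlinarith)]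
    have harg : ((n : ℝ) - 1) / (d * ((n : ℝ) - d)) * (((n : ℝ) - d) / (d * ((n : ℝ) - 1)))
        = (1/d)^2 := by
      field_simp
    rw [harg, Real.sqrt_sq (by positivity)]
    field_simp
  -- Gram matrix
  have hG : Fᴴ * F = 1 + (μ:ℂ) • S := by
    rw [hSdef, smul_smul, mul_inv_cancel₀ hμC, one_smul]
    abel
  have hSH : Sᴴ = S := by
    rw [hSdef]
    simp only [Matrix.conjTranspose_smul, Matrix.conjTranspose_sub, Matrix.conjTranspose_one,
      Matrix.conjTranspose_mul, Matrix.conjTranspose_conjTranspose]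
    congr 1
    simp [Complex.star_def, ← Complex.ofReal_inv]
  have hS0 : ∀ j, S j j = 0 := by
    intro j
    rw [hSdef]
    simp [Matrix.smul_apply, Matrix.sub_apply, hdiagF j, Matrix.one_apply]
  have hS1 : ∀ j k : Fin n, j ≠ k → ‖S j k‖ = 1 := by
    intro j k hjk
    have hE : S j k = ((μ:ℂ))⁻¹ * ((Fᴴ*F) j k) := by
      rw [hSdef]
      simp [Matrix.smul_apply, Matrix.sub_apply, Matrix.one_apply, hjk]
    rw [hE, norm_mul, norm_inv, Complex.norm_real, Real.norm_eq_abs, abs_of_pos hμpos, hoffF j k hjk]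
    exact inv_mul_cancel₀ hμpos.ne'
  -- S*S
  have hGG : (Fᴴ*F)*(Fᴴ*F) = ((n:ℂ)/(d:ℂ))•(Fᴴ*F) := by
    calc (Fᴴ*F)*(Fᴴ*F) = Fᴴ*((F*Fᴴ)*F) := by simp only [Matrix.mul_assoc]
      _ = Fᴴ*((((n:ℂ)/(d:ℂ))•(1 : Matrix (Fin d) (Fin d) ℂ))*F) := by rw [htight]
      _ = ((n:ℂ)/(d:ℂ))•(Fᴴ*F) := by rw [Matrix.smul_mul, Matrix.one_mul, Matrix.mul_smul]
  have hSS : S*S = ((n:ℂ) - 1)•1 + (c:ℂ)•S := by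
    have e1 : (μ:ℂ)•S = Fᴴ*F - 1 := by rw [hG, add_sub_cancel_left]
    have e2 : ((μ:ℂ)^2)•(S*S) = (((n:ℂ)/(d:ℂ)) - 2)•(Fᴴ*F) + 1 := by
      have e3 : ((μ:ℂ)^2)•(S*S) = ((μ:ℂ)•S) * ((μ:ℂ)•S) := by
        rw [Matrix.smul_mul, Matrix.mul_smul, smul_smul, sq]
      rw [e3, e1, sub_mul, mul_sub, mul_sub, hGG, Matrix.mul_one, Matrix.one_mul]
      ext i j
      by_cases hij : i = j
      · simp [Matrix.add_apply, Matrix.sub_apply, Matrix.smul_apply, Matrix.one_apply, hij]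
        ring
      · simp [Matrix.add_apply, Matrix.sub_apply, Matrix.smul_apply, Matrix.one_apply, hij]
        ring
    have k1 : ((n:ℂ)/(d:ℂ)) - 1 = (μ:ℂ)^2 * ((n:ℂ)-1) := by
      have hμsqC : (μ:ℂ)^2 * ((d:ℂ) * ((n:ℂ)-1)) = (n:ℂ) - d := by
        have h0 : μ^2 * ((d:ℝ) * ((n:ℝ)-1)) = (n:ℝ) - d := by
          rw [hμsq]; field_simp
        exact_mod_cast h0
      field_simp
      linear_combination -hμsqC
    have k2 : (((n:ℂ)/(d:ℂ)) - 2) * (μ:ℂ) = (μ:ℂ)^2 * (c:ℂ) := by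
      have hcμC : (c:ℂ) * (μ:ℂ) * (d:ℂ) = (n:ℂ) - 2*d := by
        have h0 : c * μ * (d:ℝ) = (n:ℝ) - 2*d := by rw [hcμ]; field_simp
        exact_mod_cast h0
      field_simp
      linear_combination -hcμC
    have e4 : ((μ:ℂ)^2)•(S*S) = ((μ:ℂ)^2)•(((n:ℂ) - 1)•1 + (c:ℂ)•S) := by
      rw [e2, hG]
      ext i j
      simp only [Matrix.add_apply, Matrix.smul_apply, Matrix.one_apply, smul_eq_mul]
      by_cases hij : i = j
      · simp only [hij, if_true]
        linear_combination k1 + (S j j) * k2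
      · simp only [if_neg hij]
        linear_combination (S i j) * k2
    exact smul_right_injective _ (pow_ne_zero 2 hμC) e4
  -- β facts
  have hc2 : c^2 ≤ 1 := by
    have h1 := sq_abs c
    nlinarith [abs_nonneg c]
  have hs2 : Real.sqrt (1 - c^2) ^ 2 = 1 - c^2 := Real.sq_sqrt (by linarith)
  have hε2 : ε^2 = 1 := by rcases hε with h | h <;> rw [h] <;> norm_num
  have hβconj : starRingEnd ℂ β
      = -(c:ℂ) - (ε:ℂ) * Complex.I * ((Real.sqrt (1 - c^2) : ℝ):ℂ) := by
    rw [hβ]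
    simp only [map_add, map_neg, _root_.map_mul, Complex.conj_ofReal, Complex.conj_I]
    ring
  have hβadd : β + starRingEnd ℂ β = -(2*(c:ℂ)) := by rw [hβconj, hβ]; ring
  have hs2C : ((Real.sqrt (1 - c^2) : ℝ):ℂ)^2 = 1 - (c:ℂ)^2 := by
    rw [← Complex.ofReal_pow, hs2]
    push_cast
    ring
  have hε2C : ((ε:ℝ):ℂ)^2 = 1 := by
    rw [← Complex.ofReal_pow, hε2, Complex.ofReal_one]
  have hβmul : β * starRingEnd ℂ β = 1 := by
    rw [hβconj, hβ]
    have hI := Complex.I_sq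
    linear_combination (-((ε:ℂ)^2 * ((Real.sqrt (1-c^2):ℝ):ℂ)^2)) * hI
      + (((Real.sqrt (1-c^2):ℝ):ℂ)^2) * hε2C + hs2C
  have habsβ : ‖β‖ = 1 := by
    have h2 : ((Complex.normSq β : ℝ):ℂ) = 1 := by rw [← Complex.mul_conj]; exact hβmul
    have h1 : Complex.normSq β = 1 := by exact_mod_cast h2
    rw [Complex.norm_def, h1, Real.sqrt_one]
  -- the block signature matrix
  set Sig : Matrix (Fin n ⊕ Fin n) (Fin n ⊕ Fin n) ℂ :=
    Matrix.fromBlocks S (S + β • 1) (S + (starRingEnd ℂ β) • 1) (-S) with hSig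
  have hSigH : Sigᴴ = Sig := by
    rw [hSig, Matrix.fromBlocks_conjTranspose]
    have c1 : (S + β•(1:Matrix (Fin n) (Fin n) ℂ))ᴴ = S + (starRingEnd ℂ β)•1 := by
      rw [Matrix.conjTranspose_add, Matrix.conjTranspose_smul, Matrix.conjTranspose_one, hSH]
      rfl
    have c2 : (S + (starRingEnd ℂ β)•(1:Matrix (Fin n) (Fin n) ℂ))ᴴ = S + β•1 := by
      rw [Matrix.conjTranspose_add, Matrix.conjTranspose_smul, Matrix.conjTranspose_one, hSH]
      congr 1
      simp
    rw [hSH, c1, c2, Matrix.conjTranspose_neg, hSH]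
  have expand : ∀ x y : ℂ, (S + x•(1:Matrix (Fin n) (Fin n) ℂ)) * (S + y•1)
      = S*S + (x+y)•S + (x*y)•1 := by
    intro x y
    rw [add_mul, mul_add, mul_add, Matrix.smul_mul, Matrix.mul_smul, Matrix.smul_mul,
      Matrix.one_mul, Matrix.mul_one, Matrix.mul_smul, smul_smul, add_smul]
    simp only [Matrix.one_mul]
    abel
  have hSigsq : Sig * Sig = ((2*(n:ℂ)) - 1)•1 := by
    rw [hSig, Matrix.fromBlocks_multiply]
    have hTL : S*S + (S+β•1)*(S+(starRingEnd ℂ β)•1)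
        = ((2*(n:ℂ)) - 1)•(1:Matrix (Fin n) (Fin n) ℂ) := by
      rw [expand β (starRingEnd ℂ β), hβadd, hβmul, hSS]
      ext i j
      simp only [Matrix.add_apply, Matrix.smul_apply, Matrix.one_apply, smul_eq_mul]
      by_cases hij : i = j
      · simp only [hij, if_true]; ring
      · simp only [if_neg hij]; ring
    have hTR : S*(S+β•1) + (S+β•1)*(-S) = (0:Matrix (Fin n) (Fin n) ℂ) := by
      rw [Matrix.mul_neg, mul_add, add_mul, Matrix.mul_smul, Matrix.smul_mul,
        Matrix.mul_one, Matrix.one_mul]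
      abel
    have hBL : (S+(starRingEnd ℂ β)•1)*S + (-S)*(S+(starRingEnd ℂ β)•1)
        = (0:Matrix (Fin n) (Fin n) ℂ) := by
      rw [Matrix.neg_mul, add_mul, mul_add, Matrix.smul_mul, Matrix.mul_smul,
        Matrix.one_mul, Matrix.mul_one]
      abel
    have hBR : (S+(starRingEnd ℂ β)•1)*(S+β•1) + (-S)*(-S)
        = ((2*(n:ℂ)) - 1)•(1:Matrix (Fin n) (Fin n) ℂ) := by
      rw [expand (starRingEnd ℂ β) β, neg_mul_neg, hSS]
      rw [show starRingEnd ℂ β + β = -(2*(c:ℂ)) by rw [add_comm]; exact hβadd]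
      rw [show starRingEnd ℂ β * β = 1 by rw [mul_comm]; exact hβmul]
      ext i j
      simp only [Matrix.add_apply, Matrix.smul_apply, Matrix.one_apply, smul_eq_mul]
      by_cases hij : i = j
      · simp only [hij, if_true]; ring
      · simp only [if_neg hij]; ring
    rw [hTL, hTR, hBL, hBR]
    have hone : (1 : Matrix (Fin n ⊕ Fin n) (Fin n ⊕ Fin n) ℂ) = Matrix.fromBlocks 1 0 0 1 :=
      Matrix.fromBlocks_one.symm
    rw [hone, Matrix.fromBlocks_smul, smul_zero]
  -- diagonal and off-diagonal entries of Sig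
  have hSigdiag : ∀ p, Sig p p = 0 := by
    intro p
    rcases p with j | j
    · simpa [hSig] using hS0 j
    · simp [hSig, hS0 j]
  have hSigoff : ∀ p q, p ≠ q → ‖Sig p q‖ = 1 := by
    intro p q hpq
    rcases p with j | j <;> rcases q with k | k
    · have hjk : j ≠ k := by rintro rfl; exact hpq rfl
      simpa [hSig] using hS1 j k hjk
    · by_cases hjk : j = k
      · subst hjk
        simp [hSig, Matrix.add_apply, Matrix.smul_apply, Matrix.one_apply, hS0 j, habsβ]
      · simp [hSig, Matrix.add_apply, Matrix.smul_apply, Matrix.one_apply, hjk, hS1 j k hjk]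
    · by_cases hjk : j = k
      · subst hjk
        simp only [hSig, Matrix.fromBlocks_apply₂₁, Matrix.add_apply, Matrix.smul_apply,
          Matrix.one_apply, if_true, smul_eq_mul, mul_one, hS0 j, zero_add]
        rw [show ‖starRingEnd ℂ β‖ = ‖β‖ from Complex.norm_conj β, habsβ]
      · simp [hSig, Matrix.add_apply, Matrix.smul_apply, Matrix.one_apply, hjk, hS1 j k hjk]
    · have hjk : j ≠ k := by rintro rfl; exact hpq rfl
      simp [hSig, hS1 j k hjk]
  -- the new Welch parameter
  have h2n1 : (0:ℝ) < 2*(n:ℝ) - 1 := by linarith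
  set μ' : ℝ := etfMu n (n + n) with hμ'def
  have hμ'eq : μ' = Real.sqrt (1/(2*(n:ℝ) - 1)) := by
    rw [hμ'def]
    unfold etfMu
    congr 1
    push_cast
    rw [show (n:ℝ) + n - n = (n:ℝ) by ring, show (n:ℝ)*((n:ℝ)+(n:ℝ)-1) = n*(2*n-1) by ring]
    rw [div_eq_div_iff (by nlinarith : (n:ℝ)*(2*(n:ℝ)-1) ≠ 0) h2n1.ne']
    ring
  have hμ'pos : 0 < μ' := by
    rw [hμ'eq]
    exact Real.sqrt_pos.mpr (div_pos one_pos h2n1)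
  have hμ'sq : μ'^2 = 1/(2*(n:ℝ)-1) := by
    rw [hμ'eq]
    exact Real.sq_sqrt (le_of_lt (div_pos one_pos h2n1))
  have hμ'C : (μ':ℂ) ≠ 0 := by exact_mod_cast hμ'pos.ne'
  have hμ'sqC : (μ':ℂ) * (μ':ℂ) * (2*(n:ℂ) - 1) = 1 := by
    have h0 : μ' * μ' * (2*(n:ℝ)-1) = 1 := by
      have := hμ'sq
      rw [sq] at this
      rw [this]
      field_simp
    exact_mod_cast h0
  -- the projection
  set Q : Matrix (Fin n ⊕ Fin n) (Fin n ⊕ Fin n) ℂ := ((2:ℂ))⁻¹ • (1 + (μ':ℂ)•Sig) with hQ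
  have hX2 : ((μ':ℂ)•Sig) * ((μ':ℂ)•Sig) = (1:Matrix (Fin n ⊕ Fin n) (Fin n ⊕ Fin n) ℂ) := by
    rw [Matrix.smul_mul, Matrix.mul_smul, smul_smul, hSigsq, smul_smul, hμ'sqC, one_smul]
  have hXX : (1 + (μ':ℂ)•Sig) * (1 + (μ':ℂ)•Sig) = (2:ℂ)•(1 + (μ':ℂ)•Sig) := by
    have e : (1 + (μ':ℂ)•Sig) * (1 + (μ':ℂ)•Sig)
        = 1 + (μ':ℂ)•Sig + (μ':ℂ)•Sig + ((μ':ℂ)•Sig)*((μ':ℂ)•Sig) := by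
      noncomm_ring
      simp only [smul_add, smul_smul]
      abel
    rw [e, hX2, two_smul]
    abel
  have hQQ : Q * Q = Q := by
    rw [hQ, Matrix.smul_mul, Matrix.mul_smul, smul_smul, hXX, smul_smul]
    norm_num
  have hQH : Q.IsHermitian := by
    show Qᴴ = Q
    rw [hQ, Matrix.conjTranspose_smul, Matrix.conjTranspose_add, Matrix.conjTranspose_one,
      Matrix.conjTranspose_smul, hSigH]
    congr 1
    · simp
    · congr 1
      simp
  have htrSig : Sig.trace = 0 := by
    rw [Matrix.trace]
    apply Finset.sum_eq_zero
    intro p _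
    exact hSigdiag p
  have htrQ : Q.trace = (n:ℂ) := by
    rw [hQ, Matrix.trace_smul, Matrix.trace_add, Matrix.trace_smul, htrSig, Matrix.trace_one]
    simp only [smul_zero, add_zero, smul_eq_mul]
    rw [Fintype.card_sum, Fintype.card_fin]
    push_cast
    ring
  obtain ⟨V, hV1, hV2⟩ := exists_factor Q hQH hQQ htrQ
  set Φ : Matrix (Fin n) (Fin n ⊕ Fin n) ℂ := ((Real.sqrt 2 : ℝ):ℂ) • V with hΦ
  have hsqrt2 : ((Real.sqrt 2 : ℝ):ℂ) * ((Real.sqrt 2 : ℝ):ℂ) = 2 := by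
    rw [← Complex.ofReal_mul, Real.mul_self_sqrt (by norm_num)]
    norm_num
  have hΦG : Φᴴ * Φ = 1 + (μ':ℂ)•Sig := by
    rw [hΦ, Matrix.conjTranspose_smul, Matrix.smul_mul, Matrix.mul_smul, smul_smul, hV1, hQ,
      smul_smul]
    rw [show star ((Real.sqrt 2:ℝ):ℂ) * ((Real.sqrt 2:ℝ):ℂ) * (2:ℂ)⁻¹ = 1 by
      rw [Complex.star_def, Complex.conj_ofReal, hsqrt2]
      norm_num]
    rw [one_smul]
  have hΦΦH : Φ * Φᴴ = (2:ℂ)•1 := by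
    rw [hΦ, Matrix.conjTranspose_smul, Matrix.smul_mul, Matrix.mul_smul, smul_smul, hV2]
    congr 1
    rw [Complex.star_def, Complex.conj_ofReal, hsqrt2]
  refine ⟨Φ, ⟨?_, ?_, ?_⟩, ?_⟩
  · intro p
    rw [hΦG]
    simp [Matrix.add_apply, Matrix.smul_apply, Matrix.one_apply, hSigdiag p]
  · intro p q hpq
    rw [hΦG]
    simp only [Fintype.card_fin, Fintype.card_sum, ← hμ'def]
    have hone : (1 : Matrix (Fin n ⊕ Fin n) (Fin n ⊕ Fin n) ℂ) p q = 0 :=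
      Matrix.one_apply_ne hpq
    simp only [Matrix.add_apply, Matrix.smul_apply, hone, zero_add, smul_eq_mul]
    rw [norm_mul, Complex.norm_real, Real.norm_eq_abs, abs_of_pos hμ'pos, hSigoff p q hpq, mul_one]
  · rw [hΦΦH]
    simp only [Fintype.card_fin, Fintype.card_sum]
    congr 1
    push_cast
    have hn0 : (n:ℂ) ≠ 0 := hnC0
    field_simp
    ring
  · simp only [Fintype.card_fin, Fintype.card_sum, ← hμ'def]
    rw [hΦG, add_sub_cancel_left, smul_smul, inv_mul_cancel₀ hμ'C, one_smul, hSig]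
end

section
/- Let n ≥ 2, let c be a real number with |c| ≤ 1, let β = −c + ε·i·√(1−c²) for ε = ±1, and let S ∈ ℂ^{n×n} satisfy S = S* and S² = c·S + (n−1)·I. Then the 2n × 2n block matrix Σ = [[S, S + β·I], [S + β̄·I, −S]] satisfies Σ = Σ* and Σ² = (2n−1)·I. -/
open Matrix

/-- For `n ≥ 2`, a real `c` with `|c| ≤ 1`, `β = −c + ε·i·√(1−c²)` with `ε = ±1`, and a
self-adjoint `S ∈ ℂ^{n×n}` with `S² = c·S + (n−1)·I`, the `2n × 2n` block matrix
`Σ = [[S, S+βI], [S+β̄I, −S]]` satisfies `Σ = Σᴴ` and `Σ² = (2n−1)·I`. -/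
theorem doubled_block_identity (n : ℕ) (hn : 2 ≤ n)
    (c : ℝ) (hc1 : |c| ≤ 1)
    (ε : ℝ) (hε : ε = 1 ∨ ε = -1)
    (β : ℂ) (hβ : β = -(c : ℂ) + (ε : ℂ) * Complex.I * ((Real.sqrt (1 - c ^ 2) : ℝ) : ℂ))
    (S : Matrix (Fin n) (Fin n) ℂ)
    (hherm : Sᴴ = S)
    (hS2 : S ^ 2 = (c : ℂ) • S + ((n : ℂ) - 1) • 1) :
    (Matrix.fromBlocks S (S + β • 1) (S + (starRingEnd ℂ β) • 1) (-S))ᴴ =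
        Matrix.fromBlocks S (S + β • 1) (S + (starRingEnd ℂ β) • 1) (-S) ∧
      (Matrix.fromBlocks S (S + β • 1) (S + (starRingEnd ℂ β) • 1) (-S)) ^ 2 =
        (2 * (n : ℂ) - 1) • 1 := by
  have h1c : (0:ℝ) ≤ 1 - c ^ 2 := by nlinarith [sq_abs c, abs_nonneg c]
  have hs : ((Real.sqrt (1 - c ^ 2) : ℝ) : ℂ) ^ 2 = 1 - (c : ℂ) ^ 2 := by
    rw [← Complex.ofReal_pow, Real.sq_sqrt h1c]; push_cast; ring
  have hε2 : ((ε : ℂ)) ^ 2 = 1 := by rcases hε with h | h <;> subst h <;> norm_num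
  have hstar : starRingEnd ℂ β = -(c : ℂ) - (ε : ℂ) * Complex.I * ((Real.sqrt (1 - c ^ 2) : ℝ) : ℂ) := by
    rw [hβ]; simp [Complex.conj_I, Complex.conj_ofReal]; ring
  have hsum : β + starRingEnd ℂ β = -2 * (c : ℂ) := by rw [hstar, hβ]; ring
  have hprod : β * starRingEnd ℂ β = 1 := by
    rw [hstar, hβ]
    have : ((ε : ℂ) * Complex.I * ((Real.sqrt (1 - c ^ 2) : ℝ) : ℂ)) ^ 2 = -(1 - (c:ℂ)^2) := by
      rw [mul_pow, mul_pow, hs, hε2, Complex.I_sq]; ring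
    linear_combination -this
  have hSS : S * S = (c : ℂ) • S + ((n : ℂ) - 1) • 1 := by rw [← pow_two]; exact hS2
  constructor
  · rw [Matrix.fromBlocks_conjTranspose]
    simp [Matrix.conjTranspose_add, Matrix.conjTranspose_smul, hherm, Matrix.conjTranspose_neg]
  · rw [pow_two, Matrix.fromBlocks_multiply, ← Matrix.fromBlocks_one,
      Matrix.fromBlocks_smul]
    rw [Matrix.fromBlocks_inj]
    refine ⟨?_, ?_, ?_, ?_⟩ <;>
      simp only [Matrix.mul_add, Matrix.add_mul, Matrix.smul_mul, Matrix.mul_smul,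
        Matrix.mul_one, Matrix.one_mul, Matrix.neg_mul, Matrix.mul_neg, neg_neg,
        smul_add, smul_smul, smul_neg, hSS, smul_zero] <;>
      match_scalars <;>
      first
        | ring1
        | linear_combination hsum
        | linear_combination hprod
end

section
/- If there exists a real or complex equiangular tight frame of size d × 2d, then for every nonnegative integer k there exists a complex equiangular tight frame of size 2^k·d × 2^{k+1}·d. -/
open Matrix

/-! ### Auxiliary lemmas -/

lemma etfMu_double_sq (m : ℕ) (hm : 0 < m) :
    etfMu m (2 * m) ^ 2 = ((2 * m : ℝ) - 1)⁻¹ := by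
  have hm1 : (1 : ℝ) ≤ m := by exact_mod_cast hm
  have hm0 : (m : ℝ) ≠ 0 := by positivity
  have h2m1 : (0 : ℝ) < 2 * (m : ℝ) - 1 := by nlinarith
  have h2m1' : (2 : ℝ) * (m : ℝ) - 1 ≠ 0 := ne_of_gt h2m1
  have harg : ((2 * m : ℕ) : ℝ) - (m : ℝ) = m := by push_cast; ring
  have harg2 : ((2 * m : ℕ) : ℝ) - 1 = 2 * (m : ℝ) - 1 := by push_cast; ring
  rw [etfMu, Real.sq_sqrt]
  · rw [harg, harg2, ← div_div, div_self hm0, one_div]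
  · rw [harg, harg2]
    apply div_nonneg (by positivity)
    nlinarith

lemma etfMu_double_pos (m : ℕ) (hm : 0 < m) : 0 < etfMu m (2 * m) := by
  have hm1 : (1 : ℝ) ≤ m := by exact_mod_cast hm
  apply Real.sqrt_pos.mpr
  apply div_pos <;> push_cast <;> nlinarith

/-- Factorization lemma: a Hermitian `G` with `G² = cG`, unit diagonal and
`|κ| = c·d` factors as `G = Fᴴ F` with `F Fᴴ = c I`, for some `d × κ` matrix `F`. -/
lemma exists_factor_s16 {κ : Type} [Fintype κ] [DecidableEq κ]
    (G : Matrix κ κ ℂ) (hG : G.IsHermitian) (c : ℝ) (hc : 0 < c)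
    (hG2 : G * G = (c : ℂ) • G) (hdiag : ∀ j, G j j = 1)
    (d : ℕ) (hcard : (Fintype.card κ : ℝ) = c * d) :
    ∃ F : Matrix (Fin d) κ ℂ, Fᴴ * F = G ∧ F * Fᴴ = (c : ℂ) • 1 := by
  classical
  set U : Matrix κ κ ℂ := (hG.eigenvectorUnitary : Matrix κ κ ℂ) with hUdef
  set ev : κ → ℝ := hG.eigenvalues with hevdef
  set D : Matrix κ κ ℂ := Matrix.diagonal (fun j => (ev j : ℂ)) with hDdef
  have hUU : star U * U = 1 := mem_unitaryGroup_iff'.mp hG.eigenvectorUnitary.2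
  have hUU' : U * star U = 1 := mem_unitaryGroup_iff.mp hG.eigenvectorUnitary.2
  have spec : G = U * D * star U := by
    have := hG.spectral_theorem
    rw [Unitary.conjStarAlgAut_apply] at this
    exact this
  have cancel : ∀ X : Matrix κ κ ℂ, star U * (U * X * star U) * U = X := by
    intro X
    simp only [← Matrix.mul_assoc]
    rw [hUU, Matrix.one_mul, Matrix.mul_assoc, hUU, Matrix.mul_one]
  -- D * D = c • D
  have hDD : D * D = (c : ℂ) • D := by
    have key : U * (D * D) * star U = U * ((c : ℂ) • D) * star U := by
      have h1 : (U * D * star U) * (U * D * star U) = (c : ℂ) • (U * D * star U) := by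
        rw [← spec]; exact hG2
      calc U * (D * D) * star U
          = (U * D * star U) * (U * D * star U) := by
            simp only [Matrix.mul_assoc]
            rw [← Matrix.mul_assoc (star U) U, hUU, Matrix.one_mul]
        _ = (c : ℂ) • (U * D * star U) := h1
        _ = U * ((c : ℂ) • D) * star U := by
            rw [Matrix.mul_smul, Matrix.smul_mul]
    have h2 := congrArg (fun Z => star U * Z * U) key
    rw [cancel, cancel] at h2
    exact h2
  have hevsq : ∀ j, ev j * ev j = c * ev j := by
    intro j
    have := congrFun (congrFun hDD j) j
    simp only [hDdef, Matrix.diagonal_mul_diagonal, Matrix.smul_apply,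
      Matrix.diagonal_apply_eq, smul_eq_mul] at this
    exact_mod_cast this
  have hev01 : ∀ j, ev j = 0 ∨ ev j = c := by
    intro j
    have hfac : ev j * (ev j - c) = 0 := by
      rw [mul_sub, hevsq j]; ring
    rcases mul_eq_zero.mp hfac with h | h
    · exact Or.inl h
    · exact Or.inr (by linarith)
  -- trace computation
  have htr : ∑ j, ev j = (Fintype.card κ : ℝ) := by
    have h1 : G.trace = (Fintype.card κ : ℂ) := by
      simp [Matrix.trace, Matrix.diag, hdiag]
    have h2 : G.trace = ∑ j, (ev j : ℂ) := by
      rw [spec, Matrix.trace_mul_cycle, hUU, Matrix.one_mul, Matrix.trace_diagonal]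
    have h3 : (∑ j, (ev j : ℂ)) = ((Fintype.card κ : ℕ) : ℂ) := by
      rw [← h2, h1]
    have h4 : ((∑ j, ev j : ℝ) : ℂ) = ((Fintype.card κ : ℕ) : ℂ) := by
      push_cast
      push_cast at h3
      exact h3
    exact_mod_cast h4
  have hPev : ∀ p : {j : κ // ev j ≠ 0}, ev p.val = c := fun p =>
    (hev01 p.val).resolve_left p.property
  have hsum : ∑ j, ev j = c * (Fintype.card {j : κ // ev j ≠ 0}) := by
    rw [← Finset.sum_filter_of_ne (s := Finset.univ) (p := fun j => ev j ≠ 0)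
      (fun x _ h => h)]
    rw [Finset.sum_subtype (p := fun j => ev j ≠ 0)
      (Finset.univ.filter (fun j => ev j ≠ 0)) (by simp) (fun j => ev j)]
    calc ∑ p : {j : κ // ev j ≠ 0}, ev p.val = ∑ _p : {j : κ // ev j ≠ 0}, c :=
          Finset.sum_congr rfl (fun p _ => hPev p)
      _ = c * (Fintype.card {j : κ // ev j ≠ 0}) := by
          rw [Finset.sum_const, Finset.card_univ, nsmul_eq_mul]; ring
  have hPd : Fintype.card {j : κ // ev j ≠ 0} = d := by
    have h1 : c * (Fintype.card {j : κ // ev j ≠ 0} : ℝ) = c * d := by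
      rw [← hsum, htr, hcard]
    have h2 : (Fintype.card {j : κ // ev j ≠ 0} : ℝ) = d :=
      mul_left_cancel₀ (ne_of_gt hc) h1
    exact_mod_cast h2
  set e : Fin d ≃ {j : κ // ev j ≠ 0} := (Fintype.equivFinOfCardEq hPd).symm with hedef
  set F : Matrix (Fin d) κ ℂ :=
    Matrix.of (fun p j => (Real.sqrt c : ℂ) * star (U j (e p).val)) with hFdef
  have hsqc : (Real.sqrt c : ℂ) * (Real.sqrt c : ℂ) = (c : ℂ) := by
    rw [← Complex.ofReal_mul, Real.mul_self_sqrt hc.le]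
  have hstar : ∀ (p : Fin d) (j : κ),
      star (F p j) = (Real.sqrt c : ℂ) * U j (e p).val := by
    intro p j
    show star ((Real.sqrt c : ℂ) * star (U j (e p).val)) = _
    rw [star_mul', star_star, Complex.star_def, Complex.conj_ofReal]
  refine ⟨F, ?_, ?_⟩
  · -- Fᴴ * F = G
    ext j k
    have lhs : (Fᴴ * F) j k
        = ∑ p : Fin d, (c : ℂ) * (U j (e p).val * star (U k (e p).val)) := by
      rw [Matrix.mul_apply]
      refine Finset.sum_congr rfl (fun p _ => ?_)
      rw [Matrix.conjTranspose_apply, hstar p j]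
      have hf : F p k = (Real.sqrt c : ℂ) * star (U k (e p).val) := rfl
      rw [hf, mul_mul_mul_comm, hsqc]
    have rhs : G j k = ∑ q : κ, (ev q : ℂ) * (U j q * star (U k q)) := by
      rw [spec, Matrix.mul_apply]
      refine Finset.sum_congr rfl (fun q _ => ?_)
      rw [Matrix.mul_diagonal, Matrix.star_apply]
      ring
    rw [lhs, rhs]
    rw [show (∑ p : Fin d, (c : ℂ) * (U j (e p).val * star (U k (e p).val)))
        = ∑ p : {j : κ // ev j ≠ 0}, (c : ℂ) * (U j p.val * star (U k p.val)) from
      Equiv.sum_comp e (fun p : {j : κ // ev j ≠ 0} =>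
        (c : ℂ) * (U j p.val * star (U k p.val)))]
    rw [show (∑ q : κ, (ev q : ℂ) * (U j q * star (U k q)))
        = ∑ q ∈ Finset.univ.filter (fun q => ev q ≠ 0),
            (ev q : ℂ) * (U j q * star (U k q)) from
      (Finset.sum_filter_of_ne (fun x _ h => by
        intro hx
        apply h
        rw [hx]
        simp)).symm]
    rw [Finset.sum_subtype (p := fun j => ev j ≠ 0)
      (Finset.univ.filter (fun j => ev j ≠ 0)) (by simp)
      (fun q => (ev q : ℂ) * (U j q * star (U k q)))]
    refine Finset.sum_congr rfl (fun p _ => ?_)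
    rw [hPev p]
  · -- F * Fᴴ = c • 1
    ext p q
    have lhs : (F * Fᴴ) p q
        = (c : ℂ) * ∑ j : κ, star (U j (e p).val) * U j (e q).val := by
      rw [Matrix.mul_apply, Finset.mul_sum]
      refine Finset.sum_congr rfl (fun j _ => ?_)
      rw [Matrix.conjTranspose_apply, hstar q j]
      have hf : F p j = (Real.sqrt c : ℂ) * star (U j (e p).val) := rfl
      rw [hf, mul_mul_mul_comm, hsqc]
    have key : ∑ j : κ, star (U j (e p).val) * U j (e q).val
        = (1 : Matrix κ κ ℂ) (e p).val (e q).val := by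
      rw [← hUU, Matrix.mul_apply]
      exact Finset.sum_congr rfl (fun j _ => by rw [Matrix.star_apply])
    rw [lhs, key]
    by_cases hpq : p = q
    · subst hpq
      simp
    · have hne : (e p).val ≠ (e q).val := by
        intro hcon
        exact hpq (e.injective (Subtype.ext hcon))
      rw [Matrix.one_apply_ne hne]
      simp [Matrix.one_apply_ne hpq]

/-- From a Hermitian conference-type signature matrix of order `2m` one can build
an `m × 2m` ETF. -/
lemma exists_etf_of_signature {κ : Type} [Fintype κ] [DecidableEq κ]
    (m : ℕ) (hm : 0 < m) (hcard : Fintype.card κ = 2 * m)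
    (S : Matrix κ κ ℂ) (hherm : S.IsHermitian) (hdiag : ∀ j, S j j = 0)
    (hoff : ∀ j k, j ≠ k → ‖S j k‖ = 1)
    (hS2 : S * S = (((2 * m : ℝ) - 1 : ℝ) : ℂ) • 1) :
    ∃ F : Matrix (Fin m) κ ℂ, IsETF F := by
  have hm' : (0 : ℝ) < m := by exact_mod_cast hm
  have hm1 : (1 : ℝ) ≤ m := by exact_mod_cast hm
  have h2m1 : (0 : ℝ) < (2 * m : ℝ) - 1 := by nlinarith
  set μ : ℝ := etfMu m (2 * m) with hμdef
  have hμpos : 0 < μ := etfMu_double_pos m hm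
  have hμ2 : μ * μ = ((2 * m : ℝ) - 1)⁻¹ := by
    rw [← sq]; exact etfMu_double_sq m hm
  set G : Matrix κ κ ℂ := 1 + (μ : ℂ) • S with hGdef
  have hGherm : G.IsHermitian := by
    show Gᴴ = G
    rw [hGdef, Matrix.conjTranspose_add, Matrix.conjTranspose_one,
      Matrix.conjTranspose_smul, hherm.eq, Complex.star_def, Complex.conj_ofReal]
  have hG2 : G * G = ((2 : ℝ) : ℂ) • G := by
    rw [hGdef]
    have expand : (1 + (μ : ℂ) • S) * (1 + (μ : ℂ) • S)
        = 1 + (μ : ℂ) • S + (μ : ℂ) • S + ((μ : ℂ) * (μ : ℂ)) • (S * S) := by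
      simp only [add_mul, mul_add, one_mul, mul_one, Matrix.smul_mul,
        Matrix.mul_smul, smul_smul]
      abel
    rw [expand, hS2, smul_smul]
    have hμμ : ((μ : ℂ) * (μ : ℂ)) * (((2 * m : ℝ) - 1 : ℝ) : ℂ) = 1 := by
      have hr : μ * μ * ((2 * m : ℝ) - 1) = 1 := by
        rw [hμ2, inv_mul_cancel₀ (ne_of_gt h2m1)]
      calc ((μ : ℂ) * (μ : ℂ)) * (((2 * m : ℝ) - 1 : ℝ) : ℂ)
          = ((μ * μ * ((2 * m : ℝ) - 1) : ℝ) : ℂ) := by push_cast; ring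
        _ = 1 := by rw [hr]; norm_num
    rw [hμμ]
    have h2 : (((2 : ℝ)) : ℂ) = (2 : ℂ) := by norm_num
    rw [h2, two_smul, one_smul]
    abel
  have hGdiag : ∀ j, G j j = 1 := by
    intro j
    simp [hGdef, Matrix.add_apply, Matrix.smul_apply, hdiag, Matrix.one_apply]
  obtain ⟨F, hFG, hFF⟩ := exists_factor_s16 G hGherm 2 (by norm_num) hG2 hGdiag m
    (by rw [hcard]; push_cast; ring)
  refine ⟨F, ?_, ?_, ?_⟩
  · intro j
    rw [hFG]
    exact hGdiag j
  · intro j k hjk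
    rw [hFG]
    have hentry : G j k = (μ : ℂ) * S j k := by
      simp [hGdef, Matrix.add_apply, Matrix.smul_apply, Matrix.one_apply_ne hjk]
    rw [hentry, norm_mul, hoff j k hjk, mul_one, Complex.norm_real, Real.norm_eq_abs,
      abs_of_pos hμpos, Fintype.card_fin, hcard]
  · rw [hFF]
    congr 1
    rw [Fintype.card_fin, hcard]
    push_cast
    rw [mul_div_assoc, div_self (by exact_mod_cast hm'.ne'), mul_one]

/-- The signature matrix of an `m × 2m` ETF is a Hermitian conference-type matrix. -/
lemma signature_of_etf {ι κ : Type} [Fintype ι] [Fintype κ] [DecidableEq ι] [DecidableEq κ]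
    (Φ : Matrix ι κ ℂ) (hΦ : IsETF Φ) (m : ℕ) (hm : 0 < m)
    (hι : Fintype.card ι = m) (hκ : Fintype.card κ = 2 * m) :
    ∃ S : Matrix κ κ ℂ, S.IsHermitian ∧ (∀ j, S j j = 0) ∧
      (∀ j k, j ≠ k → ‖S j k‖ = 1) ∧
      S * S = (((2 * m : ℝ) - 1 : ℝ) : ℂ) • 1 := by
  have hm' : (0 : ℝ) < m := by exact_mod_cast hm
  have hm1 : (1 : ℝ) ≤ m := by exact_mod_cast hm
  have h2m1 : (0 : ℝ) < (2 * m : ℝ) - 1 := by nlinarith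
  obtain ⟨hdiag, hoff, htight⟩ := hΦ
  set μ : ℝ := etfMu m (2 * m) with hμdef
  have hμpos : 0 < μ := etfMu_double_pos m hm
  have hμ2 : μ * μ = ((2 * m : ℝ) - 1)⁻¹ := by
    rw [← sq]; exact etfMu_double_sq m hm
  set A : Matrix κ κ ℂ := Φᴴ * Φ with hAdef
  have hAherm : A.IsHermitian := Matrix.isHermitian_conjTranspose_mul_self Φ
  set S : Matrix κ κ ℂ := ((μ : ℂ))⁻¹ • (A - 1) with hSdef
  have hA2 : A * A = (2 : ℂ) • A := by
    have h2 : ((Fintype.card κ : ℂ) / (Fintype.card ι : ℂ)) = 2 := by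
      rw [hι, hκ]
      push_cast
      rw [mul_div_assoc, div_self (by exact_mod_cast hm'.ne'), mul_one]
    calc A * A = Φᴴ * (Φ * Φᴴ) * Φ := by
          rw [hAdef]; simp only [Matrix.mul_assoc]
      _ = Φᴴ * (((2 : ℂ) • 1 : Matrix ι ι ℂ)) * Φ := by rw [htight, h2]
      _ = (2 : ℂ) • A := by
          rw [Matrix.mul_smul, Matrix.mul_one, Matrix.smul_mul, hAdef]
  refine ⟨S, ?_, ?_, ?_, ?_⟩
  · show Sᴴ = S
    rw [hSdef, Matrix.conjTranspose_smul, Matrix.conjTranspose_sub,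
      Matrix.conjTranspose_one, hAherm.eq]
    congr 1
    rw [Complex.star_def, ← Complex.ofReal_inv, Complex.conj_ofReal,
      Complex.ofReal_inv]
  · intro j
    rw [hSdef]
    simp only [Matrix.smul_apply, Matrix.sub_apply, Matrix.one_apply_eq]
    rw [hdiag j]
    simp
  · intro j k hjk
    rw [hSdef]
    simp only [Matrix.smul_apply, Matrix.sub_apply, Matrix.one_apply_ne hjk,
      sub_zero, smul_eq_mul]
    rw [norm_mul, norm_inv, Complex.norm_real, Real.norm_eq_abs, abs_of_pos hμpos]
    rw [hAdef, hoff j k hjk, hι, hκ]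
    rw [inv_mul_cancel₀ (ne_of_gt hμpos)]
  · rw [hSdef, Matrix.smul_mul, Matrix.mul_smul, smul_smul]
    have hsub : (A - 1) * (A - 1) = (1 : Matrix κ κ ℂ) := by
      simp only [sub_mul, mul_sub, mul_one, one_mul]
      rw [hA2, two_smul]
      abel
    rw [hsub]
    have hc : ((μ : ℂ))⁻¹ * ((μ : ℂ))⁻¹ = (((2 * m : ℝ) - 1 : ℝ) : ℂ) := by
      have hr : (μ : ℝ)⁻¹ * (μ : ℝ)⁻¹ = (2 * m : ℝ) - 1 := by
        rw [← mul_inv, hμ2, inv_inv]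
      calc ((μ : ℂ))⁻¹ * ((μ : ℂ))⁻¹ = ((μ⁻¹ * μ⁻¹ : ℝ) : ℂ) := by push_cast; ring
        _ = (((2 * m : ℝ) - 1 : ℝ) : ℂ) := by rw [hr]
    rw [hc]

/-- Conference doubling: `T = [[S, I + iS], [I − iS, −S]]`. -/
lemma double_signature {κ : Type} [Fintype κ] [DecidableEq κ] (n : ℕ)
    (S : Matrix κ κ ℂ) (hherm : S.IsHermitian) (hdiag : ∀ j, S j j = 0)
    (hoff : ∀ j k, j ≠ k → ‖S j k‖ = 1)
    (hS2 : S * S = (((n : ℝ) - 1 : ℝ) : ℂ) • 1) :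
    ∃ T : Matrix (κ ⊕ κ) (κ ⊕ κ) ℂ, T.IsHermitian ∧ (∀ j, T j j = 0) ∧
      (∀ j k, j ≠ k → ‖T j k‖ = 1) ∧
      T * T = (((2 * n : ℝ) - 1 : ℝ) : ℂ) • 1 := by
  set B : Matrix κ κ ℂ := 1 + Complex.I • S with hBdef
  set C : Matrix κ κ ℂ := 1 - Complex.I • S with hCdef
  set T : Matrix (κ ⊕ κ) (κ ⊕ κ) ℂ := Matrix.fromBlocks S B C (-S) with hTdef
  have hBH : Bᴴ = C := by
    rw [hBdef, hCdef, Matrix.conjTranspose_add, Matrix.conjTranspose_one,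
      Matrix.conjTranspose_smul, hherm.eq, Complex.star_def, Complex.conj_I]
    rw [neg_smul, sub_eq_add_neg]
  have hCH : Cᴴ = B := by
    rw [hCdef, hBdef, Matrix.conjTranspose_sub, Matrix.conjTranspose_one,
      Matrix.conjTranspose_smul, hherm.eq, Complex.star_def, Complex.conj_I]
    rw [neg_smul, sub_neg_eq_add]
  have hBC : B * C = (1 + (((n : ℝ) - 1 : ℝ) : ℂ) • 1 : Matrix κ κ ℂ) := by
    rw [hBdef, hCdef]
    simp only [mul_sub, add_mul, mul_one, one_mul, Matrix.smul_mul,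
      Matrix.mul_smul, smul_smul, hS2, ← mul_assoc, Complex.I_mul_I,
      neg_mul, neg_mul_neg, neg_smul, neg_neg]
    abel
  have hCB : C * B = (1 + (((n : ℝ) - 1 : ℝ) : ℂ) • 1 : Matrix κ κ ℂ) := by
    rw [hCdef, hBdef]
    simp only [mul_add, sub_mul, mul_one, one_mul, Matrix.smul_mul,
      Matrix.mul_smul, smul_smul, hS2, ← mul_assoc, Complex.I_mul_I,
      neg_mul, neg_mul_neg, neg_smul, neg_neg]
    abel
  refine ⟨T, ?_, ?_, ?_, ?_⟩
  · show Tᴴ = T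
    rw [hTdef, Matrix.fromBlocks_conjTranspose, hherm.eq, hBH, hCH,
      Matrix.conjTranspose_neg, hherm.eq]
  · intro j
    rcases j with a | a
    · simp [hTdef, hdiag a]
    · simp [hTdef, hdiag a]
  · intro j k hjk
    rcases j with a | a <;> rcases k with b | b
    · have hab : a ≠ b := fun h => hjk (by rw [h])
      simpa [hTdef] using hoff a b hab
    · by_cases hab : a = b
      · subst hab
        simp [hTdef, hBdef, Matrix.add_apply, Matrix.smul_apply, hdiag a,
          Matrix.one_apply_eq]
      · simp only [hTdef, Matrix.fromBlocks_apply₁₂, hBdef, Matrix.add_apply,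
          Matrix.smul_apply, Matrix.one_apply_ne hab, smul_eq_mul, zero_add]
        rw [norm_mul, Complex.norm_I, one_mul]
        exact hoff a b hab
    · by_cases hab : a = b
      · subst hab
        simp [hTdef, hCdef, Matrix.sub_apply, Matrix.smul_apply, hdiag a,
          Matrix.one_apply_eq]
      · simp only [hTdef, Matrix.fromBlocks_apply₂₁, hCdef, Matrix.sub_apply,
          Matrix.smul_apply, Matrix.one_apply_ne hab, smul_eq_mul, zero_sub]
        rw [norm_neg, norm_mul, Complex.norm_I, one_mul]
        exact hoff a b hab
    · have hab : a ≠ b := fun h => hjk (by rw [h])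
      simp only [hTdef, Matrix.fromBlocks_apply₂₂, Matrix.neg_apply]
      rw [norm_neg]
      exact hoff a b hab
  · rw [hTdef, Matrix.fromBlocks_multiply]
    have htl : S * S + B * C = (((2 * n : ℝ) - 1 : ℝ) : ℂ) • 1 := by
      rw [hS2, hBC]
      have hcoe : (((2 * n : ℝ) - 1 : ℝ) : ℂ)
          = (((n : ℝ) - 1 : ℝ) : ℂ) + (1 + (((n : ℝ) - 1 : ℝ) : ℂ)) := by
        push_cast; ring
      rw [hcoe, add_smul, add_smul, one_smul]
    have hbr : C * B + (-S) * (-S) = (((2 * n : ℝ) - 1 : ℝ) : ℂ) • 1 := by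
      rw [neg_mul_neg, hS2, hCB]
      have hcoe : (((2 * n : ℝ) - 1 : ℝ) : ℂ)
          = (1 + (((n : ℝ) - 1 : ℝ) : ℂ)) + (((n : ℝ) - 1 : ℝ) : ℂ) := by
        push_cast; ring
      rw [hcoe, add_smul, add_smul, one_smul]
    have hSB : S * B = B * S := by
      simp only [hBdef, mul_add, add_mul, one_mul, mul_one,
        Matrix.mul_smul, Matrix.smul_mul]
    have hSC : S * C = C * S := by
      simp only [hCdef, mul_sub, sub_mul, one_mul, mul_one,
        Matrix.mul_smul, Matrix.smul_mul]
    have htr2 : S * B + B * (-S) = 0 := by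
      rw [Matrix.mul_neg, ← hSB, add_neg_cancel]
    have hbl : C * S + (-S) * C = 0 := by
      rw [Matrix.neg_mul, hSC, add_neg_cancel]
    rw [htl, hbr, htr2, hbl]
    have hblock : (((2 * n : ℝ) - 1 : ℝ) : ℂ) • (1 : Matrix (κ ⊕ κ) (κ ⊕ κ) ℂ)
        = Matrix.fromBlocks ((((2 * n : ℝ) - 1 : ℝ) : ℂ) • 1) 0 0
          ((((2 * n : ℝ) - 1 : ℝ) : ℂ) • 1) := by
      rw [← Matrix.fromBlocks_one, Matrix.fromBlocks_smul, smul_zero]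
    rw [hblock]

/-- Reindexing preserves the ETF property. -/
lemma isETF_reindex {ι κ ι' κ' : Type} [Fintype ι] [Fintype κ] [Fintype ι'] [Fintype κ']
    [DecidableEq ι] [DecidableEq κ] [DecidableEq ι'] [DecidableEq κ']
    (e : ι' ≃ ι) (f : κ' ≃ κ) (F : Matrix ι κ ℂ) (hF : IsETF F) :
    IsETF (F.submatrix e f) := by
  obtain ⟨hdiag, hoff, htight⟩ := hF
  have hconj : (F.submatrix e f)ᴴ = Fᴴ.submatrix f e := Matrix.conjTranspose_submatrix F e f
  have hmul : (F.submatrix e f)ᴴ * F.submatrix e f = (Fᴴ * F).submatrix f f := by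
    rw [hconj]
    exact Matrix.submatrix_mul_equiv Fᴴ F f e f
  have hcardι : Fintype.card ι' = Fintype.card ι := Fintype.card_congr e
  have hcardκ : Fintype.card κ' = Fintype.card κ := Fintype.card_congr f
  refine ⟨?_, ?_, ?_⟩
  · intro j
    rw [hmul, Matrix.submatrix_apply]
    exact hdiag (f j)
  · intro j k hjk
    rw [hmul, Matrix.submatrix_apply, hcardι, hcardκ]
    exact hoff (f j) (f k) (fun h => hjk (f.injective h))
  · have hmul2 : F.submatrix e f * (F.submatrix e f)ᴴ = (F * Fᴴ).submatrix e e := by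
      rw [hconj]
      exact Matrix.submatrix_mul_equiv F Fᴴ e f e
    rw [hmul2, htight, hcardι, hcardκ]
    ext i j
    simp only [Matrix.submatrix_apply, Matrix.smul_apply]
    by_cases hij : i = j
    · subst hij; simp
    · rw [Matrix.one_apply_ne hij,
        Matrix.one_apply_ne (fun hc => hij (e.injective hc))]

/-- If there exists a real or complex ETF of size `d × 2d`, then for every `k` there
exists a complex ETF of size `2^k·d × 2^{k+1}·d`. -/
theorem etf_repeated_doubling (d : ℕ) (hd : 0 < d)
    (h : (∃ F : Matrix (Fin d) (Fin (2 * d)) ℝ, IsETF (F.map ((↑) : ℝ → ℂ))) ∨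
      (∃ F : Matrix (Fin d) (Fin (2 * d)) ℂ, IsETF F)) :
    ∀ k : ℕ, ∃ Φ : Matrix (Fin (2 ^ k * d)) (Fin (2 ^ (k + 1) * d)) ℂ, IsETF Φ := by
  have h0 : ∃ F : Matrix (Fin d) (Fin (2 * d)) ℂ, IsETF F := by
    rcases h with ⟨F, hF⟩ | hF
    · exact ⟨F.map ((↑) : ℝ → ℂ), hF⟩
    · exact hF
  intro k
  induction k with
  | zero =>
    obtain ⟨F, hF⟩ := h0
    exact ⟨F.submatrix (finCongr (by norm_num)) (finCongr (by norm_num)),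
      isETF_reindex _ _ F hF⟩
  | succ k ih =>
    obtain ⟨Φ, hΦ⟩ := ih
    have hm : 0 < 2 ^ k * d := by positivity
    have hcι : Fintype.card (Fin (2 ^ k * d)) = 2 ^ k * d := Fintype.card_fin _
    have hcκ : Fintype.card (Fin (2 ^ (k + 1) * d)) = 2 * (2 ^ k * d) := by
      rw [Fintype.card_fin]; ring
    obtain ⟨S, hSh, hSd, hSo, hS2⟩ := signature_of_etf Φ hΦ (2 ^ k * d) hm hcι hcκ
    obtain ⟨T, hTh, hTd, hTo, hT2⟩ := double_signature (n := 2 * (2 ^ k * d)) S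
      hSh hSd hSo
      (by rw [hS2, show ((2 * (2 ^ k * d) : ℕ) : ℝ) - 1
            = 2 * ((2 ^ k * d : ℕ) : ℝ) - 1 from by push_cast; ring])
    have hcardsum : Fintype.card (Fin (2 ^ (k + 1) * d) ⊕ Fin (2 ^ (k + 1) * d))
        = 2 * (2 * (2 ^ k * d)) := by
      rw [Fintype.card_sum, Fintype.card_fin]; ring
    obtain ⟨F, hF⟩ := exists_etf_of_signature (2 * (2 ^ k * d)) (by positivity)
      hcardsum T hTh hTd hTo hT2
    exact ⟨F.submatrix (finCongr (by ring))
      ((finCongr (by ring)).trans finSumFinEquiv.symm),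
      isETF_reindex _ _ F hF⟩
end
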